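/- arXiv:2603.20794 — 5 statements merged into one kernel-verified Lean document; each statement's English description precedes it below -/
import Mathlib

section
/- Let X, Y be Banach spaces, D ⊆ X open nonempty, F : [0,1] × cl(D) → Y continuous and uniformly continuous in t (uniformly over x ∈ D). Suppose F has partial Fréchet derivatives on [0,1) × D, that for each (t,x) there is a right inverse S(t,x) of F_x(t,x) such that a(t,x) = −S(t,x)F_t(t,x) is continuous, locally Lipschitz in x, and of at most linear growth on every closed subset P of D (‖a(t,x)‖ ≤ K_P(‖x‖+1)). If F(0, x₀) = 0 for some x₀ ∈ D, then either (1) there exists τ ∈ (0,1] and a sequence x_k ∈ ∂D with F(τ, x_k) → 0 in Y, or (2) there exists x₁ ∈ D with F(1, x₁) = 0. -/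
open Set Topology Filter

set_option maxHeartbeats 1000000

/-- Local existence of a solution to the ODE `x' = a t x` staying in `D`,
starting at time `t₀ < 1` at a point `z ∈ D`. -/
theorem zhm_local_exists {X : Type*} [NormedAddCommGroup X] [NormedSpace ℝ X] [CompleteSpace X]
    {a : ℝ → X → X} {D : Set X}
    (hacont : ContinuousOn (fun p : ℝ × X => a p.1 p.2) (Ico 0 1 ×ˢ D))
    {t₀ : ℝ} {z : X} (ht₀ : t₀ ∈ Ico (0:ℝ) 1) (hz : z ∈ D)
    {ε₂ : ℝ} (hε₂ : 0 < ε₂) (hballD : Metric.ball z ε₂ ⊆ D)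
    {ε₁ : ℝ} (hε₁ : 0 < ε₁) {c : NNReal}
    (hlip : ∀ t ∈ Ico (0:ℝ) 1, LipschitzOnWith c (a t) (Metric.ball z ε₁ ∩ D)) :
    ∃ T, t₀ < T ∧ T < 1 ∧ ∃ f : ℝ → X, f t₀ = z ∧
      ∀ s ∈ Icc t₀ T, f s ∈ D ∧ HasDerivWithinAt f (a s (f s)) (Icc t₀ T) s := by
  -- continuity bound near (t₀, z)
  have hmem : (t₀, z) ∈ Ico (0:ℝ) 1 ×ˢ D := ⟨ht₀, hz⟩
  obtain ⟨ε₃, hε₃, hbd⟩ := Metric.continuousWithinAt_iff.mp (hacont (t₀, z) hmem) 1 one_pos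
  set C : ℝ := ‖a t₀ z‖ + 1 with hC
  have hCpos : 0 < C := by positivity
  set R : ℝ := min ε₁ (min ε₂ ε₃) / 2 with hR
  have hRpos : 0 < R := by
    have := lt_min hε₂ hε₃
    have := lt_min hε₁ this
    positivity
  set d : ℝ := min (R / (2 * C)) (min (ε₃ / 2) ((1 - t₀) / 2)) with hd
  have h1t₀ : 0 < 1 - t₀ := by linarith [ht₀.2]
  have hdpos : 0 < d := by
    apply lt_min (by positivity) (lt_min (by positivity) (by positivity))
  set T : ℝ := t₀ + d with hT
  have hTlt : T < 1 := by
    have : d ≤ (1 - t₀) / 2 := (min_le_right _ _).trans (min_le_right _ _)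
    simp only [hT]; linarith
  have hsubI : Icc t₀ T ⊆ Ico (0:ℝ) 1 := fun s hs => ⟨ht₀.1.trans hs.1, lt_of_le_of_lt hs.2 hTlt⟩
  have hRε₁ : R < ε₁ := by
    have : R ≤ ε₁ / 2 := by
      rw [hR]; exact div_le_div_of_nonneg_right (min_le_left _ _) (by norm_num)
    linarith
  have hRε₂ : R < ε₂ := by
    have : R ≤ ε₂ / 2 := by
      rw [hR]
      apply div_le_div_of_nonneg_right ((min_le_right _ _).trans (min_le_left _ _)) (by norm_num)
    linarith
  have hRε₃ : R < ε₃ := by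
    have : R ≤ ε₃ / 2 := by
      rw [hR]
      apply div_le_div_of_nonneg_right ((min_le_right _ _).trans (min_le_right _ _)) (by norm_num)
    linarith
  have hballR : Metric.closedBall z R ⊆ Metric.ball z ε₁ ∩ D := by
    intro x hx
    have h1 : x ∈ Metric.ball z ε₁ := Metric.closedBall_subset_ball hRε₁ hx
    have h2 : x ∈ Metric.ball z ε₂ := Metric.closedBall_subset_ball hRε₂ hx
    exact ⟨h1, hballD h2⟩
  have hballD' : Metric.closedBall z R ⊆ D := fun x hx => (hballR hx).2
  -- norm bound on the box
  have hnorm : ∀ t ∈ Icc t₀ T, ∀ x ∈ Metric.closedBall z R, ‖a t x‖ ≤ C := by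
    intro t ht x hx
    have hxD : x ∈ D := hballD' hx
    have hdist : dist ((t, x) : ℝ × X) (t₀, z) < ε₃ := by
      rw [Prod.dist_eq]
      apply max_lt
      · rw [Real.dist_eq, abs_of_nonneg (by linarith [ht.1])]
        have : t - t₀ ≤ d := by linarith [ht.2]
        have : d ≤ ε₃ / 2 := (min_le_right _ _).trans (min_le_left _ _)
        linarith
      · exact lt_of_le_of_lt (Metric.mem_closedBall.mp hx) hRε₃
    have := hbd ⟨hsubI ht, hxD⟩ hdist
    have hd2 : dist (a t x) (a t₀ z) < 1 := this
    rw [dist_eq_norm] at hd2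
    calc ‖a t x‖ = ‖a t₀ z + (a t x - a t₀ z)‖ := by congr 1; abel
      _ ≤ ‖a t₀ z‖ + ‖a t x - a t₀ z‖ := norm_add_le _ _
      _ ≤ ‖a t₀ z‖ + 1 := by linarith
  have hpl : IsPicardLindelof a (tmin := t₀) (tmax := T) ⟨t₀, le_refl _, by simp [hT]; linarith⟩
      z (⟨R, hRpos.le⟩ : NNReal) 0 (⟨C, hCpos.le⟩ : NNReal) c :=
    { lipschitzOnWith := fun t ht => (hlip t (hsubI ht)).mono hballR
      continuousOn := fun x hx => by
        have hxD : x ∈ D := hballD' hx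
        have hcont1 : ContinuousOn (fun t : ℝ => ((t, x) : ℝ × X)) (Ico 0 1) :=
          (continuous_id.prodMk continuous_const).continuousOn
        have : ContinuousOn (fun t : ℝ => a t x) (Ico 0 1) :=
          hacont.comp hcont1 (fun s hs => ⟨hs, hxD⟩)
        exact this.mono hsubI
      norm_le := hnorm
      mul_max_le := by
        have hmax : max (T - t₀) (t₀ - t₀) = d := by
          simp [hT, max_eq_left hdpos.le]
        simp only [NNReal.coe_mk, NNReal.coe_zero, sub_zero]
        rw [hmax]
        have : d ≤ R / (2 * C) := min_le_left _ _
        calc C * d ≤ C * (R / (2 * C)) := by nlinarith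
          _ = R / 2 := by field_simp
          _ ≤ R := by linarith }
  obtain ⟨f, hf0, hfd⟩ := hpl.exists_eq_forall_mem_Icc_hasDerivWithinAt₀
  have hf0 : f t₀ = z := hf0
  have hfc : ContinuousOn f (Icc t₀ T) := fun s hs => (hfd s hs).continuousWithinAt
  have ht₀T : t₀ ≤ T := by simp only [hT]; linarith
  -- escape-time argument : `f` stays in the closed ball
  have hstay : ∀ s ∈ Icc t₀ T, f s ∈ Metric.closedBall z R := by
    set A : Set ℝ := {s ∈ Icc t₀ T | ∀ r ∈ Icc t₀ s, f r ∈ Metric.closedBall z R} with hA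
    have hAne : t₀ ∈ A := by
      refine ⟨⟨le_refl _, ht₀T⟩, fun r hr => ?_⟩
      have : r = t₀ := le_antisymm hr.2 hr.1
      simp [this, hf0, Metric.mem_closedBall, hRpos.le]
    have hAbdd : BddAbove A := ⟨T, fun s hs => hs.1.2⟩
    set m : ℝ := sSup A with hm
    have hmmem : m ∈ Icc t₀ T :=
      ⟨le_csSup hAbdd hAne, csSup_le ⟨t₀, hAne⟩ (fun s hs => hs.1.2)⟩
    have hlo : ∀ r ∈ Ico t₀ m, f r ∈ Metric.closedBall z R := by
      intro r hr
      obtain ⟨s, hsA, hrs⟩ := exists_lt_of_lt_csSup ⟨t₀, hAne⟩ hr.2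
      exact hsA.2 r ⟨hr.1, hrs.le⟩
    -- the solution up to `m` satisfies a strict bound `R/2`
    have hhalf : ∀ r ∈ Icc t₀ m, f r ∈ Metric.closedBall z (R / 2) := by
      have key : ∀ r ∈ Ico t₀ m, f r ∈ Metric.closedBall z (R / 2) := by
        intro r hr
        have hsub : Icc t₀ r ⊆ Icc t₀ T := Icc_subset_Icc_right (hr.2.le.trans hmmem.2)
        have hder : ∀ x ∈ Icc t₀ r, HasDerivWithinAt f (a x (f x)) (Icc t₀ r) x :=
          fun x hx => (hfd x (hsub hx)).mono hsub
        have hbound : ∀ x ∈ Icc t₀ r, ‖a x (f x)‖ ≤ C := by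
          intro x hx
          refine hnorm x (hsub hx) (f x) ?_
          exact hlo x ⟨hx.1, lt_of_le_of_lt hx.2 hr.2⟩
        have := (convex_Icc t₀ r).norm_image_sub_le_of_norm_hasDerivWithin_le
          hder hbound (left_mem_Icc.mpr hr.1) (right_mem_Icc.mpr hr.1)
        rw [hf0] at this
        have hrT : r - t₀ ≤ d := by
          have : r < T := lt_of_lt_of_le hr.2 hmmem.2
          simp only [hT] at this; linarith
        have hdR : C * d ≤ R / 2 := by
          have hd1 : d ≤ R / (2 * C) := min_le_left _ _
          calc C * d ≤ C * (R / (2 * C)) := by nlinarith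
            _ = R / 2 := by field_simp
        have hnr : ‖f r - z‖ ≤ C * d := by
          have h2 : ‖r - t₀‖ = r - t₀ := by
            rw [Real.norm_eq_abs, abs_of_nonneg]; linarith [hr.1]
          rw [h2] at this
          nlinarith [hr.1, norm_nonneg (f r - z)]
        rw [Metric.mem_closedBall, dist_eq_norm]
        exact hnr.trans hdR
      have hmhalf : f m ∈ Metric.closedBall z (R / 2) := by
        rcases eq_or_lt_of_le hmmem.1 with heq0 | hm0
        · rw [← heq0, hf0]
          simp only [Metric.mem_closedBall, dist_self]
          positivity
        · have hmc : m ∈ closure (Ico t₀ m) := by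
            rw [closure_Ico (ne_of_lt hm0)]
            exact ⟨hm0.le, le_refl _⟩
          have hcw : ContinuousWithinAt f (Ico t₀ m) m :=
            (hfc m hmmem).mono (fun x hx => ⟨hx.1, hx.2.le.trans hmmem.2⟩)
          have hmem2 := hcw.mem_closure_image hmc
          have hcl : closure (f '' Ico t₀ m) ⊆ Metric.closedBall z (R / 2) := by
            apply closure_minimal _ Metric.isClosed_closedBall
            rintro _ ⟨x, hx, rfl⟩
            exact key x hx
          exact hcl hmem2
      intro r hr
      rcases eq_or_lt_of_le hr.2 with heq | hlt
      · rw [heq]; exact hmhalf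
      · exact key r ⟨hr.1, hlt⟩
    -- now show `m = T`
    have hmT : m = T := by
      by_contra hne
      have hmltT : m < T := lt_of_le_of_ne hmmem.2 hne
      obtain ⟨δ, hδ, hδball⟩ := Metric.continuousWithinAt_iff.mp (hfc m hmmem) (R / 4)
        (by positivity)
      set s₁ : ℝ := min (m + δ / 2) T with hs₁
      have hs₁m : m < s₁ := lt_min (by linarith) hmltT
      have hs₁T : s₁ ≤ T := min_le_right _ _
      have hs₁A : s₁ ∈ A := by
        refine ⟨⟨hmmem.1.trans hs₁m.le, hs₁T⟩, fun x hx => ?_⟩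
        rcases le_or_gt x m with hxm | hxm
        · exact Metric.closedBall_subset_closedBall (by linarith) (hhalf x ⟨hx.1, hxm⟩)
        · have hxT : x ∈ Icc t₀ T := ⟨hx.1, hx.2.trans hs₁T⟩
          have hxδ : dist x m < δ := by
            rw [Real.dist_eq, abs_of_nonneg (by linarith)]
            have : x ≤ m + δ / 2 := hx.2.trans (min_le_left _ _)
            linarith
          have h1 := hδball hxT hxδ
          have h2 := hhalf m ⟨hmmem.1, le_refl _⟩
          rw [Metric.mem_closedBall]
          calc dist (f x) z ≤ dist (f x) (f m) + dist (f m) z := dist_triangle _ _ _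
            _ ≤ R / 4 + R / 2 := add_le_add h1.le h2
            _ ≤ R := by linarith
      have := le_csSup hAbdd hs₁A
      simp only [← hm] at this
      linarith
    intro s hs
    rcases eq_or_lt_of_le hs.2 with heq | hlt
    · rw [heq, ← hmT]
      exact Metric.closedBall_subset_closedBall (by linarith) (hhalf m ⟨hmmem.1, le_refl _⟩)
    · exact hlo s ⟨hs.1, hmT ▸ hlt⟩
  refine ⟨T, by simp [hT]; linarith, hTlt, f, hf0, fun s hs => ⟨hballD' (hstay s hs), hfd s hs⟩⟩

theorem zhm_unique {X : Type*} [NormedAddCommGroup X] [NormedSpace ℝ X]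
    {a : ℝ → X → X} {D : Set X}
    (halip : ∀ z ∈ D, ∃ ε > 0, ∃ c : NNReal, ∀ t ∈ Ico (0:ℝ) 1,
      LipschitzOnWith c (a t) (Metric.ball z ε ∩ D))
    {x₀ : X} {T : ℝ} (hT1 : T < 1)
    {f g : ℝ → X}
    (hf0 : f 0 = x₀) (hg0 : g 0 = x₀)
    (hf : ∀ s ∈ Icc 0 T, f s ∈ D ∧ HasDerivWithinAt f (a s (f s)) (Icc 0 T) s)
    (hg : ∀ s ∈ Icc 0 T, g s ∈ D ∧ HasDerivWithinAt g (a s (g s)) (Icc 0 T) s) :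
    EqOn f g (Icc 0 T) := by
  rcases lt_or_ge T 0 with hT0 | hT0
  · rw [Icc_eq_empty (by linarith)]; exact fun x hx => hx.elim
  have hfc : ContinuousOn f (Icc 0 T) := fun s hs => (hf s hs).2.continuousWithinAt
  have hgc : ContinuousOn g (Icc 0 T) := fun s hs => (hg s hs).2.continuousWithinAt
  set A : Set ℝ := {s ∈ Icc 0 T | EqOn f g (Icc 0 s)} with hA
  have hAne : (0:ℝ) ∈ A := by
    refine ⟨⟨le_refl _, hT0⟩, fun x hx => ?_⟩
    have hx0 : x = 0 := le_antisymm hx.2 hx.1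
    rw [hx0, hf0, hg0]
  have hAbdd : BddAbove A := ⟨T, fun s hs => hs.1.2⟩
  set m : ℝ := sSup A with hm
  have hmmem : m ∈ Icc 0 T := ⟨le_csSup hAbdd hAne, csSup_le ⟨0, hAne⟩ (fun s hs => hs.1.2)⟩
  have heqlo : EqOn f g (Ico 0 m) := by
    intro r hr
    obtain ⟨s, hsA, hrs⟩ := exists_lt_of_lt_csSup ⟨0, hAne⟩ hr.2
    exact hsA.2 ⟨hr.1, hrs.le⟩
  have heqIcc : EqOn f g (Icc 0 m) := by
    intro r hr
    rcases eq_or_lt_of_le hr.2 with heq | hlt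
    · rcases eq_or_lt_of_le hr.1 with h0 | h0
      · rw [← h0, hf0, hg0]
      · -- r = m > 0 : take limits
        rw [heq]
        have hmc : m ∈ closure (Ico 0 m) := by
          rw [closure_Ico (by rw [heq] at h0; exact ne_of_lt h0)]
          exact ⟨hmmem.1, le_refl _⟩
        have hne : (𝓝[Ico 0 m] m).NeBot := mem_closure_iff_nhdsWithin_neBot.mp hmc
        have hsub : Ico 0 m ⊆ Icc 0 T := fun x hx => ⟨hx.1, hx.2.le.trans hmmem.2⟩
        have htf : Tendsto f (𝓝[Ico 0 m] m) (𝓝 (f m)) :=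
          ((hfc m hmmem).mono hsub).tendsto
        have htg : Tendsto g (𝓝[Ico 0 m] m) (𝓝 (g m)) :=
          ((hgc m hmmem).mono hsub).tendsto
        have htf' : Tendsto f (𝓝[Ico 0 m] m) (𝓝 (g m)) :=
          htg.congr' (eventually_nhdsWithin_of_forall (fun x hx => (heqlo hx).symm))
        exact tendsto_nhds_unique htf htf'
    · exact heqlo ⟨hr.1, hlt⟩
  have hmT : m = T := by
    by_contra hne
    have hmltT : m < T := lt_of_le_of_ne hmmem.2 hne
    set z : X := f m with hz
    have hzD : z ∈ D := (hf m hmmem).1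
    obtain ⟨ε, hε, c, hlip⟩ := halip z hzD
    obtain ⟨δf, hδf, hδfball⟩ := Metric.continuousWithinAt_iff.mp (hfc m hmmem) ε hε
    obtain ⟨δg, hδg, hδgball⟩ := Metric.continuousWithinAt_iff.mp (hgc m hmmem) ε hε
    set δ : ℝ := min δf δg with hδdef
    have hδ : 0 < δ := lt_min hδf hδg
    set T' : ℝ := min (m + δ / 2) T with hT'
    have hmT' : m < T' := lt_min (by linarith) hmltT
    have hT'T : T' ≤ T := min_le_right _ _
    have hsub' : Icc m T' ⊆ Icc 0 T := fun x hx => ⟨hmmem.1.trans hx.1, hx.2.trans hT'T⟩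
    set st : ℝ → Set X := fun t => if t ∈ Ico (0:ℝ) 1 then Metric.ball z ε ∩ D else ∅ with hst
    have hv : ∀ t, LipschitzOnWith c (a t) (st t) := by
      intro t
      by_cases h : t ∈ Ico (0:ℝ) 1
      · rw [hst]; simp only [if_pos h]; exact hlip t h
      · rw [hst]; simp only [if_neg h]; exact lipschitzOnWith_empty _ _
    have hIm : ∀ t ∈ Ico m T', t ∈ Icc 0 T ∧ t ∈ Ico (0:ℝ) 1 ∧ dist t m < δ := by
      intro t ht
      have h1 : t ∈ Icc 0 T := ⟨hmmem.1.trans ht.1, ht.2.le.trans hT'T⟩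
      refine ⟨h1, ⟨h1.1, lt_of_le_of_lt h1.2 hT1⟩, ?_⟩
      rw [Real.dist_eq, abs_of_nonneg (by linarith [ht.1])]
      have : t < m + δ / 2 := lt_of_lt_of_le ht.2 (min_le_left _ _)
      linarith
    have hmIcoT : m ∈ Ico 0 T := ⟨hmmem.1, hmltT⟩
    have key : EqOn f g (Icc m T') := by
      refine ODE_solution_unique_of_mem_Icc_right (fun t _ => hv t)
        (hfc.mono hsub') (fun t ht => ?_) (fun t ht => ?_)
        (hgc.mono hsub') (fun t ht => ?_) (fun t ht => ?_) (heqIcc ⟨hmmem.1, le_refl _⟩)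
      · obtain ⟨h1, h2, h3⟩ := hIm t ht
        exact (hf t h1).2.mono_of_mem_nhdsWithin
          (Icc_mem_nhdsGE_of_mem ⟨h1.1, lt_of_lt_of_le (lt_of_lt_of_le ht.2 hT'T) le_rfl⟩)
      · obtain ⟨h1, h2, h3⟩ := hIm t ht
        rw [hst]; simp only [if_pos h2]
        exact ⟨Metric.mem_ball.mpr (hδfball h1 (lt_of_lt_of_le h3 (min_le_left _ _))),
          (hf t h1).1⟩
      · obtain ⟨h1, h2, h3⟩ := hIm t ht
        exact (hg t h1).2.mono_of_mem_nhdsWithin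
          (Icc_mem_nhdsGE_of_mem ⟨h1.1, lt_of_lt_of_le (lt_of_lt_of_le ht.2 hT'T) le_rfl⟩)
      · obtain ⟨h1, h2, h3⟩ := hIm t ht
        rw [hst]; simp only [if_pos h2]
        have hgm : g m = z := (heqIcc ⟨hmmem.1, le_refl _⟩).symm
        have := hδgball h1 (lt_of_lt_of_le h3 (min_le_right _ _))
        rw [hgm] at this
        exact ⟨Metric.mem_ball.mpr this, (hg t h1).1⟩
    have hT'A : T' ∈ A := by
      refine ⟨⟨hmmem.1.trans hmT'.le, hT'T⟩, fun x hx => ?_⟩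
      rcases le_or_gt x m with hxm | hxm
      · exact heqIcc ⟨hx.1, hxm⟩
      · exact key ⟨hxm.le, hx.2⟩
    have := le_csSup hAbdd hT'A
    rw [← hm] at this
    linarith
  rw [← hmT]
  exact heqIcc

theorem zeros_of_homotopic_mappings_general_domain
    {X Y : Type*} [NormedAddCommGroup X] [NormedSpace ℝ X] [CompleteSpace X]
    [NormedAddCommGroup Y] [NormedSpace ℝ Y] [CompleteSpace Y]
    (D : Set X) (hDopen : IsOpen D) (hDne : D.Nonempty)
    (F : ℝ → X → Y)
    (hFcont : ContinuousOn (fun p : ℝ × X => F p.1 p.2) (Icc 0 1 ×ˢ closure D))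
    (hFunif : ∀ ε > 0, ∃ δ > 0, ∀ t' ∈ Icc (0:ℝ) 1, ∀ t'' ∈ Icc (0:ℝ) 1,
      |t' - t''| < δ → ∀ x ∈ D, ‖F t' x - F t'' x‖ < ε)
    (Ft : ℝ → X → Y) (Fx : ℝ → X → (X →L[ℝ] Y))
    (hF : ∀ t ∈ Ico (0:ℝ) 1, ∀ x ∈ D,
      HasFDerivAt (fun p : ℝ × X => F p.1 p.2)
        (((ContinuousLinearMap.fst ℝ ℝ X).smulRight (Ft t x)) +
          (Fx t x).comp (ContinuousLinearMap.snd ℝ ℝ X)) (t, x))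
    (S : ℝ → X → (Y →L[ℝ] X))
    (hS : ∀ t ∈ Ico (0:ℝ) 1, ∀ x ∈ D,
      (Fx t x).comp (S t x) = ContinuousLinearMap.id ℝ Y)
    (hacont : ContinuousOn (fun p : ℝ × X => -(S p.1 p.2) (Ft p.1 p.2))
      (Ico 0 1 ×ˢ D))
    (halip : ∀ z ∈ D, ∃ ε > 0, ∃ c : NNReal, ∀ t ∈ Ico (0:ℝ) 1,
      LipschitzOnWith c (fun x => -(S t x) (Ft t x)) (Metric.ball z ε ∩ D))
    (hgrowth : ∀ P ⊆ D, IsClosed P → ∃ K : ℝ, ∀ t ∈ Ico (0:ℝ) 1, ∀ x ∈ P,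
      ‖-(S t x) (Ft t x)‖ ≤ K * (‖x‖ + 1))
    (x₀ : X) (hx₀ : x₀ ∈ D) (hinit : F 0 x₀ = 0) :
    (∃ τ ∈ Ioc (0:ℝ) 1, ∃ xk : ℕ → X, (∀ k, xk k ∈ closure D \ D) ∧
        Filter.Tendsto (fun k => F τ (xk k)) Filter.atTop (nhds 0)) ∨
      ∃ x₁ ∈ D, F 1 x₁ = 0 := by
  classical
  set a : ℝ → X → X := fun t x => -(S t x) (Ft t x) with ha
  have hacont' : ContinuousOn (fun p : ℝ × X => a p.1 p.2) (Ico 0 1 ×ˢ D) := hacont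
  have halip' : ∀ z ∈ D, ∃ ε > 0, ∃ c : NNReal, ∀ t ∈ Ico (0:ℝ) 1,
      LipschitzOnWith c (a t) (Metric.ball z ε ∩ D) := halip
  have hgrowth' : ∀ P ⊆ D, IsClosed P → ∃ K : ℝ, ∀ t ∈ Ico (0:ℝ) 1, ∀ x ∈ P,
      ‖a t x‖ ≤ K * (‖x‖ + 1) := hgrowth
  -- local existence from any point
  have hlocal : ∀ t₀ ∈ Ico (0:ℝ) 1, ∀ z ∈ D, ∃ T, t₀ < T ∧ T < 1 ∧ ∃ f : ℝ → X,
      f t₀ = z ∧ ∀ s ∈ Icc t₀ T, f s ∈ D ∧ HasDerivWithinAt f (a s (f s)) (Icc t₀ T) s := by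
    intro t₀ ht₀ z hz
    obtain ⟨ε₂, hε₂, hball⟩ := Metric.isOpen_iff.mp hDopen z hz
    obtain ⟨ε₁, hε₁, c, hlip⟩ := halip' z hz
    exact zhm_local_exists hacont' ht₀ hz hε₂ hball hε₁ hlip
  -- the set of "reachable" times
  set Sol : ℝ → (ℝ → X) → Prop := fun T f => f 0 = x₀ ∧ ∀ s ∈ Icc 0 T,
    f s ∈ D ∧ HasDerivWithinAt f (a s (f s)) (Icc 0 T) s with hSol
  have hmono : ∀ T f, Sol T f → ∀ T', 0 ≤ T' → T' ≤ T → Sol T' f := by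
    rintro T f ⟨hf0, hf⟩ T' hT'0 hT'T
    refine ⟨hf0, fun s hs => ?_⟩
    have hs' : s ∈ Icc 0 T := ⟨hs.1, hs.2.trans hT'T⟩
    exact ⟨(hf s hs').1, (hf s hs').2.mono (Icc_subset_Icc_right hT'T)⟩
  set 𝒯 : Set ℝ := {T | T ∈ Ico (0:ℝ) 1 ∧ ∃ f, Sol T f} with h𝒯
  obtain ⟨T₀, hT₀0, hT₀1, f₀, hf₀0, hf₀⟩ := hlocal 0 ⟨le_refl _, one_pos⟩ x₀ hx₀
  have hT₀𝒯 : T₀ ∈ 𝒯 := ⟨⟨hT₀0.le, hT₀1⟩, f₀, hf₀0, hf₀⟩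
  have h𝒯ne : 𝒯.Nonempty := ⟨T₀, hT₀𝒯⟩
  have h𝒯bdd : BddAbove 𝒯 := ⟨1, fun s hs => hs.1.2.le⟩
  set τ : ℝ := sSup 𝒯 with hτ
  have hτpos : 0 < τ := lt_of_lt_of_le hT₀0 (le_csSup h𝒯bdd hT₀𝒯)
  have hτle1 : τ ≤ 1 := csSup_le h𝒯ne (fun s hs => hs.1.2.le)
  have hIco𝒯 : Ico 0 τ ⊆ 𝒯 := by
    intro t ht
    obtain ⟨T, hT𝒯, htT⟩ := exists_lt_of_lt_csSup h𝒯ne ht.2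
    obtain ⟨f, hf⟩ := hT𝒯.2
    exact ⟨⟨ht.1, lt_of_lt_of_le htT hT𝒯.1.2.le⟩, f, hmono T f hf t ht.1 htT.le⟩
  -- a canonical glued solution
  set u : ℝ → X := fun t => if h : t ∈ 𝒯 then Classical.choose h.2 t else x₀ with hu
  have hu_eq : ∀ T, ∀ hT : T ∈ 𝒯, EqOn u (Classical.choose hT.2) (Icc 0 T) := by
    intro T hT s hs
    have hs1 : s < 1 := lt_of_le_of_lt hs.2 hT.1.2
    have hs𝒯 : s ∈ 𝒯 := ⟨⟨hs.1, hs1⟩,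
      Classical.choose hT.2, hmono T _ (Classical.choose_spec hT.2) s hs.1 hs.2⟩
    have husval : u s = Classical.choose hs𝒯.2 s := dif_pos hs𝒯
    rw [husval]
    have h1 := Classical.choose_spec hs𝒯.2
    have h2 := hmono T _ (Classical.choose_spec hT.2) s hs.1 hs.2
    exact zhm_unique halip' hs1 h1.1 h2.1 h1.2 h2.2 (right_mem_Icc.mpr hs.1)
  have hSolu : ∀ T, T ∈ 𝒯 → Sol T u := by
    intro T hT
    obtain ⟨hg0, hg⟩ := Classical.choose_spec hT.2
    have h0T : (0:ℝ) ∈ Icc 0 T := left_mem_Icc.mpr hT.1.1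
    refine ⟨by rw [hu_eq T hT h0T, hg0], fun s hs => ?_⟩
    have heq := hu_eq T hT
    refine ⟨by rw [heq hs]; exact (hg s hs).1, ?_⟩
    have h3 := (hg s hs).2.congr (fun x hx => heq hx) (heq hs)
    rw [heq hs]
    exact h3
  -- F vanishes along the solution
  have hFzero : ∀ T, T ∈ 𝒯 → ∀ s ∈ Icc 0 T, F s (u s) = 0 := by
    intro T hT
    obtain ⟨hu0, husol⟩ := hSolu T hT
    have hgder : ∀ s ∈ Icc 0 T, HasDerivWithinAt (fun r => F r (u r)) 0 (Icc 0 T) s := by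
      intro s hs
      have hs' : s ∈ Ico (0:ℝ) 1 := ⟨hs.1, lt_of_le_of_lt hs.2 hT.1.2⟩
      have husD : u s ∈ D := (husol s hs).1
      have hD := hF s hs' (u s) husD
      have hγ : HasDerivWithinAt (fun r : ℝ => ((r, u r) : ℝ × X)) ((1:ℝ), a s (u s))
          (Icc 0 T) s := (hasDerivWithinAt_id s _).prodMk (husol s hs).2
      have hcomp := hD.comp_hasDerivWithinAt s hγ
      have hval : (((ContinuousLinearMap.fst ℝ ℝ X).smulRight (Ft s (u s))) +
          (Fx s (u s)).comp (ContinuousLinearMap.snd ℝ ℝ X)) ((1:ℝ), a s (u s)) = 0 := by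
        simp only [ContinuousLinearMap.add_apply, ContinuousLinearMap.comp_apply,
          ContinuousLinearMap.smulRight_apply, ContinuousLinearMap.coe_fst',
          ContinuousLinearMap.coe_snd', one_smul]
        have : a s (u s) = -(S s (u s)) (Ft s (u s)) := rfl
        rw [this, map_neg, ← ContinuousLinearMap.comp_apply, hS s hs' (u s) husD]
        simp
      rw [hval] at hcomp
      exact hcomp
    have hgc : ContinuousOn (fun r => F r (u r)) (Icc 0 T) :=
      fun s hs => (hgder s hs).continuousWithinAt
    have hconst := constant_of_has_deriv_right_zero hgc (fun s hs =>
      (hgder s (Ico_subset_Icc_self hs)).mono_of_mem_nhdsWithin (Icc_mem_nhdsGE_of_mem hs))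
    intro s hs
    have := hconst s hs
    rwa [hu0, hinit] at this
  -- the trajectory
  set Γ : Set X := u '' (Ico 0 τ) with hΓ
  have hΓD : Γ ⊆ D := by
    rintro _ ⟨t, ht, rfl⟩
    exact ((hSolu t (hIco𝒯 ht)).2 t (right_mem_Icc.mpr ht.1)).1
  by_cases hcl : closure Γ ⊆ D
  · -- the trajectory stays well inside D; it converges to a point of D at time τ
    obtain ⟨K, hK⟩ := hgrowth' (closure Γ) hcl isClosed_closure
    set Kn : ℝ := max K 1 with hKn
    have hKn1 : (1:ℝ) ≤ Kn := le_max_right _ _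
    have hKnpos : 0 < Kn := lt_of_lt_of_le one_pos hKn1
    have hbnd : ∀ s ∈ Ico 0 τ, ‖a s (u s)‖ ≤ Kn * ‖u s‖ + Kn := by
      intro s hs
      have hs1 : s ∈ Ico (0:ℝ) 1 := ⟨hs.1, lt_of_lt_of_le hs.2 hτle1⟩
      have husΓ : u s ∈ closure Γ := subset_closure (mem_image_of_mem u hs)
      have := hK s hs1 (u s) husΓ
      have hKKn : K ≤ Kn := le_max_left _ _
      nlinarith [norm_nonneg (u s)]
    set M : ℝ := ‖x₀‖ * Real.exp Kn + (Real.exp Kn - 1) with hM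
    have hexp1 : (1:ℝ) ≤ Real.exp Kn := by
      rw [show (1:ℝ) = Real.exp 0 from (Real.exp_zero).symm]
      exact Real.exp_le_exp.mpr hKnpos.le
    have hM0 : 0 ≤ M := by nlinarith [norm_nonneg x₀]
    have hMb : ∀ s ∈ Ico 0 τ, ‖u s‖ ≤ M := by
      intro s hs
      have hs𝒯 : s ∈ 𝒯 := hIco𝒯 hs
      obtain ⟨hu0, husol⟩ := hSolu s hs𝒯
      have hgron := norm_le_gronwallBound_of_norm_deriv_right_le
        (f := u) (f' := fun x => a x (u x)) (δ := ‖x₀‖) (K := Kn) (ε := Kn) (a := 0) (b := s)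
        (fun x hx => (husol x hx).2.continuousWithinAt)
        (fun x hx => (husol x (Ico_subset_Icc_self hx)).2.mono_of_mem_nhdsWithin
          (Icc_mem_nhdsGE_of_mem hx))
        (by rw [hu0])
        (fun x hx => hbnd x ⟨hx.1, lt_of_lt_of_le hx.2 hs.2.le⟩)
      have := hgron s (right_mem_Icc.mpr hs.1)
      rw [gronwallBound_of_K_ne_0 (ne_of_gt hKnpos)] at this
      have hsle1 : s ≤ 1 := hs.2.le.trans hτle1
      have hexp : Real.exp (Kn * (s - 0)) ≤ Real.exp Kn := by
        apply Real.exp_le_exp.mpr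
        nlinarith [hs.1]
      calc ‖u s‖ ≤ ‖x₀‖ * Real.exp (Kn * (s - 0)) +
            Kn / Kn * (Real.exp (Kn * (s - 0)) - 1) := this
        _ = ‖x₀‖ * Real.exp (Kn * (s - 0)) + (Real.exp (Kn * (s - 0)) - 1) := by
            rw [div_self (ne_of_gt hKnpos), one_mul]
        _ ≤ M := by rw [hM]; nlinarith [norm_nonneg x₀]
    set CM : ℝ := Kn * (M + 1) with hCM
    have hCM0 : 0 ≤ CM := by positivity
    have hCMb : ∀ s ∈ Ico 0 τ, ‖a s (u s)‖ ≤ CM := by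
      intro s hs
      have h1 := hbnd s hs
      have h2 := hMb s hs
      rw [hCM]; nlinarith
    have hulip : ∀ s ∈ Ico 0 τ, ∀ r ∈ Ico 0 τ, dist (u s) (u r) ≤ CM * dist s r := by
      have key : ∀ s ∈ Ico 0 τ, ∀ r ∈ Ico 0 τ, r ≤ s → dist (u s) (u r) ≤ CM * dist s r := by
        intro s hs r hr hrs
        have hs𝒯 : s ∈ 𝒯 := hIco𝒯 hs
        obtain ⟨hu0, husol⟩ := hSolu s hs𝒯
        have := (convex_Icc 0 s).norm_image_sub_le_of_norm_hasDerivWithin_le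
          (fun x hx => (husol x hx).2)
          (fun x hx => hCMb x ⟨hx.1, lt_of_le_of_lt hx.2 hs.2⟩)
          (⟨hr.1, hrs⟩ : r ∈ Icc 0 s) (right_mem_Icc.mpr hs.1)
        rw [dist_eq_norm, dist_eq_norm]
        calc ‖u s - u r‖ ≤ CM * ‖s - r‖ := this
          _ = CM * dist s r := by rw [dist_eq_norm]
      intro s hs r hr
      rcases le_total r s with h | h
      · exact key s hs r hr h
      · rw [dist_comm (u s), dist_comm s]; exact key r hr s hs h
    -- limit of the trajectory at τ
    have hτclo : τ ∈ closure (Ico 0 τ) := by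
      rw [closure_Ico (ne_of_lt hτpos)]
      exact ⟨hτpos.le, le_refl _⟩
    haveI hneb : (𝓝[Ico 0 τ] τ).NeBot := mem_closure_iff_nhdsWithin_neBot.mp hτclo
    have hcauchy : Cauchy (Filter.map u (𝓝[Ico 0 τ] τ)) := by
      refine Metric.cauchy_iff.mpr ⟨Filter.map_neBot, fun ε hε => ?_⟩
      set η : ℝ := ε / (2 * (CM + 1)) with hη
      have hηpos : 0 < η := by positivity
      refine ⟨u '' (Ico 0 τ ∩ Ioi (τ - η)), Filter.image_mem_map
        (Filter.inter_mem self_mem_nhdsWithin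
          (mem_nhdsWithin_of_mem_nhds (Ioi_mem_nhds (by linarith)))), ?_⟩
      rintro _ ⟨x, hx, rfl⟩ _ ⟨y, hy, rfl⟩
      have hd : dist x y < η := by
        rw [Real.dist_eq, abs_lt]
        constructor <;> [skip; skip] <;>
          · have h1 := hx.1.2; have h2 := hy.1.2
            have h3 := hx.2; have h4 := hy.2
            simp only [mem_Ioi] at h3 h4
            linarith
      calc dist (u x) (u y) ≤ CM * dist x y := hulip x hx.1 y hy.1
        _ ≤ CM * η := by nlinarith [dist_nonneg (x := x) (y := y)]
        _ < ε := by
            have h2 : CM * η = CM * ε / (2 * (CM + 1)) := by rw [hη]; ring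
            rw [h2, div_lt_iff₀ (by positivity)]
            nlinarith
    obtain ⟨xs, hxs⟩ := CompleteSpace.complete hcauchy
    have htends : Tendsto u (𝓝[Ico 0 τ] τ) (𝓝 xs) := hxs
    have hxsP : xs ∈ closure Γ :=
      mem_closure_of_tendsto htends
        (eventually_nhdsWithin_of_forall (fun s hs => mem_image_of_mem u hs))
    have hxsD : xs ∈ D := hcl hxsP
    by_cases hτ1 : τ = 1
    · -- τ = 1 : we get a zero of F 1 in D
      right
      have hcw : ContinuousWithinAt (fun p : ℝ × X => F p.1 p.2)
          (Icc 0 1 ×ˢ closure D) (1, xs) := hFcont (1, xs) ⟨right_mem_Icc.mpr zero_le_one,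
            subset_closure hxsD⟩
      have hpair : Tendsto (fun s => ((s, u s) : ℝ × X)) (𝓝[Ico 0 τ] τ)
          (𝓝[Icc 0 1 ×ˢ closure D] (1, xs)) := by
        refine tendsto_nhdsWithin_iff.mpr ⟨?_, eventually_nhdsWithin_of_forall fun s hs => ?_⟩
        · rw [nhds_prod_eq]
          exact Tendsto.prodMk (hτ1 ▸ nhdsWithin_le_nhds) htends
        · refine ⟨⟨hs.1, hs.2.le.trans hτle1⟩, subset_closure (hΓD (mem_image_of_mem u hs))⟩
      have hFtends : Tendsto (fun s => F s (u s)) (𝓝[Ico 0 τ] τ) (𝓝 (F 1 xs)) :=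
        hcw.tendsto.comp hpair
      have hzero : Tendsto (fun s => F s (u s)) (𝓝[Ico 0 τ] τ) (𝓝 0) := by
        apply Tendsto.congr' _ tendsto_const_nhds
        filter_upwards [self_mem_nhdsWithin] with s hs
        exact (hFzero s (hIco𝒯 hs) s (right_mem_Icc.mpr hs.1)).symm
      exact ⟨xs, hxsD, tendsto_nhds_unique hFtends hzero⟩
    · -- τ < 1 : extend the solution, contradicting maximality of τ
      exfalso
      have hτlt1 : τ < 1 := lt_of_le_of_ne hτle1 hτ1
      obtain ⟨T₁, hτT₁, hT₁1, g, hgτ, hgsol⟩ := hlocal τ ⟨hτpos.le, hτlt1⟩ xs hxsD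
      set h : ℝ → X := fun s => if s < τ then u s else g s with hh
      have hhu : ∀ s, s < τ → h s = u s := fun s hs => if_pos hs
      have hhg : ∀ s, τ ≤ s → h s = g s := fun s hs => if_neg (not_lt.mpr hs)
      have hhτ : h τ = xs := by rw [hhg τ le_rfl, hgτ]
      have hfeq : 𝓝[Ico 0 τ] τ = 𝓝[Iio τ] τ := by
        rw [← Ici_inter_Iio]
        exact nhdsWithin_inter_of_mem (mem_nhdsWithin_of_mem_nhds (Ici_mem_nhds hτpos))
      have htends' : Tendsto u (𝓝[Iio τ] τ) (𝓝 xs) := hfeq ▸ htends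
      have hIcomem : Ico 0 τ ∈ 𝓝[Iio τ] τ := hfeq ▸ self_mem_nhdsWithin
      have hτT₁le : τ ≤ T₁ := hτT₁.le
      -- derivative of h on [0, τ)
      have hds : ∀ s ∈ Ico 0 τ, HasDerivWithinAt h (a s (h s)) (Icc 0 T₁) s := by
        intro s hs
        set T : ℝ := (s + τ) / 2 with hT
        have hsT : s < T := by simp only [hT]; linarith [hs.2]
        have hTτ : T < τ := by simp only [hT]; linarith [hs.2]
        have hT0 : (0:ℝ) ≤ T := by simp only [hT]; linarith [hs.1, hτpos]
        have hT𝒯 : T ∈ 𝒯 := hIco𝒯 ⟨hT0, hTτ⟩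
        have hd := ((hSolu T hT𝒯).2 s ⟨hs.1, hsT.le⟩).2
        have hTT₁ : T ≤ T₁ := by linarith
        have hmemT : Icc 0 T ∈ 𝓝[Icc 0 T₁] s := by
          have heqset : Icc 0 T₁ ∩ Iic T = Icc 0 T := by
            ext x; simp only [mem_inter_iff, mem_Icc, mem_Iic]
            constructor
            · rintro ⟨⟨h1, _⟩, h3⟩; exact ⟨h1, h3⟩
            · rintro ⟨h1, h2⟩; exact ⟨⟨h1, h2.trans hTT₁⟩, h2⟩
          rw [← heqset]
          exact Filter.inter_mem self_mem_nhdsWithin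
            (mem_nhdsWithin_of_mem_nhds (Iic_mem_nhds hsT))
        have hd2 := hd.mono_of_mem_nhdsWithin hmemT
        have heev : h =ᶠ[𝓝[Icc 0 T₁] s] u :=
          Filter.eventuallyEq_of_mem (mem_nhdsWithin_of_mem_nhds (Iio_mem_nhds hs.2))
            (fun x hx => hhu x hx)
        have hd3 := hd2.congr_of_eventuallyEq heev (hhu s hs.2)
        rw [hhu s hs.2]
        exact hd3
      -- membership in D
      have hdD : ∀ s ∈ Icc 0 T₁, h s ∈ D := by
        intro s hs
        by_cases hsτ : s < τ
        · rw [hhu s hsτ]; exact hΓD (mem_image_of_mem u ⟨hs.1, hsτ⟩)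
        · rw [hhg s (not_lt.mp hsτ)]; exact (hgsol s ⟨not_lt.mp hsτ, hs.2⟩).1
      -- left derivative at τ
      have hdiff : DifferentiableOn ℝ h (Ioo 0 τ) := by
        intro s hs
        exact ((hds s ⟨hs.1.le, hs.2⟩).mono
          (fun x hx => ⟨hx.1.le, hx.2.le.trans hτT₁le⟩)).differentiableWithinAt
      have hlim : ContinuousWithinAt h (Ioo 0 τ) τ := by
        have h1 : Tendsto u (𝓝[Ioo 0 τ] τ) (𝓝 xs) :=
          htends'.mono_left (nhdsWithin_mono τ Ioo_subset_Iio_self)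
        have h2 : Tendsto h (𝓝[Ioo 0 τ] τ) (𝓝 xs) :=
          h1.congr' (eventually_nhdsWithin_of_forall (fun x hx => (hhu x hx.2).symm))
        show Tendsto h (𝓝[Ioo 0 τ] τ) (𝓝 (h τ))
        rw [hhτ]; exact h2
      have hIoomem : Ioo 0 τ ∈ 𝓝[<] τ := Ioo_mem_nhdsLT_of_mem ⟨hτpos, le_rfl⟩
      have hderiv_eq : ∀ s ∈ Ioo 0 τ, deriv h s = a s (u s) := by
        intro s hs
        have hIccnhds : Icc 0 T₁ ∈ 𝓝 s := Icc_mem_nhds hs.1 (lt_of_lt_of_le hs.2 hτT₁le)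
        have hd := (hds s ⟨hs.1.le, hs.2⟩).hasDerivAt hIccnhds
        rw [hhu s hs.2] at hd
        exact hd.deriv
      have hatend : Tendsto (fun s => a s (u s)) (𝓝[<] τ) (𝓝 (a τ xs)) := by
        have hcw : ContinuousWithinAt (fun p : ℝ × X => a p.1 p.2) (Ico 0 1 ×ˢ D) (τ, xs) :=
          hacont' (τ, xs) ⟨⟨hτpos.le, hτlt1⟩, hxsD⟩
        have hpair : Tendsto (fun s => ((s, u s) : ℝ × X)) (𝓝[<] τ)
            (𝓝[Ico 0 1 ×ˢ D] (τ, xs)) := by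
          refine tendsto_nhdsWithin_iff.mpr ⟨?_, ?_⟩
          · rw [nhds_prod_eq]; exact Tendsto.prodMk nhdsWithin_le_nhds htends'
          · filter_upwards [hIcomem] with s hs
            exact ⟨⟨hs.1, lt_of_lt_of_le hs.2 hτle1⟩, hΓD (mem_image_of_mem u hs)⟩
        exact hcw.tendsto.comp hpair
      have hderivtend : Tendsto (deriv h) (𝓝[<] τ) (𝓝 (a τ xs)) := by
        apply hatend.congr'
        filter_upwards [hIoomem] with s hs
        exact (hderiv_eq s hs).symm
      have hleft : HasDerivWithinAt h (a τ xs) (Iic τ) τ :=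
        hasDerivWithinAt_Iic_of_tendsto_deriv hdiff hlim hIoomem hderivtend
      have hright : HasDerivWithinAt h (a τ xs) (Ici τ) τ := by
        have hgd := (hgsol τ (left_mem_Icc.mpr hτT₁le)).2
        have hgd2 : HasDerivWithinAt h (a τ (g τ)) (Icc τ T₁) τ :=
          hgd.congr (fun x hx => hhg x hx.1) (hhg τ le_rfl)
        rw [hgτ] at hgd2
        exact hgd2.mono_of_mem_nhdsWithin (Icc_mem_nhdsGE_of_mem ⟨le_rfl, hτT₁⟩)
      have hτboth : HasDerivAt h (a τ xs) τ := by
        have hu2 := hleft.union hright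
        rw [Iic_union_Ici] at hu2
        exact hasDerivWithinAt_univ.mp hu2
      have hSolT₁ : Sol T₁ h := by
        refine ⟨by rw [hhu 0 hτpos]; exact (hSolu T₀ hT₀𝒯).1, fun s hs => ?_⟩
        refine ⟨hdD s hs, ?_⟩
        rcases lt_trichotomy s τ with hlt | heq | hgt
        · exact hds s ⟨hs.1, hlt⟩
        · rw [heq, hhτ]
          exact hτboth.hasDerivWithinAt
        · have hgd := (hgsol s ⟨hgt.le, hs.2⟩).2
          have hgd2 := hgd.congr (fun x hx => hhg x hx.1) (hhg s hgt.le)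
          have hmemτ : Icc τ T₁ ∈ 𝓝[Icc 0 T₁] s := by
            have heqset : Icc 0 T₁ ∩ Ici τ = Icc τ T₁ := by
              ext x; simp only [mem_inter_iff, mem_Icc, mem_Ici]
              constructor
              · rintro ⟨⟨_, h2⟩, h3⟩; exact ⟨h3, h2⟩
              · rintro ⟨h1, h2⟩; exact ⟨⟨le_trans hτpos.le h1, h2⟩, h1⟩
            rw [← heqset]
            exact Filter.inter_mem self_mem_nhdsWithin
              (mem_nhdsWithin_of_mem_nhds (Ici_mem_nhds hgt))
          rw [hhg s hgt.le]
          exact hgd2.mono_of_mem_nhdsWithin hmemτ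
      have hT₁𝒯 : T₁ ∈ 𝒯 := ⟨⟨le_trans hτpos.le hτT₁le, hT₁1⟩, h, hSolT₁⟩
      have := le_csSup h𝒯bdd hT₁𝒯
      rw [← hτ] at this
      linarith
  · -- the trajectory approaches the boundary
    left
    obtain ⟨y, hyΓ, hyD⟩ := not_subset.mp hcl
    have hyclD : y ∈ closure D := closure_mono hΓD hyΓ
    obtain ⟨p, hpΓ, hpy⟩ := mem_closure_iff_seq_limit.mp hyΓ
    choose t ht hup using fun n => hpΓ n
    have htmem : ∀ n, t n ∈ Icc 0 τ := fun n => ⟨(ht n).1, (ht n).2.le⟩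
    obtain ⟨σ, hσmem, φ, hφmono, hφtend⟩ := isCompact_Icc.tendsto_subseq htmem
    have hpy' : Tendsto (fun n => p (φ n)) atTop (𝓝 y) := hpy.comp hφmono.tendsto_atTop
    have hup' : ∀ n, u (t (φ n)) = p (φ n) := fun n => hup (φ n)
    have hutend : Tendsto (fun n => u (t (φ n))) atTop (𝓝 y) := by
      simpa only [hup'] using hpy'
    have hστ : σ = τ := by
      by_contra hne
      have hσlt : σ < τ := lt_of_le_of_ne hσmem.2 hne
      set T : ℝ := (σ + τ) / 2 with hT
      have hσT : σ < T := by simp only [hT]; linarith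
      have hTτ : T < τ := by simp only [hT]; linarith
      have hT𝒯 : T ∈ 𝒯 := hIco𝒯 ⟨le_trans hσmem.1 hσT.le, hTτ⟩
      have hσIcc : σ ∈ Icc 0 T := ⟨hσmem.1, hσT.le⟩
      have hucont : ContinuousWithinAt u (Icc 0 T) σ :=
        ((hSolu T hT𝒯).2 σ hσIcc).2.continuousWithinAt
      have hmem2 : ∀ᶠ n in atTop, t (φ n) ∈ Icc 0 T := by
        filter_upwards [hφtend.eventually (eventually_lt_nhds hσT)] with n hn
        exact ⟨(htmem (φ n)).1, hn.le⟩
      have hutend2 : Tendsto (fun n => u (t (φ n))) atTop (𝓝 (u σ)) :=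
        (hucont.tendsto.comp (tendsto_nhdsWithin_iff.mpr ⟨hφtend, hmem2⟩))
      have : y = u σ := tendsto_nhds_unique hutend hutend2
      have : u σ ∈ D := ((hSolu T hT𝒯).2 σ hσIcc).1
      exact hyD (by rwa [← ‹y = u σ›] at this)
    have hFτy : F τ y = 0 := by
      have hτIcc : τ ∈ Icc (0:ℝ) 1 := ⟨hτpos.le, hτle1⟩
      have hcw : ContinuousWithinAt (fun p : ℝ × X => F p.1 p.2) (Icc 0 1 ×ˢ closure D) (τ, y) :=
        hFcont (τ, y) ⟨hτIcc, hyclD⟩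
      have hseqmem : ∀ n, ((t (φ n), u (t (φ n))) : ℝ × X) ∈ Icc 0 1 ×ˢ closure D := by
        intro n
        refine ⟨⟨(htmem (φ n)).1, (htmem (φ n)).2.trans hτle1⟩, subset_closure ?_⟩
        exact ((hSolu (t (φ n)) (hIco𝒯 (ht (φ n)))).2 (t (φ n))
          (right_mem_Icc.mpr (ht (φ n)).1)).1
      have hpair : Tendsto (fun n => ((t (φ n), u (t (φ n))) : ℝ × X)) atTop
          (𝓝[Icc 0 1 ×ˢ closure D] (τ, y)) := by
        refine tendsto_nhdsWithin_iff.mpr ⟨?_, Eventually.of_forall hseqmem⟩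
        rw [Prod.tendsto_iff]  -- maybe nhds_prod_eq
        exact ⟨by simpa [hστ, Function.comp_def] using hφtend, hutend⟩
      have hFtend : Tendsto (fun n => F (t (φ n)) (u (t (φ n)))) atTop (𝓝 (F τ y)) :=
        hcw.tendsto.comp hpair
      have hFeq : ∀ n, F (t (φ n)) (u (t (φ n))) = 0 := fun n =>
        hFzero (t (φ n)) (hIco𝒯 (ht (φ n))) (t (φ n)) (right_mem_Icc.mpr (ht (φ n)).1)
      have : Tendsto (fun _ : ℕ => (0:Y)) atTop (𝓝 (F τ y)) := by
        simpa only [hFeq] using hFtend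
      exact tendsto_nhds_unique hFtend (by simpa only [hFeq] using (tendsto_const_nhds : Tendsto (fun _ : ℕ => (0:Y)) atTop (𝓝 0)))
    refine ⟨τ, ⟨hτpos, hτle1⟩, fun _ => y, fun _ => ⟨hyclD, hyD⟩, ?_⟩
    simpa [hFτy] using (tendsto_const_nhds : Tendsto (fun _ : ℕ => (0:Y)) atTop (𝓝 0))
end

section
/- Let X, Y be Banach spaces, D ⊆ X open nonempty and unbounded, F : [0,1] × cl(D) → Y continuous and uniformly continuous in t uniformly over x. Assume F has partial Fréchet derivatives on [0,1) × D with right inverse S(t,x) of F_x(t,x) such that a(t,x) = −S(t,x)F_t(t,x) is continuous, locally Lipschitz in x, and bounded on I × P for every closed bounded P ⊆ D. Assume F is coercive: ‖x_n‖ → ∞ with x_n ∈ D implies ‖F(t,x_n)‖ → ∞ for each t ∈ [0,1]. If F(0,x₀) = 0 for some x₀ ∈ D, then either there exist τ ∈ (0,1] and x_k ∈ ∂D with F(τ,x_k) → 0, or there exists x₁ ∈ D with F(1,x₁) = 0. -/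
open Set

structure OldPicardLindelof {E : Type*} [NormedAddCommGroup E] (v : ℝ → E → E) (tMin t₀ tMax : ℝ)
    (x₀ : E) (L : NNReal) (R C : ℝ) : Prop where
  ht₀ : t₀ ∈ Icc tMin tMax
  hR : 0 ≤ R
  lipschitz : ∀ t ∈ Icc tMin tMax, LipschitzOnWith L (v t) (Metric.closedBall x₀ R)
  cont : ∀ x ∈ Metric.closedBall x₀ R, ContinuousOn (fun t : ℝ => v t x) (Icc tMin tMax)
  norm_le : ∀ t ∈ Icc tMin tMax, ∀ x ∈ Metric.closedBall x₀ R, ‖v t x‖ ≤ C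
  C_mul_le_R : (C : ℝ) * max (tMax - t₀) (t₀ - tMin) ≤ R

theorem pl_exists_solution_mem {E : Type*} [NormedAddCommGroup E] [NormedSpace ℝ E]
    [CompleteSpace E] {v : ℝ → E → E} {tMin t₀ tMax : ℝ} (x₀ : E) {C R : ℝ} {L : NNReal}
    (hpl : OldPicardLindelof v tMin t₀ tMax x₀ L R C) :
    ∃ f : ℝ → E, f t₀ = x₀ ∧ ∀ t ∈ Icc tMin tMax,
      f t ∈ Metric.closedBall x₀ R ∧ HasDerivWithinAt f (v t (f t)) (Icc tMin tMax) t := by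
  have hC : 0 ≤ C :=
    (norm_nonneg _).trans (hpl.norm_le t₀ hpl.ht₀ x₀ (Metric.mem_closedBall_self hpl.hR))
  lift C to NNReal using hC
  lift R to NNReal using hpl.hR
  have hf : IsPicardLindelof v (⟨t₀, hpl.ht₀⟩ : Icc tMin tMax) x₀ R 0 C L :=
    { lipschitzOnWith := hpl.lipschitz
      continuousOn := hpl.cont
      norm_le := hpl.norm_le
      mul_max_le := by simpa using hpl.C_mul_le_R }
  obtain ⟨α, hα⟩ := ODE.FunSpace.exists_isFixedPt_next hf (Metric.mem_closedBall_self le_rfl)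
  refine ⟨α.compProj, ?_, fun t ht => ⟨α.compProj_mem_closedBall hf.mul_max_le, ?_⟩⟩
  · show α.compProj ((⟨t₀, hpl.ht₀⟩ : Icc tMin tMax) : ℝ) = x₀
    rw [ODE.FunSpace.compProj_val, ← hα, ODE.FunSpace.next_apply₀]
  · apply ODE.hasDerivWithinAt_picard_Icc hpl.ht₀ hf.continuousOn_uncurry
      α.continuous_compProj.continuousOn
      (fun _ ht' ↦ α.compProj_mem_closedBall hf.mul_max_le) x₀ ht |>.congr_of_mem _ ht
    intro t' ht'
    nth_rw 1 [← hα]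
    rw [ODE.FunSpace.compProj_of_mem ht', ODE.FunSpace.next_apply]

theorem zeros_of_homotopic_mappings_coercive_unbounded
    {X Y : Type*} [NormedAddCommGroup X] [NormedSpace ℝ X] [CompleteSpace X]
    [NormedAddCommGroup Y] [NormedSpace ℝ Y] [CompleteSpace Y]
    (D : Set X) (hDopen : IsOpen D) (hDne : D.Nonempty)
    (F : ℝ → X → Y)
    (hFcont : ContinuousOn (fun p : ℝ × X => F p.1 p.2) (Icc 0 1 ×ˢ closure D))
    (hFunif : ∀ ε > 0, ∃ δ > 0, ∀ t' ∈ Icc (0:ℝ) 1, ∀ t'' ∈ Icc (0:ℝ) 1,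
      |t' - t''| < δ → ∀ x ∈ D, ‖F t' x - F t'' x‖ < ε)
    (Ft : ℝ → X → Y) (Fx : ℝ → X → (X →L[ℝ] Y))
    (hF : ∀ t ∈ Ico (0:ℝ) 1, ∀ x ∈ D,
      HasFDerivAt (fun p : ℝ × X => F p.1 p.2)
        (((ContinuousLinearMap.fst ℝ ℝ X).smulRight (Ft t x)) +
          (Fx t x).comp (ContinuousLinearMap.snd ℝ ℝ X)) (t, x))
    (S : ℝ → X → (Y →L[ℝ] X))
    (hS : ∀ t ∈ Ico (0:ℝ) 1, ∀ x ∈ D,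
      (Fx t x).comp (S t x) = ContinuousLinearMap.id ℝ Y)
    (hacont : ContinuousOn (fun p : ℝ × X => -(S p.1 p.2) (Ft p.1 p.2))
      (Ico 0 1 ×ˢ D))
    (halip : ∀ z ∈ D, ∃ ε > 0, ∃ c : NNReal, ∀ t ∈ Ico (0:ℝ) 1,
      LipschitzOnWith c (fun x => -(S t x) (Ft t x)) (Metric.ball z ε ∩ D))
    (habdd : ∀ P ⊆ D, IsClosed P → Bornology.IsBounded P →
      ∃ M : ℝ, ∀ t ∈ Ico (0:ℝ) 1, ∀ x ∈ P, ‖-(S t x) (Ft t x)‖ ≤ M)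
    (hcoercive : ∀ t ∈ Icc (0:ℝ) 1, ∀ xn : ℕ → X, (∀ n, xn n ∈ D) →
      Filter.Tendsto (fun n => ‖xn n‖) Filter.atTop Filter.atTop →
      Filter.Tendsto (fun n => ‖F t (xn n)‖) Filter.atTop Filter.atTop)
    (x₀ : X) (hx₀ : x₀ ∈ D) (hinit : F 0 x₀ = 0) :
    (∃ τ ∈ Ioc (0:ℝ) 1, ∃ xk : ℕ → X, (∀ k, xk k ∈ closure D \ D) ∧
        Filter.Tendsto (fun k => F τ (xk k)) Filter.atTop (nhds 0)) ∨
      ∃ x₁ ∈ D, F 1 x₁ = 0 := by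
  classical
  set a : ℝ → X → X := fun t x => -(S t x) (Ft t x) with ha_def
  -- local existence of solutions of x' = a t x
  have locex : ∀ t₀ ∈ Ico (0:ℝ) 1, ∀ z ∈ D, ∃ T, t₀ < T ∧ T < 1 ∧
      ∃ g : ℝ → X, g t₀ = z ∧ ∀ t ∈ Icc t₀ T, g t ∈ D ∧
        HasDerivWithinAt g (a t (g t)) (Icc t₀ T) t := by
    intro t₀ ht₀ z hz
    obtain ⟨ε, hεpos, c, hlip⟩ := halip z hz
    obtain ⟨r0, hr0pos, hball⟩ := Metric.isOpen_iff.mp hDopen z hz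
    set r := min (r0 / 2) (ε / 2) with hr
    have hrpos : 0 < r := lt_min (by linarith) (by linarith)
    have hrD : Metric.closedBall z r ⊆ D :=
      (Metric.closedBall_subset_ball (lt_of_le_of_lt (min_le_left _ _) (by linarith))).trans hball
    have hrball : Metric.closedBall z r ⊆ Metric.ball z ε ∩ D := fun x hx =>
      ⟨Metric.closedBall_subset_ball (lt_of_le_of_lt (min_le_right _ _) (by linarith)) hx, hrD hx⟩
    obtain ⟨M0, hM0⟩ := habdd (Metric.closedBall z r) hrD Metric.isClosed_closedBall
      Metric.isBounded_closedBall
    set M := max M0 1 with hMdef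
    have hM1 : (1:ℝ) ≤ M := le_max_right _ _
    set T := min (t₀ + r / M) ((t₀ + 1) / 2) with hT
    have hT1 : t₀ < T := lt_min (by have : 0 < r / M := div_pos hrpos (by linarith); linarith) (by linarith [ht₀.2])
    have hT2 : T < 1 := lt_of_le_of_lt (min_le_right _ _) (by linarith [ht₀.2])
    have hsub : Icc t₀ T ⊆ Ico (0:ℝ) 1 := fun t ht => ⟨ht₀.1.trans ht.1, lt_of_le_of_lt ht.2 hT2⟩
    have hpl : OldPicardLindelof a t₀ t₀ T z c r M :=
      { ht₀ := ⟨le_refl _, hT1.le⟩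
        hR := hrpos.le
        lipschitz := fun t ht => (hlip t (hsub ht)).mono hrball
        cont := fun x hx =>
          ((hacont.comp (Continuous.continuousOn (continuous_id.prodMk continuous_const))
            (fun t ht => ⟨ht, hrD hx⟩)).mono hsub)
        norm_le := fun t ht x hx => le_trans (hM0 t (hsub ht) x hx) (le_max_left _ _)
        C_mul_le_R := by
          have h2 : T - t₀ ≤ r / M := by
            have := min_le_left (t₀ + r / M) ((t₀ + 1) / 2)
            linarith
          have : M * max (T - t₀) (t₀ - t₀) = M * (T - t₀) := by
            rw [sub_self, max_eq_left (by linarith [hT1])]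
          rw [this]
          calc M * (T - t₀) ≤ M * (r / M) := by
                exact mul_le_mul_of_nonneg_left h2 (by linarith)
            _ = r := by field_simp }
    obtain ⟨g, hg0, hg⟩ := pl_exists_solution_mem z hpl
    exact ⟨T, hT1, hT2, g, hg0, fun t ht => ⟨hrD (hg t ht).1, (hg t ht).2⟩⟩
  -- the poset of partial solutions
  let Sol : ℝ → (ℝ → X) → Prop := fun b f => b ∈ Icc (0:ℝ) 1 ∧ f 0 = x₀ ∧
    ContinuousOn f (Ico 0 b) ∧ ∀ t ∈ Ico (0:ℝ) b, f t ∈ D ∧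
      HasDerivWithinAt f (a t (f t)) (Ici t) t
  have trivsol : Sol 0 (fun _ => x₀) := by
    refine ⟨⟨le_refl _, zero_le_one⟩, rfl, ?_, ?_⟩ <;> simp [Ico_self]
  let α := {p : ℝ × (ℝ → X) // Sol p.1 p.2}
  let r : α → α → Prop := fun p q => p.1.1 ≤ q.1.1 ∧ EqOn p.1.2 q.1.2 (Ico 0 p.1.1)
  have hrtrans : ∀ {p q s : α}, r p q → r q s → r p s := by
    rintro p q s ⟨h1, h2⟩ ⟨h3, h4⟩
    exact ⟨h1.trans h3, fun t ht => (h2 ht).trans (h4 ⟨ht.1, lt_of_lt_of_le ht.2 h1⟩)⟩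
  have hchains : ∀ c : Set α, IsChain r c → ∃ ub, ∀ p ∈ c, r p ub := by
    intro c hc
    rcases c.eq_empty_or_nonempty with rfl | ⟨p₀, hp₀⟩
    · exact ⟨⟨(0, fun _ => x₀), trivsol⟩, fun p hp => absurd hp (notMem_empty p)⟩
    set B := (fun p : α => p.1.1) '' c with hB
    have hBne : B.Nonempty := ⟨p₀.1.1, ⟨p₀, hp₀, rfl⟩⟩
    have hBbdd : BddAbove B := by
      refine ⟨1, ?_⟩
      rintro x ⟨p, hp, rfl⟩
      exact p.2.1.2
    set b : ℝ := sSup B with hb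
    have hp₀b : p₀.1.1 ≤ b := le_csSup hBbdd ⟨p₀, hp₀, rfl⟩
    have hb0 : 0 ≤ b := p₀.2.1.1.trans hp₀b
    have hb1 : b ≤ 1 := csSup_le hBne (by rintro x ⟨p, hp, rfl⟩; exact p.2.1.2)
    have hcoh : ∀ p ∈ c, ∀ q ∈ c, ∀ t, 0 ≤ t → t < p.1.1 → t < q.1.1 →
        p.1.2 t = q.1.2 t := by
      intro p hp q hq t ht htp htq
      rcases eq_or_ne p q with rfl | hne
      · rfl
      rcases hc hp hq hne with h | h
      · exact h.2 ⟨ht, htp⟩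
      · exact (h.2 ⟨ht, htq⟩).symm
    set g : ℝ → X := fun t =>
      if h : ∃ p : α, p ∈ c ∧ t < p.1.1 then h.choose.1.2 t else x₀ with hg
    have hgp : ∀ p ∈ c, ∀ t, 0 ≤ t → t < p.1.1 → g t = p.1.2 t := by
      intro p hp t ht htp
      have hex : ∃ q : α, q ∈ c ∧ t < q.1.1 := ⟨p, hp, htp⟩
      simp only [hg, dif_pos hex]
      exact hcoh hex.choose hex.choose_spec.1 p hp t ht hex.choose_spec.2 htp
    have hmem : ∀ t ∈ Ico (0:ℝ) b, ∃ p : α, p ∈ c ∧ t < p.1.1 := by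
      intro t ht
      obtain ⟨x, ⟨p, hp, rfl⟩, hxt⟩ := exists_lt_of_lt_csSup hBne ht.2
      exact ⟨p, hp, hxt⟩
    have solb : Sol b g := by
      refine ⟨⟨hb0, hb1⟩, ?_, ?_, ?_⟩
      · by_cases hex : ∃ q : α, q ∈ c ∧ (0:ℝ) < q.1.1
        · rw [hgp hex.choose hex.choose_spec.1 0 le_rfl hex.choose_spec.2]
          exact hex.choose.2.2.1
        · simp only [hg, dif_neg hex]
      · intro t ht
        obtain ⟨p, hp, htp⟩ := hmem t ht
        have hev : Ico 0 p.1.1 ∈ nhdsWithin t (Ico 0 b) :=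
          mem_nhdsWithin.mpr ⟨Iio p.1.1, isOpen_Iio, htp, fun s hs => ⟨hs.2.1, hs.1⟩⟩
        have cp : ContinuousWithinAt p.1.2 (Ico 0 b) t :=
          (p.2.2.2.1 t ⟨ht.1, htp⟩).mono_of_mem_nhdsWithin hev
        exact cp.congr_of_eventuallyEq
          (Filter.eventuallyEq_of_mem hev (fun s hs => hgp p hp s hs.1 hs.2))
          (hgp p hp t ht.1 htp)
      · intro t ht
        obtain ⟨p, hp, htp⟩ := hmem t ht
        have hev : Ico 0 p.1.1 ∈ nhdsWithin t (Ici t) :=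
          mem_nhdsWithin.mpr ⟨Iio p.1.1, isOpen_Iio, htp,
            fun s hs => ⟨ht.1.trans hs.2, hs.1⟩⟩
        obtain ⟨hpD, hpd⟩ := p.2.2.2.2 t ⟨ht.1, htp⟩
        rw [show g t = p.1.2 t from hgp p hp t ht.1 htp]
        refine ⟨hpD, hpd.congr_of_eventuallyEq ?_ (hgp p hp t ht.1 htp)⟩
        exact Filter.eventuallyEq_of_mem hev (fun s hs => hgp p hp s hs.1 hs.2)
    refine ⟨⟨(b, g), solb⟩, fun p hp => ⟨le_csSup hBbdd ⟨p, hp, rfl⟩, ?_⟩⟩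
    exact fun t ht => (hgp p hp t ht.1 ht.2).symm
  obtain ⟨m, hm⟩ := exists_maximal_of_chains_bounded hchains (fun {p q s} => hrtrans)
  obtain ⟨⟨β, f⟩, hβIcc, hf0, hfcont, hfsol⟩ := m
  simp only at hm hβIcc hf0 hfcont hfsol
  -- conservation of F t (f t) = 0
  have hFzero : ∀ t ∈ Ico (0:ℝ) β, F t (f t) = 0 := by
    intro t ht
    have hsub : Icc (0:ℝ) t ⊆ Ico 0 β := fun s hs => ⟨hs.1, lt_of_le_of_lt hs.2 ht.2⟩
    have hsub1 : Icc (0:ℝ) t ⊆ Icc 0 1 := fun s hs =>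
      ⟨hs.1, (hs.2.trans (le_of_lt ht.2)).trans hβIcc.2⟩
    have hcont : ContinuousOn (fun s => F s (f s)) (Icc 0 t) := by
      have := hFcont.comp (continuousOn_id.prodMk (hfcont.mono hsub))
        (fun s hs => ⟨hsub1 hs, subset_closure (hfsol s (hsub hs)).1⟩)
      exact this
    have hderiv : ∀ s ∈ Ico (0:ℝ) t, HasDerivWithinAt (fun u => F u (f u)) 0 (Ici s) s := by
      intro s hs
      have hsmem : s ∈ Ico (0:ℝ) β := ⟨hs.1, lt_trans hs.2 ht.2⟩
      have hs01 : s ∈ Ico (0:ℝ) 1 := ⟨hs.1, lt_of_lt_of_le hsmem.2 hβIcc.2⟩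
      obtain ⟨hsD, hsd⟩ := hfsol s hsmem
      have hphi : HasDerivWithinAt (fun u => (u, f u)) ((1:ℝ), a s (f s)) (Ici s) s :=
        (hasDerivWithinAt_id s (Ici s)).prodMk hsd
      have hcomp : HasDerivWithinAt (fun u => F u (f u))
          ((((ContinuousLinearMap.fst ℝ ℝ X).smulRight (Ft s (f s))) +
            (Fx s (f s)).comp (ContinuousLinearMap.snd ℝ ℝ X)) ((1:ℝ), a s (f s)))
          (Ici s) s := by have := (hF s hs01 (f s) hsD).comp_hasDerivWithinAt s hphi; exact this
      have hval : (((ContinuousLinearMap.fst ℝ ℝ X).smulRight (Ft s (f s))) +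
          (Fx s (f s)).comp (ContinuousLinearMap.snd ℝ ℝ X)) ((1:ℝ), a s (f s)) = 0 := by
        have hid := DFunLike.congr_fun (hS s hs01 (f s) hsD) (Ft s (f s))
        simp only [ContinuousLinearMap.comp_apply, ContinuousLinearMap.id_apply] at hid
        simp only [ContinuousLinearMap.add_apply, ContinuousLinearMap.smulRight_apply,
          ContinuousLinearMap.coe_fst', ContinuousLinearMap.comp_apply,
          ContinuousLinearMap.coe_snd', one_smul, ha_def]
        rw [map_neg, hid]
        exact add_neg_cancel _
      rw [hval] at hcomp
      exact hcomp
    have hconst := constant_of_has_deriv_right_zero hcont hderiv t (right_mem_Icc.mpr ht.1)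
    rw [hf0] at hconst
    rw [hconst, hinit]
  -- main dichotomy
  by_cases h1 : ∃ τ ∈ Ioc (0:ℝ) 1, ∃ xk : ℕ → X, (∀ k, xk k ∈ closure D \ D) ∧
      Filter.Tendsto (fun k => F τ (xk k)) Filter.atTop (nhds 0)
  · exact Or.inl h1
  push_neg at h1
  -- extension lemma: no continuable endpoint below 1
  have hext : ∀ z ∈ D, (β = 0 → z = x₀) →
      Filter.Tendsto f (nhdsWithin β (Ico 0 β)) (nhds z) → β < 1 → False := by
    intro z hzD hz0 hzlim hβlt
    obtain ⟨T, hβT, hT1, g, hgβ, hg⟩ := locex β ⟨hβIcc.1, hβlt⟩ z hzD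
    set f' : ℝ → X := fun t => if t < β then f t else g t with hf'
    have hf'g : ∀ s, β ≤ s → f' s = g s := fun s hs => by
      simp only [hf', if_neg (not_lt.mpr hs)]
    have hf'f : ∀ s, s < β → f' s = f s := fun s hs => by simp only [hf', if_pos hs]
    have hf'β : f' β = z := by rw [hf'g β le_rfl, hgβ]
    have hsol : Sol T f' := by
      refine ⟨⟨hβIcc.1.trans hβT.le, hT1.le⟩, ?_, ?_, ?_⟩
      · rcases lt_or_eq_of_le hβIcc.1 with h0 | h0
        · rw [hf'f 0 h0, hf0]
        · rw [hf'g 0 h0.ge]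
          have hgz : g 0 = z := by rw [h0]; exact hgβ
          rw [hgz, hz0 h0.symm]
      · intro t htT
        rcases lt_trichotomy t β with hlt | heq | hgt
        · have hev : Ico 0 β ∈ nhdsWithin t (Ico 0 T) :=
            mem_nhdsWithin.mpr ⟨Iio β, isOpen_Iio, hlt, fun s hs => ⟨hs.2.1, hs.1⟩⟩
          exact ((hfcont t ⟨htT.1, hlt⟩).mono_of_mem_nhdsWithin hev).congr_of_eventuallyEq
            (Filter.eventuallyEq_of_mem hev (fun s hs => hf'f s hs.2)) (hf'f t hlt)
        · subst heq
          have hL : Filter.Tendsto f' (nhdsWithin t (Ico 0 t)) (nhds (f' t)) := by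
            rw [hf'β]
            exact hzlim.congr' (Filter.eventuallyEq_of_mem self_mem_nhdsWithin
              (fun s hs => (hf'f s hs.2).symm))
          have hRt : Filter.Tendsto f' (nhdsWithin t (Icc t T)) (nhds (f' t)) := by
            have hgc : ContinuousWithinAt g (Icc t T) t :=
              (hg t ⟨le_rfl, hβT.le⟩).2.continuousWithinAt
            exact hgc.congr (fun s hs => hf'g s hs.1) (hf'g t le_rfl)
          have hUnion : ContinuousWithinAt f' (Ico 0 t ∪ Icc t T) t := by
            unfold ContinuousWithinAt
            rw [nhdsWithin_union]
            exact Filter.Tendsto.sup hL hRt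
          exact hUnion.mono (fun s hs => by
            rcases lt_or_ge s t with h | h
            · exact Or.inl ⟨hs.1, h⟩
            · exact Or.inr ⟨h, hs.2.le⟩)
        · have hev : Icc β T ∈ nhdsWithin t (Ico 0 T) :=
            mem_nhdsWithin.mpr ⟨Ioi β, isOpen_Ioi, hgt, fun s hs => ⟨hs.1.le, hs.2.2.le⟩⟩
          have hgc : ContinuousWithinAt g (Icc β T) t :=
            (hg t ⟨hgt.le, htT.2.le⟩).2.continuousWithinAt.mono (fun s hs => hs)
          refine ((hgc.mono_of_mem_nhdsWithin hev).congr_of_eventuallyEq ?_ (hf'g t hgt.le))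
          exact Filter.eventuallyEq_of_mem hev (fun s hs => hf'g s hs.1)
      · intro t htT
        rcases lt_or_ge t β with hlt | hge
        · have htβ : t ∈ Ico (0:ℝ) β := ⟨htT.1, hlt⟩
          obtain ⟨hD1, hd1⟩ := hfsol t htβ
          have hev : Ico 0 β ∈ nhdsWithin t (Ici t) :=
            mem_nhdsWithin.mpr ⟨Iio β, isOpen_Iio, hlt, fun s hs => ⟨htT.1.trans hs.2, hs.1⟩⟩
          rw [show f' t = f t from hf'f t hlt]
          exact ⟨hD1, hd1.congr_of_eventuallyEq
            (Filter.eventuallyEq_of_mem hev (fun s hs => hf'f s hs.2)) (hf'f t hlt)⟩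
        · obtain ⟨hD2, hd2⟩ := hg t ⟨hge, htT.2.le⟩
          have hev : Icc β T ∈ nhdsWithin t (Ici t) :=
            mem_nhdsWithin.mpr ⟨Iio T, isOpen_Iio, htT.2, fun s hs => ⟨hge.trans hs.2, hs.1.le⟩⟩
          rw [show f' t = g t from hf'g t hge]
          refine ⟨hD2, (hd2.mono_of_mem_nhdsWithin hev).congr ?_ (hf'g t hge)⟩
          exact fun s hs => hf'g s (hge.trans hs)
    exact absurd (hm ⟨(T, f'), hsol⟩ ⟨hβT.le, fun s hs => (hf'f s hs.2).symm⟩).1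
      (not_le.mpr hβT)
  -- β > 0
  have hβpos : 0 < β := by
    rcases eq_or_lt_of_le hβIcc.1 with h | h
    · exfalso
      refine hext x₀ hx₀ (fun _ => rfl) ?_ (by rw [← h]; norm_num)
      rw [← h, Ico_self, nhdsWithin_empty]
      exact Filter.tendsto_bot
    · exact h
  -- boundedness of the trajectory
  have hRbd : ∃ R : ℝ, ∀ t ∈ Ico (0:ℝ) β, ‖f t‖ ≤ R := by
    by_contra hnp
    push_neg at hnp
    have hsel : ∀ k : ℕ, ∃ t ∈ Ico (0:ℝ) β, β - β/(k+1) < t ∧ (k:ℝ) < ‖f t‖ := by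
      intro k
      have hck : β - β/(k+1) < β := by
        have : 0 < β/(k+1) := by positivity
        linarith
      have hsb : Icc (0:ℝ) (β - β/(k+1)) ⊆ Ico 0 β := fun s hs =>
        ⟨hs.1, lt_of_le_of_lt hs.2 hck⟩
      obtain ⟨Mk, hMk⟩ := isCompact_Icc.exists_bound_of_continuousOn (hfcont.mono hsb)
      obtain ⟨t, htmem, htval⟩ := hnp (max Mk k)
      refine ⟨t, htmem, ?_, lt_of_le_of_lt (le_max_right _ _) htval⟩
      by_contra hle
      push_neg at hle
      exact absurd (hMk t ⟨htmem.1, hle⟩)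
        (not_le.mpr (lt_of_le_of_lt (le_max_left _ _) htval))
    choose tk htk1 htk2 htk3 using hsel
    have hnorm : Filter.Tendsto (fun k => ‖f (tk k)‖) Filter.atTop Filter.atTop :=
      Filter.tendsto_atTop_mono (fun k => (htk3 k).le) tendsto_natCast_atTop_atTop
    have hco := hcoercive β hβIcc (fun k => f (tk k)) (fun k => (hfsol _ (htk1 k)).1) hnorm
    obtain ⟨δ, hδpos, hδ⟩ := hFunif 1 one_pos
    have hlow : Filter.Tendsto (fun k : ℕ => β - β/(k+1)) Filter.atTop (nhds β) := by
      have h0 : Filter.Tendsto (fun k : ℕ => β / (k+1)) Filter.atTop (nhds 0) := by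
        have := tendsto_one_div_add_atTop_nhds_zero_nat.const_mul β
        simpa [mul_one_div, div_eq_mul_inv] using this
      have := Filter.Tendsto.sub (tendsto_const_nhds (x := β)) h0
      simpa using this
    have htkβ : Filter.Tendsto tk Filter.atTop (nhds β) :=
      tendsto_of_tendsto_of_tendsto_of_le_of_le hlow tendsto_const_nhds
        (fun k => (htk2 k).le) (fun k => (htk1 k).2.le)
    have hev1 : ∀ᶠ k in Filter.atTop, |β - tk k| < δ := by
      filter_upwards [(Metric.tendsto_nhds.mp htkβ) δ hδpos] with k hk
      rw [abs_sub_comm]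
      simpa [Real.dist_eq] using hk
    have hev2 : ∀ᶠ k in Filter.atTop, (2:ℝ) ≤ ‖F β (f (tk k))‖ :=
      hco.eventually_ge_atTop 2
    obtain ⟨k, hk1, hk2⟩ := (hev1.and hev2).exists
    have hsmall := hδ β hβIcc (tk k) ⟨(htk1 k).1, (htk1 k).2.le.trans hβIcc.2⟩ hk1
      (f (tk k)) (hfsol _ (htk1 k)).1
    rw [hFzero (tk k) (htk1 k), sub_zero] at hsmall
    linarith
  obtain ⟨R, hR⟩ := hRbd
  -- frontier bound from ¬(first alternative)
  have hεfr : ∃ ε > 0, ∀ y ∈ closure D \ D, ε ≤ ‖F β y‖ := by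
    by_contra hno
    push_neg at hno
    have hsel : ∀ k : ℕ, ∃ y ∈ closure D \ D, ‖F β y‖ < 1/(k+1) := by
      intro k
      obtain ⟨y, hy, hy2⟩ := hno (1/(k+1)) (by positivity)
      exact ⟨y, hy, hy2⟩
    choose yk hy1 hy2 using hsel
    refine h1 β ⟨hβpos, hβIcc.2⟩ yk hy1 ?_
    rw [tendsto_zero_iff_norm_tendsto_zero]
    exact squeeze_zero (fun k => norm_nonneg _) (fun k => (hy2 k).le)
      tendsto_one_div_add_atTop_nhds_zero_nat
  obtain ⟨ε, hεpos, hεfr⟩ := hεfr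
  -- the closed bounded "tube" Q and the limit z at β
  have hlimz : ∃ z ∈ D, Filter.Tendsto f (nhdsWithin β (Ico 0 β)) (nhds z) := by
    obtain ⟨δ, hδpos, hδ⟩ := hFunif (ε/2) (by linarith)
    set Q : Set X := (closure D ∩ {x | ‖x‖ ≤ R}) ∩ (fun x => ‖F β x‖) ⁻¹' Iic (ε/2) with hQ
    have hFβcont : ContinuousOn (fun x => F β x) (closure D) := by
      have := hFcont.comp
        (Continuous.continuousOn (continuous_const.prodMk continuous_id))
        (fun x hx => ⟨hβIcc, hx⟩)
      exact this
    have hQclosed : IsClosed Q := by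
      have hs0 : IsClosed (closure D ∩ {x | ‖x‖ ≤ R}) :=
        isClosed_closure.inter (isClosed_le continuous_norm continuous_const)
      exact ContinuousOn.preimage_isClosed_of_isClosed
        ((hFβcont.norm).mono inter_subset_left) hs0 isClosed_Iic
    have hQD : Q ⊆ D := by
      intro x hx
      by_contra hxD
      have h2 : ε ≤ ‖F β x‖ := hεfr x ⟨hx.1.1, hxD⟩
      have hle : ‖F β x‖ ≤ ε/2 := hx.2
      linarith
    have hQbdd : Bornology.IsBounded Q :=
      Metric.isBounded_closedBall.subset (fun x hx => by
        rw [Metric.mem_closedBall, dist_zero_right]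
        exact hx.1.2)
    obtain ⟨M0, hM0⟩ := habdd Q hQD hQclosed hQbdd
    set M := max M0 0 with hM
    have hMnn : (0:ℝ) ≤ M := le_max_right _ _
    set c := max 0 (β - δ/2) with hcdef
    have hcβ : c < β := max_lt hβpos (by linarith)
    have hc0 : (0:ℝ) ≤ c := le_max_left _ _
    have hQmem : ∀ t ∈ Ico c β, f t ∈ Q := by
      intro t ht
      have htβ : t ∈ Ico (0:ℝ) β := ⟨hc0.trans ht.1, ht.2⟩
      have ht01 : t ∈ Icc (0:ℝ) 1 := ⟨htβ.1, htβ.2.le.trans hβIcc.2⟩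
      have habs : |β - t| < δ := by
        rw [abs_of_nonneg (by linarith [ht.2.le])]
        have h3 : β - δ/2 ≤ c := le_max_right _ _
        linarith [ht.1]
      have hsmall := hδ β hβIcc t ht01 habs (f t) (hfsol t htβ).1
      rw [hFzero t htβ, sub_zero] at hsmall
      exact ⟨⟨subset_closure (hfsol t htβ).1, hR t htβ⟩, le_of_lt hsmall⟩
    have hlip : ∀ s t : ℝ, c ≤ s → s ≤ t → t < β → ‖f t - f s‖ ≤ M * (t - s) := by
      intro s t hcs hst htβ
      have hsub : Icc s t ⊆ Ico 0 β := fun u hu =>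
        ⟨hc0.trans (hcs.trans hu.1), lt_of_le_of_lt hu.2 htβ⟩
      have hder : ∀ u ∈ Ico s t, HasDerivWithinAt f (a u (f u)) (Ici u) u := fun u hu =>
        (hfsol u (hsub ⟨hu.1, hu.2.le⟩)).2
      have hbound : ∀ u ∈ Ico s t, ‖a u (f u)‖ ≤ M := by
        intro u hu
        have huβ : u ∈ Ico (0:ℝ) β := hsub ⟨hu.1, hu.2.le⟩
        have hu01 : u ∈ Ico (0:ℝ) 1 := ⟨huβ.1, lt_of_lt_of_le huβ.2 hβIcc.2⟩
        exact le_trans (hM0 u hu01 (f u) (hQmem u ⟨hcs.trans hu.1, huβ.2⟩)) (le_max_left _ _)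
      exact norm_image_sub_le_of_norm_deriv_right_le_segment
        (hfcont.mono hsub) hder hbound t (right_mem_Icc.mpr hst)
    set un : ℕ → ℝ := fun n => β - (β - c)/(n+1) with hun
    have hβc : (0:ℝ) ≤ β - c := by linarith
    have hun_mem : ∀ n : ℕ, un n ∈ Ico c β := by
      intro n
      constructor
      · have h4 : (β - c)/((n:ℝ)+1) ≤ β - c := div_le_self hβc (by
          have : (0:ℝ) ≤ (n:ℝ) := Nat.cast_nonneg n
          linarith)
        simp only [hun]
        linarith
      · have h5 : 0 < (β - c)/((n:ℝ)+1) := div_pos (by linarith) (by positivity)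
        simp only [hun]
        linarith
    have hun_mono : ∀ p q : ℕ, p ≤ q → un p ≤ un q := by
      intro p q hpq
      have h6 : (β - c)/((q:ℝ)+1) ≤ (β - c)/((p:ℝ)+1) := by
        gcongr
      simp only [hun]
      linarith
    have htail : Filter.Tendsto (fun n : ℕ => M * ((β - c)/(n+1))) Filter.atTop (nhds 0) := by
      have h0 : Filter.Tendsto (fun n : ℕ => (β - c) / (n+1)) Filter.atTop (nhds 0) := by
        have := tendsto_one_div_add_atTop_nhds_zero_nat.const_mul (β - c)
        simpa [mul_one_div, div_eq_mul_inv] using this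
      have := h0.const_mul M
      simpa using this
    have hcauchy : CauchySeq (fun n => f (un n)) := by
      rw [Metric.cauchySeq_iff']
      intro η hη
      obtain ⟨N, hN⟩ := (htail.eventually (eventually_lt_nhds hη)).exists
      refine ⟨N, fun n hn => ?_⟩
      have h7 : un N ≤ un n := hun_mono N n hn
      have h8 := hlip (un N) (un n) (hun_mem N).1 h7 (hun_mem n).2
      rw [dist_eq_norm]
      calc ‖f (un n) - f (un N)‖ ≤ M * (un n - un N) := h8
        _ ≤ M * ((β - c)/((N:ℝ)+1)) := by
            have h10 : un n < β := (hun_mem n).2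
            have h9 : un n - un N ≤ (β - c)/((N:ℝ)+1) := by
              have h11 : (0:ℝ) ≤ (β - c)/((n:ℝ)+1) := by positivity
              simp only [hun] at h10 ⊢
              linarith
            exact mul_le_mul_of_nonneg_left h9 hMnn
        _ < η := hN
    obtain ⟨z, hz⟩ := cauchySeq_tendsto_of_complete hcauchy
    have hunβ : Filter.Tendsto un Filter.atTop (nhds β) := by
      have h0 : Filter.Tendsto (fun n : ℕ => (β - c) / (n+1)) Filter.atTop (nhds 0) := by
        have := tendsto_one_div_add_atTop_nhds_zero_nat.const_mul (β - c)
        simpa [mul_one_div, div_eq_mul_inv] using this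
      have h12 := Filter.Tendsto.sub (tendsto_const_nhds (x := β)) h0
      simpa using h12
    have hzQ : z ∈ Q := hQclosed.mem_of_tendsto hz
      (Filter.Eventually.of_forall (fun n => hQmem _ (hun_mem n)))
    refine ⟨z, hQD hzQ, ?_⟩
    have hdistz : ∀ t, c ≤ t → t < β → ‖f t - z‖ ≤ M * (β - t) := by
      intro t hct htβ
      have hlim2 : Filter.Tendsto (fun n => ‖f (un n) - f t‖) Filter.atTop
          (nhds ‖z - f t‖) := (hz.sub tendsto_const_nhds).norm
      have hevgt : ∀ᶠ n in Filter.atTop, t < un n := hunβ.eventually (eventually_gt_nhds htβ)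
      have hbnd : ∀ᶠ n in Filter.atTop, ‖f (un n) - f t‖ ≤ M * (β - t) := by
        filter_upwards [hevgt] with n hn
        calc ‖f (un n) - f t‖ ≤ M * (un n - t) := hlip t (un n) hct hn.le (hun_mem n).2
          _ ≤ M * (β - t) := mul_le_mul_of_nonneg_left (by linarith [(hun_mem n).2]) hMnn
      have h13 := le_of_tendsto hlim2 hbnd
      rw [norm_sub_rev]
      exact h13
    have hev1 : ∀ᶠ t in nhdsWithin β (Ico 0 β), c < t :=
      (eventually_gt_nhds hcβ).filter_mono nhdsWithin_le_nhds
    have hnorm2 : ∀ᶠ t in nhdsWithin β (Ico 0 β), ‖f t - z‖ ≤ M * (β - t) := by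
      filter_upwards [hev1, self_mem_nhdsWithin] with t h1' h2'
      exact hdistz t h1'.le h2'.2
    have hg0 : Filter.Tendsto (fun t => M * (β - t)) (nhdsWithin β (Ico 0 β)) (nhds 0) := by
      have hcm : Continuous (fun t : ℝ => M * (β - t)) :=
        continuous_const.mul (continuous_const.sub continuous_id)
      have h : Filter.Tendsto (fun t : ℝ => M * (β - t)) (nhdsWithin β (Ico 0 β))
          (nhds (M * (β - β))) := (hcm.tendsto β).mono_left nhdsWithin_le_nhds
      simpa using h
    have hfinal : Filter.Tendsto (fun t => f t - z) (nhdsWithin β (Ico 0 β)) (nhds 0) :=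
      squeeze_zero_norm' hnorm2 hg0
    have h14 := hfinal.add (tendsto_const_nhds (x := z))
    simpa using h14
  obtain ⟨z, hzD, hzlim⟩ := hlimz
  rcases lt_or_eq_of_le hβIcc.2 with hβlt | hβ1
  · exact absurd (hext z hzD (fun h => absurd h hβpos.ne') hzlim hβlt) not_false
  · -- β = 1 : f t → z, F t (f t) = 0 gives F 1 z = 0
    right
    refine ⟨z, hzD, ?_⟩
    haveI hne : (nhdsWithin β (Ico 0 β)).NeBot := by
      apply mem_closure_iff_nhdsWithin_neBot.mp
      rw [closure_Ico hβpos.ne]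
      exact ⟨hβIcc.1, le_rfl⟩
    have hc : ContinuousWithinAt (fun p : ℝ × X => F p.1 p.2) (Icc 0 1 ×ˢ closure D) (β, z) :=
      hFcont (β, z) ⟨hβIcc, subset_closure hzD⟩
    have hmap : Filter.Tendsto (fun t : ℝ => (t, f t)) (nhdsWithin β (Ico 0 β))
        (nhdsWithin (β, z) (Icc 0 1 ×ˢ closure D)) := by
      rw [tendsto_nhdsWithin_iff]
      constructor
      · exact (Filter.tendsto_id.mono_left nhdsWithin_le_nhds).prodMk_nhds hzlim
      · filter_upwards [self_mem_nhdsWithin] with t ht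
        exact ⟨⟨ht.1, ht.2.le.trans hβIcc.2⟩, subset_closure (hfsol t ht).1⟩
    have htendFz : Filter.Tendsto (fun t => F t (f t)) (nhdsWithin β (Ico 0 β))
        (nhds (F β z)) := Filter.Tendsto.comp hc hmap
    have htend0 : Filter.Tendsto (fun t => F t (f t)) (nhdsWithin β (Ico 0 β)) (nhds 0) :=
      Filter.Tendsto.congr' (Filter.eventuallyEq_of_mem self_mem_nhdsWithin
        (fun t ht => (hFzero t ht).symm)) tendsto_const_nhds
    have hfin : F β z = 0 := tendsto_nhds_unique htendFz htend0
    rw [← hβ1]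
    exact hfin
end

section
/- Let X be a Banach space, D ⊆ X open with 0 ∈ D, and f : cl(D) → X bounded, continuous, Fréchet differentiable on D with locally Lipschitz derivative x ↦ f'(x) ∈ L(X). Suppose (i) for every closed bounded P ⊆ D, sup_{t∈[0,1), x∈P} ‖(id_X − t f'(x))⁻¹‖ < ∞ (the inverses existing in L(X)); (ii) f(∂D) is relatively compact; and (iii) for every x ∈ ∂D, ‖f(x)‖ ≤ ‖x‖. Then f has a fixed point in cl(D). -/
open Set Topology Filter

/-- Local solvability of `x = s • f x` near a solution `(t₀, x₀)`, by contraction. -/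
lemma local_sol
    {X : Type*} [NormedAddCommGroup X] [NormedSpace ℝ X] [CompleteSpace X]
    (D : Set X) (f : X → X) (f' : X → (X →L[ℝ] X))
    (hf' : ∀ x ∈ D, HasFDerivAt f (f' x) x)
    {M : ℝ} (hM : ∀ x ∈ closure D, ‖f x‖ ≤ M)
    {x₀ : X} (hx₀ : x₀ ∈ D) (hDopen : IsOpen D)
    {t₀ : ℝ} (ht₀ : t₀ ∈ Icc (0:ℝ) 1)
    (hrel : x₀ = t₀ • f x₀)
    {ε : ℝ} (hε : 0 < ε) {c : NNReal}
    (hlip : LipschitzOnWith c f' (Metric.ball x₀ ε ∩ D))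
    {g : X →L[ℝ] X}
    (hg1 : (ContinuousLinearMap.id ℝ X - t₀ • f' x₀).comp g = ContinuousLinearMap.id ℝ X)
    (hg2 : g.comp (ContinuousLinearMap.id ℝ X - t₀ • f' x₀) = ContinuousLinearMap.id ℝ X) :
    ∃ r > 0, ∃ δ > 0, Metric.closedBall x₀ r ⊆ D ∧ ∃ u : ℝ → X,
      u t₀ = x₀ ∧
      (∀ s ∈ Icc (0:ℝ) 1, |s - t₀| ≤ δ →
        (u s ∈ Metric.closedBall x₀ r ∧ u s = s • f (u s) ∧
          ∀ y ∈ Metric.closedBall x₀ r, y = s • f y → y = u s)) ∧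
      (∀ s ∈ Icc (0:ℝ) 1, ∀ s' ∈ Icc (0:ℝ) 1, |s - t₀| ≤ δ → |s' - t₀| ≤ δ →
        ‖u s - u s'‖ ≤ 2 * ‖g‖ * M * |s - s'|) := by
  obtain ⟨ρ, hρ0, hρD⟩ := Metric.isOpen_iff.1 hDopen x₀ hx₀
  set N : ℝ := ‖g‖ with hN
  have hN0 : 0 ≤ N := norm_nonneg g
  have hM0 : 0 ≤ M := le_trans (norm_nonneg _) (hM x₀ (subset_closure hx₀))
  set A : X →L[ℝ] X := f' x₀ with hA
  -- pointwise versions of the inverse identities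
  have hg1' : ∀ w : X, g w - t₀ • A (g w) = w := by
    intro w
    have := DFunLike.congr_fun hg1 w
    simpa using this
  have hg2' : ∀ w : X, g (w - t₀ • A w) = w := by
    intro w
    have := DFunLike.congr_fun hg2 w
    simpa using this
  -- choose r
  set r : ℝ := min (ρ/2) (min (ε/2) (1/(4 * (↑c * N) + 4))) with hr
  have hc0 : (0:ℝ) ≤ ↑c := c.coe_nonneg
  have hcN4 : (0:ℝ) < 4 * (↑c * N) + 4 := by positivity
  have hr0 : 0 < r := by
    refine lt_min (by linarith) (lt_min (by linarith) (by positivity))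
  have hrρ : r < ρ := lt_of_le_of_lt (min_le_left _ _) (by linarith)
  have hrε : r < ε := lt_of_le_of_lt (le_trans (min_le_right _ _) (min_le_left _ _)) (by linarith)
  have hrcN : ↑c * N * r ≤ 1/4 := by
    have h1 : r ≤ 1/(4 * (↑c * N) + 4) := le_trans (min_le_right _ _) (min_le_right _ _)
    have h2 : ↑c * N * r ≤ (↑c * N) * (1/(4 * (↑c * N) + 4)) := by
      apply mul_le_mul_of_nonneg_left h1 (by positivity)
    calc ↑c * N * r ≤ (↑c * N) * (1/(4 * (↑c * N) + 4)) := h2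
      _ ≤ 1/4 := by
          rw [mul_one_div, div_le_div_iff₀ hcN4 (by norm_num)]
          nlinarith [mul_nonneg hc0 hN0]
  have hball : Metric.closedBall x₀ r ⊆ D := fun y hy => hρD (lt_of_le_of_lt hy hrρ)
  have hballε : Metric.closedBall x₀ r ⊆ Metric.ball x₀ ε ∩ D :=
    fun y hy => ⟨lt_of_le_of_lt hy hrε, hball hy⟩
  -- choose δ
  set δ : ℝ := min ((r/2)/(N*M+1)) (1/(4 * (N * ‖A‖) + 4)) with hδ
  have hNM1 : (0:ℝ) < N*M+1 := by positivity
  have hNA4 : (0:ℝ) < 4 * (N * ‖A‖) + 4 := by positivity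
  have hδ0 : 0 < δ := lt_min (by positivity) (by positivity)
  have hδNM : N * M * δ ≤ r/2 := by
    have h1 : δ ≤ (r/2)/(N*M+1) := min_le_left _ _
    calc N * M * δ ≤ (N*M) * ((r/2)/(N*M+1)) :=
          mul_le_mul_of_nonneg_left h1 (by positivity)
      _ ≤ r/2 := by
          rw [mul_div_assoc']
          rw [div_le_iff₀ hNM1]
          nlinarith [mul_nonneg hN0 hM0, hr0.le]
  have hδNA : N * ‖A‖ * δ ≤ 1/4 := by
    have h1 : δ ≤ 1/(4 * (N * ‖A‖) + 4) := min_le_right _ _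
    calc N * ‖A‖ * δ ≤ (N * ‖A‖) * (1/(4 * (N * ‖A‖) + 4)) :=
          mul_le_mul_of_nonneg_left h1 (by positivity)
      _ ≤ 1/4 := by
          rw [mul_one_div, div_le_div_iff₀ hNA4 (by norm_num)]
          nlinarith [mul_nonneg hN0 (norm_nonneg A)]
  -- mean value estimate on the closed ball
  have hmv : ∀ x ∈ Metric.closedBall x₀ r, ∀ y ∈ Metric.closedBall x₀ r,
      ‖f y - f x - A (y - x)‖ ≤ (↑c * r) * ‖y - x‖ := by
    intro x hx y hy
    refine (convex_closedBall x₀ r).norm_image_sub_le_of_norm_hasFDerivWithin_le'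
      (fun z hz => (hf' z (hball hz)).hasFDerivWithinAt) ?_ hx hy
    intro z hz
    have h1 : dist (f' z) (f' x₀) ≤ ↑c * dist z x₀ :=
      hlip.dist_le_mul _ (hballε hz) _ ⟨Metric.mem_ball_self hε, hx₀⟩
    have h2 : dist z x₀ ≤ r := hz
    calc ‖f' z - A‖ = dist (f' z) (f' x₀) := by rw [dist_eq_norm]
      _ ≤ ↑c * dist z x₀ := h1
      _ ≤ ↑c * r := mul_le_mul_of_nonneg_left h2 hc0
  -- the contraction map
  set Φ : ℝ → X → X := fun s x => x - g (x - s • f x) with hΦ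
  set K := Metric.closedBall x₀ r with hK
  -- fixed points of Φ s are solutions
  have hfixiff : ∀ s : ℝ, ∀ x : X, Φ s x = x ↔ x = s • f x := by
    intro s x
    constructor
    · intro h
      have h0 : g (x - s • f x) = 0 := by
        have : x - g (x - s • f x) = x := h
        have := sub_eq_self.mp this
        exact this
      have : x - s • f x = 0 := by
        have h1 := hg1' (x - s • f x)
        rw [h0] at h1
        simpa using h1.symm
      exact (sub_eq_zero.mp this)
    · intro h
      have hz : x - s • f x = 0 := sub_eq_zero.mpr h
      show x - g (x - s • f x) = x
      rw [hz, map_zero, sub_zero]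
  -- contraction estimate
  have hcontr : ∀ s ∈ Icc (0:ℝ) 1, |s - t₀| ≤ δ → ∀ x ∈ K, ∀ y ∈ K,
      ‖Φ s x - Φ s y‖ ≤ (1/2) * ‖x - y‖ := by
    intro s hs hsδ x hx y hy
    have key : Φ s x - Φ s y = g (s • (f x - f y - A (x - y)) + (s - t₀) • A (x - y)) := by
      have h1 : x - y = g ((x - y) - t₀ • A (x - y)) := (hg2' (x - y)).symm
      show (x - g (x - s • f x)) - (y - g (y - s • f y)) = _
      rw [show x - g (x - s • f x) - (y - g (y - s • f y))
          = (x - y) - (g (x - s • f x) - g (y - s • f y)) by abel]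
      rw [← map_sub g]
      conv_lhs => rw [h1]
      rw [← map_sub g]
      congr 1
      simp only [map_sub, ContinuousLinearMap.map_smul, smul_sub, sub_smul]
      abel
    rw [key]
    have hs1 : |s| ≤ 1 := abs_le.mpr ⟨by linarith [hs.1], hs.2⟩
    calc ‖g (s • (f x - f y - A (x - y)) + (s - t₀) • A (x - y))‖
        ≤ N * ‖s • (f x - f y - A (x - y)) + (s - t₀) • A (x - y)‖ := g.le_opNorm _
      _ ≤ N * (‖s • (f x - f y - A (x - y))‖ + ‖(s - t₀) • A (x - y)‖) := by
          apply mul_le_mul_of_nonneg_left (norm_add_le _ _) hN0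
      _ ≤ N * (1 * ((↑c * r) * ‖x - y‖) + δ * (‖A‖ * ‖x - y‖)) := by
          apply mul_le_mul_of_nonneg_left _ hN0
          apply add_le_add
          · rw [norm_smul]
            apply mul_le_mul hs1 (hmv y hy x hx) (norm_nonneg _) (by norm_num)
          · rw [norm_smul]
            exact mul_le_mul hsδ (A.le_opNorm _) (norm_nonneg _) (le_trans (abs_nonneg _) hsδ)
      _ = (↑c * N * r) * ‖x - y‖ + (N * ‖A‖ * δ) * ‖x - y‖ := by ring
      _ ≤ (1/4) * ‖x - y‖ + (1/4) * ‖x - y‖ := by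
          apply add_le_add <;> exact mul_le_mul_of_nonneg_right (by assumption) (norm_nonneg _)
      _ = (1/2) * ‖x - y‖ := by ring
  -- self-map
  have hx₀K : x₀ ∈ K := Metric.mem_closedBall_self hr0.le
  have hmaps : ∀ s ∈ Icc (0:ℝ) 1, |s - t₀| ≤ δ → ∀ x ∈ K, Φ s x ∈ K := by
    intro s hs hsδ x hx
    have hbase : Φ s x₀ - x₀ = - g ((t₀ - s) • f x₀) := by
      show (x₀ - g (x₀ - s • f x₀)) - x₀ = _
      have : x₀ - s • f x₀ = (t₀ - s) • f x₀ := by rw [sub_smul]; rw [← hrel]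
      rw [this]; abel
    have h1 : ‖Φ s x - x₀‖ ≤ ‖Φ s x - Φ s x₀‖ + ‖Φ s x₀ - x₀‖ := by
      have := norm_add_le (Φ s x - Φ s x₀) (Φ s x₀ - x₀)
      simpa using this
    have h2 : ‖Φ s x - Φ s x₀‖ ≤ (1/2) * ‖x - x₀‖ := hcontr s hs hsδ x hx x₀ hx₀K
    have h3 : ‖Φ s x₀ - x₀‖ ≤ N * M * δ := by
      rw [hbase, norm_neg]
      calc ‖g ((t₀ - s) • f x₀)‖ ≤ N * ‖(t₀ - s) • f x₀‖ := g.le_opNorm _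
        _ = N * (|t₀ - s| * ‖f x₀‖) := by rw [norm_smul]; rfl
        _ ≤ N * (δ * M) := by
            have hts : |t₀ - s| ≤ δ := by rw [abs_sub_comm]; exact hsδ
            exact mul_le_mul_of_nonneg_left
              (mul_le_mul hts (hM x₀ (subset_closure hx₀)) (norm_nonneg _) hδ0.le) hN0
        _ = N * M * δ := by ring
    have hxr : ‖x - x₀‖ ≤ r := by
      rw [← dist_eq_norm]; exact hx
    have : ‖Φ s x - x₀‖ ≤ (1/2) * r + r/2 := by
      calc ‖Φ s x - x₀‖ ≤ (1/2) * ‖x - x₀‖ + N * M * δ := by linarith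
        _ ≤ (1/2) * r + r/2 := by
            apply add_le_add _ hδNM
            linarith
    rw [Metric.mem_closedBall, dist_eq_norm]
    linarith
  -- existence and uniqueness of the fixed point for good s
  haveI : Nonempty K := ⟨⟨x₀, hx₀K⟩⟩
  haveI : CompleteSpace K := Metric.isClosed_closedBall.completeSpace_coe
  have hfp : ∀ s : ℝ, s ∈ Icc (0:ℝ) 1 ∧ |s - t₀| ≤ δ →
      ∃ z ∈ K, z = s • f z ∧ ∀ y ∈ K, y = s • f y → y = z := by
    rintro s ⟨hs, hsδ⟩
    set F : K → K := fun x => ⟨Φ s x, hmaps s hs hsδ x x.2⟩ with hF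
    have hcw : ContractingWith (1/2) F := by
      constructor
      · have : ((1/2 : NNReal) : ℝ) < ((1:NNReal) : ℝ) := by norm_num
        exact_mod_cast this
      · apply LipschitzWith.of_dist_le_mul
        intro a b
        have := hcontr s hs hsδ a a.2 b b.2
        simpa [hF, dist_eq_norm, Subtype.dist_eq] using this
    refine ⟨(hcw.fixedPoint F).1, (hcw.fixedPoint F).2, ?_, ?_⟩
    · have hfix := hcw.fixedPoint_isFixedPt
      have : Φ s ((hcw.fixedPoint F).1) = (hcw.fixedPoint F).1 := congrArg Subtype.val hfix
      exact (hfixiff s _).mp this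
    · intro y hy hrel'
      have : (⟨y, hy⟩ : K) = hcw.fixedPoint F := by
        apply hcw.fixedPoint_unique
        apply Subtype.ext
        simpa [hF] using (hfixiff s y).mpr hrel'
      exact congrArg Subtype.val this
  -- define u
  set u : ℝ → X := fun s =>
    if h : s ∈ Icc (0:ℝ) 1 ∧ |s - t₀| ≤ δ then Classical.choose (hfp s h) else x₀ with hu
  have hugood : ∀ s (h : s ∈ Icc (0:ℝ) 1 ∧ |s - t₀| ≤ δ),
      u s ∈ K ∧ u s = s • f (u s) ∧ ∀ y ∈ K, y = s • f y → y = u s := by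
    intro s h
    have : u s = Classical.choose (hfp s h) := by rw [hu]; exact dif_pos h
    obtain ⟨hz1, hz2, hz3⟩ := Classical.choose_spec (hfp s h)
    rw [this]
    exact ⟨hz1, hz2, hz3⟩
  have ht₀good : t₀ ∈ Icc (0:ℝ) 1 ∧ |t₀ - t₀| ≤ δ := ⟨ht₀, by simp [hδ0.le]⟩
  have hut₀ : u t₀ = x₀ := by
    obtain ⟨_, _, huniq⟩ := hugood t₀ ht₀good
    exact (huniq x₀ hx₀K hrel).symm
  refine ⟨r, hr0, δ, hδ0, hball, u, hut₀, ?_, ?_⟩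
  · intro s hs hsδ
    exact hugood s ⟨hs, hsδ⟩
  · intro s hs s' hs' hsδ hs'δ
    obtain ⟨hsK, hsrel, _⟩ := hugood s ⟨hs, hsδ⟩
    obtain ⟨hs'K, hs'rel, _⟩ := hugood s' ⟨hs', hs'δ⟩
    have hfixs : Φ s (u s) = u s := (hfixiff s (u s)).mpr hsrel
    have hfixs' : Φ s' (u s') = u s' := (hfixiff s' (u s')).mpr hs'rel
    have hdiff : Φ s (u s') - Φ s' (u s') = g ((s - s') • f (u s')) := by
      show (u s' - g (u s' - s • f (u s'))) - (u s' - g (u s' - s' • f (u s'))) = _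
      rw [show (u s' - g (u s' - s • f (u s'))) - (u s' - g (u s' - s' • f (u s')))
          = g (u s' - s' • f (u s')) - g (u s' - s • f (u s')) by abel]
      rw [← map_sub g]
      congr 1
      rw [sub_smul]; abel
    have h1 : ‖u s - u s'‖ ≤ ‖Φ s (u s) - Φ s (u s')‖ + ‖Φ s (u s') - Φ s' (u s')‖ := by
      have e : u s - u s' = (Φ s (u s) - Φ s (u s')) + (Φ s (u s') - Φ s' (u s')) := by
        rw [hfixs, hfixs']; abel
      rw [e]; exact norm_add_le _ _
    have h2 : ‖Φ s (u s) - Φ s (u s')‖ ≤ (1/2) * ‖u s - u s'‖ :=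
      hcontr s hs hsδ (u s) hsK (u s') hs'K
    have h3 : ‖Φ s (u s') - Φ s' (u s')‖ ≤ N * M * |s - s'| := by
      rw [hdiff]
      calc ‖g ((s - s') • f (u s'))‖ ≤ N * ‖(s - s') • f (u s')‖ := g.le_opNorm _
        _ = N * (|s - s'| * ‖f (u s')‖) := by rw [norm_smul]; rfl
        _ ≤ N * (|s - s'| * M) := by
            apply mul_le_mul_of_nonneg_left _ hN0
            exact mul_le_mul_of_nonneg_left (hM _ (subset_closure (hball hs'K))) (abs_nonneg _)
        _ = N * M * |s - s'| := by ring
    have : ‖u s - u s'‖ ≤ (1/2) * ‖u s - u s'‖ + N * M * |s - s'| := by linarith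
    have : (1/2) * ‖u s - u s'‖ ≤ N * M * |s - s'| := by linarith
    calc ‖u s - u s'‖ = 2 * ((1/2) * ‖u s - u s'‖) := by ring
      _ ≤ 2 * (N * M * |s - s'|) := by linarith
      _ = 2 * N * M * |s - s'| := by ring


/-- A solution path for `x = s • f x` up to time `t`. -/
def SolPath {X : Type*} [NormedAddCommGroup X] [NormedSpace ℝ X]
    (D : Set X) (f : X → X) (t : ℝ) (γ : ℝ → X) : Prop :=
  ContinuousOn γ (Icc 0 t) ∧ ∀ s ∈ Icc 0 t, γ s ∈ D ∧ γ s = s • f (γ s)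

lemma solpath_zero {X : Type*} [NormedAddCommGroup X] [NormedSpace ℝ X]
    {D : Set X} {f : X → X} {t : ℝ} {γ : ℝ → X} (h : SolPath D f t γ) (ht : 0 ≤ t) :
    γ 0 = 0 := by
  have := (h.2 0 ⟨le_refl 0, ht⟩).2
  simpa using this

lemma sol_uniq
    {X : Type*} [NormedAddCommGroup X] [NormedSpace ℝ X] [CompleteSpace X]
    {D : Set X} (hDopen : IsOpen D) {f : X → X} {f' : X → (X →L[ℝ] X)}
    (hf' : ∀ x ∈ D, HasFDerivAt f (f' x) x)
    {M : ℝ} (hM : ∀ x ∈ closure D, ‖f x‖ ≤ M)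
    (hf'lip : ∀ z ∈ D, ∃ ε > 0, ∃ c : NNReal,
      LipschitzOnWith c f' (Metric.ball z ε ∩ D))
    (hinvs : ∀ x ∈ D, ∀ t ∈ Ico (0:ℝ) 1, ∃ g : X →L[ℝ] X,
      (ContinuousLinearMap.id ℝ X - t • f' x).comp g = ContinuousLinearMap.id ℝ X ∧
      g.comp (ContinuousLinearMap.id ℝ X - t • f' x) = ContinuousLinearMap.id ℝ X)
    {t₁ t₂ : ℝ} (ht₁ : t₁ < 1) (ht₂ : t₂ < 1)
    {γ₁ γ₂ : ℝ → X} (h₁ : SolPath D f t₁ γ₁) (h₂ : SolPath D f t₂ γ₂) :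
    ∀ s, 0 ≤ s → s ≤ t₁ → s ≤ t₂ → γ₁ s = γ₂ s := by
  intro s hs0 hst₁ hst₂
  set m := min t₁ t₂ with hm
  have hm0 : 0 ≤ m := le_min (le_trans hs0 hst₁) (le_trans hs0 hst₂)
  have hm1 : m < 1 := lt_of_le_of_lt (min_le_left _ _) ht₁
  have hIm₁ : Icc (0:ℝ) m ⊆ Icc 0 t₁ := Icc_subset_Icc (le_refl _) (min_le_left _ _)
  have hIm₂ : Icc (0:ℝ) m ⊆ Icc 0 t₂ := Icc_subset_Icc (le_refl _) (min_le_right _ _)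
  set S : Set ℝ := {τ | τ ∈ Icc 0 m ∧ γ₁ τ = γ₂ τ} with hS
  have hScl : IsClosed S := by
    have hc : ContinuousOn (fun τ => γ₁ τ - γ₂ τ) (Icc 0 m) :=
      ((h₁.1.mono hIm₁).sub (h₂.1.mono hIm₂))
    have : S = Icc 0 m ∩ (fun τ => γ₁ τ - γ₂ τ) ⁻¹' {0} := by
      ext τ
      simp only [hS, Set.mem_setOf_eq, Set.mem_inter_iff, Set.mem_preimage,
        Set.mem_singleton_iff, sub_eq_zero]
    rw [this]
    exact hc.preimage_isClosed_of_isClosed isClosed_Icc isClosed_singleton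
  set E : Set ℝ := {e | e ∈ Icc 0 m ∧ Icc 0 e ⊆ S} with hE
  have h0E : (0:ℝ) ∈ E := by
    refine ⟨⟨le_refl _, hm0⟩, ?_⟩
    intro τ hτ
    have hτ0 : τ = 0 := le_antisymm hτ.2 hτ.1
    subst hτ0
    exact ⟨⟨le_refl _, hm0⟩, by rw [solpath_zero h₁ (le_trans hm0 (min_le_left _ _)),
      solpath_zero h₂ (le_trans hm0 (min_le_right _ _))]⟩
  have hEbdd : BddAbove E := ⟨m, fun e he => he.1.2⟩
  have hEne : E.Nonempty := ⟨0, h0E⟩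
  set cc := sSup E with hcc
  have hcc0 : 0 ≤ cc := le_csSup hEbdd h0E
  have hccm : cc ≤ m := csSup_le hEne (fun e he => he.1.2)
  have hES : E ⊆ S := fun e he => he.2 ⟨he.1.1, le_refl _⟩
  have hccS : cc ∈ S := hScl.closure_subset
    (closure_mono hES (csSup_mem_closure hEne hEbdd))
  have hccE : cc ∈ E := by
    refine ⟨⟨hcc0, hccm⟩, ?_⟩
    intro τ hτ
    rcases lt_or_eq_of_le hτ.2 with hlt | heq
    · obtain ⟨e, heE, he⟩ := exists_lt_of_lt_csSup hEne hlt
      exact heE.2 ⟨hτ.1, he.le⟩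
    · subst heq
      exact hccS
  -- now show cc = m by contradiction
  rcases lt_or_eq_of_le hccm with hlt | heq
  · exfalso
    -- local solvability around (cc, γ₁ cc)
    have hccD : γ₁ cc ∈ D := (h₁.2 cc (hIm₁ ⟨hcc0, hccm⟩)).1
    have hccrel : γ₁ cc = cc • f (γ₁ cc) := (h₁.2 cc (hIm₁ ⟨hcc0, hccm⟩)).2
    obtain ⟨g, hg1, hg2⟩ := hinvs (γ₁ cc) hccD cc ⟨hcc0, lt_of_le_of_lt hccm hm1⟩
    obtain ⟨ε, hε, c, hlip⟩ := hf'lip (γ₁ cc) hccD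
    obtain ⟨r, hr0, δ, hδ0, hball, u, hut₀, hu, _⟩ :=
      local_sol D f f' hf' hM hccD hDopen ⟨hcc0, (lt_of_le_of_lt (le_trans hccm (min_le_left _ _)) ht₁).le⟩
        hccrel hε hlip hg1 hg2
    -- continuity of both paths at cc
    have hcw₁ : ContinuousWithinAt γ₁ (Icc 0 t₁) cc := h₁.1 cc (hIm₁ ⟨hcc0, hccm⟩)
    have hcw₂ : ContinuousWithinAt γ₂ (Icc 0 t₂) cc := h₂.1 cc (hIm₂ ⟨hcc0, hccm⟩)
    rw [Metric.continuousWithinAt_iff] at hcw₁ hcw₂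
    obtain ⟨η₁, hη₁0, hη₁⟩ := hcw₁ r hr0
    obtain ⟨η₂, hη₂0, hη₂⟩ := hcw₂ r hr0
    set d := min δ (min η₁ η₂ / 2) with hd
    have hd0 : 0 < d := lt_min hδ0 (by positivity)
    set τp := min m (cc + d) with hτp
    have hτpcc : cc < τp := lt_min hlt (by linarith)
    have hτpE : τp ∈ E := by
      refine ⟨⟨by linarith, min_le_left _ _⟩, ?_⟩
      intro τ hτ
      rcases le_or_gt τ cc with hle | hgt
      · exact hccE.2 ⟨hτ.1, hle⟩
      · -- τ ∈ (cc, τp]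
        have hτm : τ ∈ Icc 0 m := ⟨hτ.1, le_trans hτ.2 (min_le_left _ _)⟩
        have hτd : |τ - cc| ≤ d := by
          rw [abs_of_nonneg (by linarith)]
          have := le_trans hτ.2 (min_le_right m (cc + d))
          linarith
        have hτδ : |τ - cc| ≤ δ := le_trans hτd (min_le_left _ _)
        have hτη : dist τ cc < min η₁ η₂ := by
          rw [Real.dist_eq]
          calc |τ - cc| ≤ min η₁ η₂ / 2 := le_trans hτd (min_le_right _ _)
            _ < min η₁ η₂ := by
                have : 0 < min η₁ η₂ := lt_min hη₁0 hη₂0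
                linarith
        have hτ01 : τ ∈ Icc (0:ℝ) 1 := ⟨hτ.1, (lt_of_le_of_lt hτm.2 hm1).le⟩
        have hγ₂cc : γ₂ cc = γ₁ cc := hccS.2.symm
        have hb₁ : γ₁ τ ∈ Metric.closedBall (γ₁ cc) r := by
          have := hη₁ (hIm₁ hτm) (lt_of_lt_of_le hτη (min_le_left _ _))
          exact Metric.mem_closedBall.mpr this.le
        have hb₂ : γ₂ τ ∈ Metric.closedBall (γ₁ cc) r := by
          have := hη₂ (hIm₂ hτm) (lt_of_lt_of_le hτη (min_le_right _ _))
          rw [hγ₂cc] at this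
          exact Metric.mem_closedBall.mpr this.le
        obtain ⟨_, _, huniq⟩ := hu τ hτ01 hτδ
        have he₁ : γ₁ τ = u τ := huniq (γ₁ τ) hb₁ (h₁.2 τ (hIm₁ hτm)).2
        have he₂ : γ₂ τ = u τ := huniq (γ₂ τ) hb₂ (h₂.2 τ (hIm₂ hτm)).2
        exact ⟨hτm, he₁.trans he₂.symm⟩
    have := le_csSup hEbdd hτpE
    rw [← hcc] at this
    linarith
  · -- cc = m, so s ∈ Icc 0 cc ⊆ S
    have : s ∈ S := hccE.2 ⟨hs0, by rw [heq]; exact le_min hst₁ hst₂⟩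
    exact this.2


lemma lip_of_locally {X : Type*} [NormedAddCommGroup X]
    {γ : ℝ → X} {L a b : ℝ} (hL : 0 ≤ L)
    (hloc : ∀ s ∈ Icc a b, ∃ δ > 0, ∀ s' ∈ Icc a b, |s' - s| ≤ δ →
      ‖γ s' - γ s‖ ≤ L * |s' - s|) :
    ∀ s ∈ Icc a b, ∀ s' ∈ Icc a b, ‖γ s' - γ s‖ ≤ L * |s' - s| := by
  have key : ∀ s ∈ Icc a b, ∀ s' ∈ Icc a b, s ≤ s' → ‖γ s' - γ s‖ ≤ L * (s' - s) := by
    intro s hs s' hs' hss'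
    set E : Set ℝ := {τ | τ ∈ Icc s s' ∧ ∀ σ ∈ Icc s τ, ‖γ σ - γ s‖ ≤ L * (σ - s)} with hE
    have hsE : s ∈ E := by
      refine ⟨⟨le_refl s, hss'⟩, ?_⟩
      intro σ hσ
      have : σ = s := le_antisymm hσ.2 hσ.1
      simp [this]
    have hbdd : BddAbove E := ⟨s', fun τ hτ => hτ.1.2⟩
    have hne : E.Nonempty := ⟨s, hsE⟩
    set cc := sSup E with hcc
    have hscc : s ≤ cc := le_csSup hbdd hsE
    have hccs' : cc ≤ s' := csSup_le hne (fun τ hτ => hτ.1.2)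
    have hccI : cc ∈ Icc a b := ⟨le_trans hs.1 hscc, le_trans hccs' hs'.2⟩
    obtain ⟨δ, hδ0, hδ⟩ := hloc cc hccI
    have hccE : cc ∈ E := by
      refine ⟨⟨hscc, hccs'⟩, ?_⟩
      intro σ hσ
      rcases lt_or_eq_of_le hσ.2 with hlt | heq
      · obtain ⟨e, heE, he⟩ := exists_lt_of_lt_csSup hne hlt
        exact heE.2 σ ⟨hσ.1, he.le⟩
      · subst heq
        rcases eq_or_lt_of_le hscc with hseq | hslt
        · simp [← hseq]
        · obtain ⟨e, heE, he⟩ := exists_lt_of_lt_csSup hne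
            (show cc - min δ (cc - s) < cc by
              have : 0 < min δ (cc - s) := lt_min hδ0 (by linarith)
              linarith)
          have hecc : e ≤ cc := le_csSup hbdd heE
          have heI : e ∈ Icc a b := ⟨le_trans hs.1 heE.1.1, le_trans heE.1.2 hs'.2⟩
          have hce : |e - cc| ≤ δ := by
            rw [abs_of_nonpos (by linarith)]
            have := min_le_left δ (cc - s)
            linarith
          have h1 : ‖γ cc - γ e‖ ≤ L * (cc - e) := by
            have := hδ e heI hce
            rw [← norm_neg] at this
            simp only [neg_sub] at this
            calc ‖γ cc - γ e‖ ≤ L * |e - cc| := this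
              _ = L * (cc - e) := by
                  rw [abs_of_nonpos (by linarith)]
                  ring
          have h2 : ‖γ e - γ s‖ ≤ L * (e - s) := heE.2 e ⟨heE.1.1, le_refl e⟩
          calc ‖γ cc - γ s‖ ≤ ‖γ cc - γ e‖ + ‖γ e - γ s‖ := by
                have := norm_add_le (γ cc - γ e) (γ e - γ s); simpa using this
            _ ≤ L * (cc - e) + L * (e - s) := add_le_add h1 h2
            _ = L * (cc - s) := by ring
    rcases eq_or_lt_of_le hccs' with heq | hlt
    · exact hccE.2 s' ⟨hss', heq.ge⟩
    · exfalso
      set τ := min (cc + δ) s' with hτ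
      have hτcc : cc < τ := lt_min (by linarith) hlt
      have hτE : τ ∈ E := by
        refine ⟨⟨by linarith, min_le_right _ _⟩, ?_⟩
        intro σ hσ
        rcases le_or_gt σ cc with hle | hgt
        · exact hccE.2 σ ⟨hσ.1, hle⟩
        · have hσI : σ ∈ Icc a b :=
            ⟨le_trans hs.1 hσ.1, le_trans (le_trans hσ.2 (min_le_right _ _)) hs'.2⟩
          have hσcc : |σ - cc| ≤ δ := by
            rw [abs_of_nonneg (by linarith)]
            have := le_trans hσ.2 (min_le_left _ _)
            linarith
          have h1 : ‖γ σ - γ cc‖ ≤ L * (σ - cc) := by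
            have := hδ σ hσI hσcc
            rwa [abs_of_nonneg (by linarith)] at this
          have h2 : ‖γ cc - γ s‖ ≤ L * (cc - s) := hccE.2 cc ⟨hscc, le_refl _⟩
          calc ‖γ σ - γ s‖ ≤ ‖γ σ - γ cc‖ + ‖γ cc - γ s‖ := by
                have := norm_add_le (γ σ - γ cc) (γ cc - γ s); simpa using this
            _ ≤ L * (σ - cc) + L * (cc - s) := add_le_add h1 h2
            _ = L * (σ - s) := by ring
      have := le_csSup hbdd hτE
      rw [← hcc] at this
      linarith
  intro s hs s' hs'
  rcases le_total s s' with h | h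
  · rw [abs_of_nonneg (by linarith)]
    exact key s hs s' hs' h
  · rw [abs_of_nonpos (by linarith), ← norm_neg]
    have := key s' hs' s hs h
    simp only [neg_sub]
    calc ‖γ s - γ s'‖ ≤ L * (s - s') := this
      _ = L * (s - s') := rfl
set_option maxHeartbeats 1000000 in
theorem fixed_point_of_smooth_map
    {X : Type*} [NormedAddCommGroup X] [NormedSpace ℝ X] [CompleteSpace X]
    (D : Set X) (hDopen : IsOpen D) (h0D : (0 : X) ∈ D)
    (f : X → X)
    (hfbdd : ∃ M : ℝ, ∀ x ∈ closure D, ‖f x‖ ≤ M)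
    (hfcont : ContinuousOn f (closure D))
    (f' : X → (X →L[ℝ] X))
    (hf' : ∀ x ∈ D, HasFDerivAt f (f' x) x)
    (hf'lip : ∀ z ∈ D, ∃ ε > 0, ∃ c : NNReal,
      LipschitzOnWith c f' (Metric.ball z ε ∩ D))
    (hinv : ∀ P ⊆ D, IsClosed P → Bornology.IsBounded P → ∃ M : ℝ,
      ∀ t ∈ Ico (0:ℝ) 1, ∀ x ∈ P, ∃ g : X →L[ℝ] X,
        (ContinuousLinearMap.id ℝ X - t • f' x).comp g = ContinuousLinearMap.id ℝ X ∧
        g.comp (ContinuousLinearMap.id ℝ X - t • f' x) = ContinuousLinearMap.id ℝ X ∧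
        ‖g‖ ≤ M)
    (hcompact : IsCompact (closure (f '' (closure D \ D))))
    (hbdry : ∀ x ∈ closure D \ D, ‖f x‖ ≤ ‖x‖) :
    ∃ x ∈ closure D, f x = x := by
  classical
  obtain ⟨M', hM'⟩ := hfbdd
  set M : ℝ := max M' 0 with hMdef
  have hM : ∀ x ∈ closure D, ‖f x‖ ≤ M := fun x hx => le_trans (hM' x hx) (le_max_left _ _)
  have hM0 : (0:ℝ) ≤ M := le_max_right _ _
  have hinvs : ∀ x ∈ D, ∀ t ∈ Ico (0:ℝ) 1, ∃ g : X →L[ℝ] X,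
      (ContinuousLinearMap.id ℝ X - t • f' x).comp g = ContinuousLinearMap.id ℝ X ∧
      g.comp (ContinuousLinearMap.id ℝ X - t • f' x) = ContinuousLinearMap.id ℝ X := by
    intro x hx t ht
    obtain ⟨Mp, hMp⟩ := hinv {x} (singleton_subset_iff.mpr hx) isClosed_singleton
      Bornology.isBounded_singleton
    obtain ⟨g, hg1, hg2, _⟩ := hMp t ht x rfl
    exact ⟨g, hg1, hg2⟩
  set Q : ℝ → Prop := fun t => 0 ≤ t ∧ t < 1 ∧ ∃ γ : ℝ → X, SolPath D f t γ with hQ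
  set A : Set ℝ := {t | Q t} with hA
  have h0A : Q 0 := by
    refine ⟨le_refl _, one_pos, fun _ => 0, continuousOn_const, ?_⟩
    intro s hs
    have : s = 0 := le_antisymm hs.2 hs.1
    subst this
    exact ⟨h0D, by simp⟩
  have hdown : ∀ t, Q t → ∀ s, 0 ≤ s → s ≤ t → Q s := by
    rintro t ⟨ht0, ht1, γ, hγ⟩ s hs0 hst
    exact ⟨hs0, lt_of_le_of_lt hst ht1, γ, hγ.1.mono (Icc_subset_Icc (le_refl _) hst),
      fun τ hτ => hγ.2 τ ⟨hτ.1, le_trans hτ.2 hst⟩⟩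
  have hbddA : BddAbove A := ⟨1, fun t ht => ht.2.1.le⟩
  have hAne : A.Nonempty := ⟨0, h0A⟩
  set b := sSup A with hb
  have hb0 : 0 ≤ b := le_csSup hbddA h0A
  have hb1 : b ≤ 1 := csSup_le hAne (fun t ht => ht.2.1.le)
  -- extension of any solution path beyond its end time
  have hext : ∀ t, Q t → ∃ t', Q t' ∧ t < t' := by
    rintro t ⟨ht0, ht1, γ, hγ⟩
    have htIcc : t ∈ Icc (0:ℝ) t := ⟨ht0, le_refl _⟩
    obtain ⟨hxD, hxrel⟩ := hγ.2 t htIcc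
    obtain ⟨g, hg1, hg2⟩ := hinvs (γ t) hxD t ⟨ht0, ht1⟩
    obtain ⟨ε, hε, c, hlip⟩ := hf'lip (γ t) hxD
    obtain ⟨r, hr0, δ, hδ0, hball, u, hut₀, hu, hulip⟩ :=
      local_sol D f f' hf' hM hxD hDopen ⟨ht0, ht1.le⟩ hxrel hε hlip hg1 hg2
    set t' := min (t + δ) ((t + 1)/2) with ht'
    have htt' : t < t' := lt_min (by linarith) (by linarith)
    have ht'1 : t' < 1 := lt_of_le_of_lt (min_le_right _ _) (by linarith)
    have ht'δ : t' ≤ t + δ := min_le_left _ _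
    -- continuity of u on a suitable set
    set Su : Set ℝ := Icc 0 1 ∩ Icc (t - δ) (t + δ) with hSu
    have hmemSu : ∀ s ∈ Su, s ∈ Icc (0:ℝ) 1 ∧ |s - t| ≤ δ := by
      intro s hs
      exact ⟨hs.1, abs_le.mpr ⟨by linarith [hs.2.1], by linarith [hs.2.2]⟩⟩
    have hucont : ContinuousOn u Su := by
      apply LipschitzOnWith.continuousOn (K := Real.toNNReal (2 * ‖g‖ * M))
      apply LipschitzOnWith.of_dist_le'
      intro x hx y hy
      obtain ⟨hx1, hx2⟩ := hmemSu x hx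
      obtain ⟨hy1, hy2⟩ := hmemSu y hy
      rw [dist_eq_norm, Real.dist_eq]
      exact hulip x hx1 y hy1 hx2 hy2
    set γp : ℝ → X := fun s => if s ≤ t then γ s else u s with hγp
    have hγpγ : ∀ s, s ≤ t → γp s = γ s := fun s hs => if_pos hs
    have hγpu : ∀ s ∈ Icc t t', γp s = u s := by
      intro s hs
      rcases eq_or_lt_of_le hs.1 with heq | hlt
      · rw [← heq, hγpγ t (le_refl t), hut₀]
      · exact if_neg (not_le.mpr hlt)
    have hIccsub : Icc (0:ℝ) t' ⊆ Icc 0 t ∪ Icc t t' := by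
      intro s hs
      rcases le_or_gt s t with h | h
      · exact Or.inl ⟨hs.1, h⟩
      · exact Or.inr ⟨h.le, hs.2⟩
    have hIccSu : Icc t t' ⊆ Su := by
      intro s hs
      constructor
      · exact ⟨le_trans ht0 hs.1, le_trans hs.2 ht'1.le⟩
      · exact ⟨by linarith [hs.1, hδ0], le_trans hs.2 ht'δ⟩
    have hγpcont : ContinuousOn γp (Icc 0 t') := by
      intro s hs
      rcases lt_trichotomy s t with hst | hst | hst
      · have h1 : ContinuousWithinAt γ (Icc 0 t' ∩ Iio t) s :=
          (hγ.1 s ⟨hs.1, hst.le⟩).mono (fun τ hτ => ⟨hτ.1.1, hτ.2.le⟩)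
        have h2 : ContinuousWithinAt γp (Icc 0 t' ∩ Iio t) s :=
          h1.congr (fun τ hτ => hγpγ τ hτ.2.le) (hγpγ s hst.le)
        exact (continuousWithinAt_inter (Iio_mem_nhds hst)).mp h2
      · subst hst
        have hA1 : ContinuousWithinAt γp (Icc 0 s) s :=
          (hγ.1 s ⟨hs.1, le_refl _⟩).congr (fun τ hτ => hγpγ τ hτ.2) (hγpγ s (le_refl _))
        have hA2 : ContinuousWithinAt γp (Icc s t') s :=
          (((hucont s (hIccSu ⟨le_refl _, htt'.le⟩)).mono hIccSu)).congr hγpu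
            (hγpu s ⟨le_refl _, htt'.le⟩)
        exact (hA1.union hA2).mono hIccsub
      · have hsub2 : Icc 0 t' ∩ Ioi t ⊆ Icc t t' := fun τ hτ => ⟨hτ.2.le, hτ.1.2⟩
        have h1 : ContinuousWithinAt γp (Icc 0 t' ∩ Ioi t) s :=
          (((hucont s (hIccSu ⟨hst.le, hs.2⟩)).mono
            (Set.Subset.trans hsub2 hIccSu))).congr
            (fun τ hτ => hγpu τ (hsub2 hτ)) (hγpu s ⟨hst.le, hs.2⟩)
        exact (continuousWithinAt_inter (Ioi_mem_nhds hst)).mp h1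
    refine ⟨t', ⟨by linarith, ht'1, γp, hγpcont, ?_⟩, htt'⟩
    intro s hs
    rcases le_or_gt s t with h | h
    · rw [hγpγ s h]
      exact hγ.2 s ⟨hs.1, h⟩
    · rw [hγpu s ⟨h.le, hs.2⟩]
      have hs01 : s ∈ Icc (0:ℝ) 1 := ⟨hs.1, le_trans hs.2 ht'1.le⟩
      have hsδ : |s - t| ≤ δ := abs_le.mpr ⟨by linarith, by linarith [le_trans hs.2 ht'δ]⟩
      obtain ⟨hmem, hrel, _⟩ := hu s hs01 hsδ
      exact ⟨hball hmem, hrel⟩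
  have hbA : ¬ Q b := by
    intro hQb
    obtain ⟨t', hQt', hbt'⟩ := hext b hQb
    exact absurd (le_csSup hbddA hQt') (not_le.mpr hbt')
  have hb0' : 0 < b := by
    rcases eq_or_lt_of_le hb0 with h | h
    · exact absurd (h ▸ h0A) hbA
    · exact h
  have hIcoA : ∀ s, 0 ≤ s → s < b → Q s := by
    intro s hs0 hsb
    obtain ⟨a, haA, hsa⟩ := exists_lt_of_lt_csSup hAne hsb
    exact hdown a haA s hs0 hsa.le
  -- the glued path on [0, b)
  set γg : ℝ → X := fun s => if h : Q s then Classical.choose h.2.2 s else 0 with hγg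
  have hglue : ∀ t, 0 ≤ t → t < b → SolPath D f t γg := by
    intro t ht0 htb
    have htQ : Q t := hIcoA t ht0 htb
    have hγt := Classical.choose_spec htQ.2.2
    have heq : ∀ s ∈ Icc (0:ℝ) t, γg s = Classical.choose htQ.2.2 s := by
      intro s hs
      have hsQ : Q s := hdown t htQ s hs.1 hs.2
      have h1 : γg s = Classical.choose hsQ.2.2 s := by
        rw [hγg]
        exact dif_pos hsQ
      rw [h1]
      exact sol_uniq hDopen hf' hM hf'lip hinvs hsQ.2.1 htQ.2.1
        (Classical.choose_spec hsQ.2.2) hγt s hs.1 (le_refl s) hs.2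
    refine ⟨hγt.1.congr (fun s hs => heq s hs), ?_⟩
    intro s hs
    rw [heq s hs]
    exact hγt.2 s hs
  have hrelg : ∀ s, 0 ≤ s → s < b → γg s ∈ D ∧ γg s = s • f (γg s) := by
    intro s hs0 hsb
    exact (hglue s hs0 hsb).2 s ⟨hs0, le_refl _⟩
  set T : Set X := γg '' (Ico 0 b) with hT
  have hTsubD : T ⊆ D := by
    rintro x ⟨s, hs, rfl⟩
    exact (hrelg s hs.1 hs.2).1
  have hTclD : closure T ⊆ closure D := closure_mono hTsubD
  have hTbdd : T ⊆ Metric.closedBall 0 M := by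
    rintro x ⟨s, hs, rfl⟩
    obtain ⟨hD', hrel'⟩ := hrelg s hs.1 hs.2
    rw [Metric.mem_closedBall, dist_eq_norm, sub_zero]
    calc ‖γg s‖ = ‖s • f (γg s)‖ := by rw [← hrel']
      _ = |s| * ‖f (γg s)‖ := by rw [norm_smul]; rfl
      _ ≤ 1 * M := by
          apply mul_le_mul _ (hM _ (subset_closure hD')) (norm_nonneg _) zero_le_one
          rw [abs_of_nonneg hs.1]
          exact le_trans hs.2.le hb1
      _ = M := one_mul M
  -- limits of solutions along sequences approaching b satisfy y = b • f y
  have hlim : ∀ y : X, ∀ s : ℕ → ℝ, (∀ n, s n ∈ Ico (0:ℝ) b) →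
      Filter.Tendsto s Filter.atTop (𝓝 b) →
      Filter.Tendsto (fun n => γg (s n)) Filter.atTop (𝓝 y) → y = b • f y := by
    intro y s hsmem hst hγt
    have hmemD : ∀ n, γg (s n) ∈ D :=
      fun n => (hrelg _ (hsmem n).1 (hsmem n).2).1
    have hyclD : y ∈ closure D :=
      mem_closure_of_tendsto hγt (Filter.Eventually.of_forall hmemD)
    have h1 : Filter.Tendsto (fun n => f (γg (s n))) Filter.atTop (𝓝 (f y)) := by
      have hcwa : ContinuousWithinAt f (closure D) y := hfcont y hyclD
      exact hcwa.tendsto.comp (tendsto_nhdsWithin_iff.mpr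
        ⟨hγt, Filter.Eventually.of_forall fun n => subset_closure (hmemD n)⟩)
    have h2 : Filter.Tendsto (fun n => s n • f (γg (s n))) Filter.atTop (𝓝 (b • f y)) :=
      hst.smul h1
    have h3 : (fun n => s n • f (γg (s n))) = fun n => γg (s n) :=
      funext fun n => ((hrelg _ (hsmem n).1 (hsmem n).2).2).symm
    rw [h3] at h2
    exact tendsto_nhds_unique hγt h2
  by_cases hTD : closure T ⊆ D
  · -- Case 1 : the trajectory stays away from the boundary
    have hT0 : γg 0 ∈ T := ⟨0, ⟨le_refl _, hb0'⟩, rfl⟩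
    have hPbdd : Bornology.IsBounded (closure T) :=
      (Metric.isBounded_closedBall (x := (0:X)) (r := M)).subset
        (closure_minimal hTbdd Metric.isClosed_closedBall)
    obtain ⟨MP, hMP⟩ := hinv (closure T) hTD isClosed_closure hPbdd
    have hMP0 : 0 ≤ MP := by
      obtain ⟨g, _, _, hgle⟩ := hMP 0 ⟨le_refl _, one_pos⟩ (γg 0) (subset_closure hT0)
      exact le_trans (norm_nonneg g) hgle
    set L := 2 * MP * M with hLdef
    have hL0 : 0 ≤ L := by positivity
    -- local Lipschitz estimates for the glued path
    have hloc : ∀ b'' ∈ Ico (0:ℝ) b, ∀ σ ∈ Icc (0:ℝ) b'', ∃ δ' > 0,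
        ∀ s'' ∈ Icc (0:ℝ) b'', |s'' - σ| ≤ δ' → ‖γg s'' - γg σ‖ ≤ L * |s'' - σ| := by
      intro b'' hb'' σ hσ
      have hσb : σ < b := lt_of_le_of_lt hσ.2 hb''.2
      obtain ⟨hσD, hσrel⟩ := hrelg σ hσ.1 hσb
      have hσP : γg σ ∈ closure T := subset_closure ⟨σ, ⟨hσ.1, hσb⟩, rfl⟩
      have hσ1 : σ ∈ Ico (0:ℝ) 1 := ⟨hσ.1, lt_of_lt_of_le hσb hb1⟩
      obtain ⟨g, hg1, hg2, hgle⟩ := hMP σ hσ1 (γg σ) hσP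
      obtain ⟨ε, hε, cl, hlip⟩ := hf'lip (γg σ) hσD
      obtain ⟨r, hr0, δ, hδ0, hball, u, hut₀, hu, hulip⟩ :=
        local_sol D f f' hf' hM hσD hDopen ⟨hσ1.1, hσ1.2.le⟩ hσrel hε hlip hg1 hg2
      have hcw := (hglue b'' hb''.1 hb''.2).1 σ hσ
      rw [Metric.continuousWithinAt_iff] at hcw
      obtain ⟨η, hη0, hη⟩ := hcw r hr0
      refine ⟨min δ (η/2), lt_min hδ0 (by positivity), ?_⟩
      intro s'' hs'' hd
      have hdδ : |s'' - σ| ≤ δ := le_trans hd (min_le_left _ _)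
      have hdη : dist s'' σ < η := by
        rw [Real.dist_eq]
        have := le_trans hd (min_le_right _ _)
        linarith
      have hs''1 : s'' ∈ Icc (0:ℝ) 1 :=
        ⟨hs''.1, le_trans hs''.2 (le_trans hb''.2.le hb1)⟩
      have hσ01 : σ ∈ Icc (0:ℝ) 1 := ⟨hσ1.1, hσ1.2.le⟩
      have hmemball : γg s'' ∈ Metric.closedBall (γg σ) r :=
        Metric.mem_closedBall.mpr (hη hs'' hdη).le
      obtain ⟨_, _, huniq⟩ := hu s'' hs''1 hdδ
      have he1 : γg s'' = u s'' :=
        huniq _ hmemball (hrelg s'' hs''.1 (lt_of_le_of_lt hs''.2 hb''.2)).2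
      have he2 : γg σ = u σ := hut₀.symm
      calc ‖γg s'' - γg σ‖ = ‖u s'' - u σ‖ := by rw [he1, he2]
        _ ≤ 2 * ‖g‖ * M * |s'' - σ| := by
            have h0 : |σ - σ| ≤ δ := by simp [hδ0.le]
            exact hulip s'' hs''1 σ hσ01 hdδ h0
        _ ≤ L * |s'' - σ| := by
            apply mul_le_mul_of_nonneg_right _ (abs_nonneg _)
            rw [hLdef]
            have : 2 * ‖g‖ ≤ 2 * MP := by linarith
            exact mul_le_mul_of_nonneg_right this hM0 |>.trans_eq (by ring) |>.trans
              (le_of_eq rfl)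
    -- global Lipschitz on [0, b)
    have hglip : ∀ s ∈ Ico (0:ℝ) b, ∀ s' ∈ Ico (0:ℝ) b, ‖γg s' - γg s‖ ≤ L * |s' - s| := by
      intro s hs s' hs'
      have hb'' : max s s' ∈ Ico (0:ℝ) b :=
        ⟨le_trans hs.1 (le_max_left _ _), max_lt hs.2 hs'.2⟩
      exact lip_of_locally hL0 (hloc (max s s') hb'') s ⟨hs.1, le_max_left _ _⟩
        s' ⟨hs'.1, le_max_right _ _⟩
    -- Cauchy sequence approaching b
    set sn : ℕ → ℝ := fun n => b - b / (n + 1) with hsndef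
    have hfrac : ∀ n : ℕ, 0 < b / ((n:ℝ) + 1) := by
      intro n
      positivity
    have hfracle : ∀ n N : ℕ, N ≤ n → b / ((n:ℝ) + 1) ≤ b / ((N:ℝ) + 1) := by
      intro n N hNn
      apply div_le_div_of_nonneg_left hb0 (by positivity)
      exact_mod_cast by omega
    have hsnmem : ∀ n, sn n ∈ Ico (0:ℝ) b := by
      intro n
      constructor
      · have h1 : b / ((n:ℝ) + 1) ≤ b / ((0:ℕ) + 1) := hfracle n 0 (Nat.zero_le n)
        simp only [Nat.cast_zero, zero_add, div_one] at h1
        simp only [hsndef]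
        push_cast
        linarith
      · have := hfrac n
        simp only [hsndef]
        push_cast
        linarith
    have hsntend : Filter.Tendsto sn Filter.atTop (𝓝 b) := by
      have h1 : Filter.Tendsto (fun n : ℕ => b * (1 / ((n:ℝ) + 1))) Filter.atTop (𝓝 (b * 0)) :=
        tendsto_one_div_add_atTop_nhds_zero_nat.const_mul b
      rw [mul_zero] at h1
      have h2 : sn = fun n : ℕ => b - b * (1 / ((n:ℝ) + 1)) := by
        funext n
        simp [hsndef, div_eq_mul_inv, mul_one_div]
      rw [h2]
      simpa using tendsto_const_nhds.sub h1
    have hcauchy : CauchySeq (fun n => γg (sn n)) := by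
      refine cauchySeq_of_le_tendsto_0 (fun N => L * (b / ((N:ℝ) + 1))) ?_ ?_
      · intro n m N hNn hNm
        rw [dist_eq_norm]
        calc ‖γg (sn n) - γg (sn m)‖ ≤ L * |sn n - sn m| :=
              hglip (sn m) (hsnmem m) (sn n) (hsnmem n)
          _ ≤ L * (b / ((N:ℝ) + 1)) := by
              apply mul_le_mul_of_nonneg_left _ hL0
              rw [abs_sub_le_iff]
              have h1 := hfracle n N hNn
              have h2 := hfracle m N hNm
              have h3 := (hfrac n).le
              have h4 := (hfrac m).le
              constructor <;> simp only [hsndef] <;> push_cast <;> linarith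
      · have h1 : Filter.Tendsto (fun N : ℕ => L * (b * (1 / ((N:ℝ) + 1)))) Filter.atTop
            (𝓝 (L * (b * 0))) :=
          (tendsto_one_div_add_atTop_nhds_zero_nat.const_mul b).const_mul L
        rw [mul_zero, mul_zero] at h1
        simpa [mul_one_div, mul_div_assoc, div_eq_mul_inv] using h1
    obtain ⟨y, hytend⟩ := cauchySeq_tendsto_of_complete hcauchy
    have hyrel : y = b • f y := hlim y sn hsnmem hsntend hytend
    have hyT : y ∈ closure T :=
      mem_closure_of_tendsto hytend
        (Filter.Eventually.of_forall fun n => ⟨sn n, hsnmem n, rfl⟩)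
    have hyD : y ∈ D := hTD hyT
    rcases eq_or_lt_of_le hb1 with hb1' | hb1'
    · refine ⟨y, subset_closure hyD, ?_⟩
      rw [hb1', one_smul] at hyrel
      exact hyrel.symm
    · -- b < 1 : contradiction with maximality of b
      exfalso
      set γb : ℝ → X := fun s => if s = b then y else γg s with hγbdef
      have hγbg : ∀ s, s < b → γb s = γg s := fun s hs => if_neg (ne_of_lt hs)
      have hγbb : γb b = y := if_pos rfl
      have hlipb : ∀ s ∈ Icc (0:ℝ) b, ∀ s' ∈ Icc (0:ℝ) b,
          ‖γb s' - γb s‖ ≤ L * |s' - s| := by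
        have hkey : ∀ s, 0 ≤ s → s < b → ‖y - γg s‖ ≤ L * |b - s| := by
          intro s hs0 hsb
          have ht1 : Filter.Tendsto (fun n => ‖γg (sn n) - γg s‖) Filter.atTop
              (𝓝 ‖y - γg s‖) := ((hytend.sub tendsto_const_nhds).norm)
          have ht2 : Filter.Tendsto (fun n => L * |sn n - s|) Filter.atTop
              (𝓝 (L * |b - s|)) := by
            exact ((hsntend.sub tendsto_const_nhds).abs).const_mul L
          exact le_of_tendsto_of_tendsto' ht1 ht2
            (fun n => hglip s ⟨hs0, hsb⟩ (sn n) (hsnmem n))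
        intro s hs s' hs'
        rcases eq_or_lt_of_le hs.2 with hsb | hsb <;>
          rcases eq_or_lt_of_le hs'.2 with hs'b | hs'b
        · rw [hsb, hs'b]
          simp
        · rw [hsb, hγbb, hγbg s' hs'b]
          calc ‖γg s' - y‖ = ‖y - γg s'‖ := norm_sub_rev _ _
            _ ≤ L * |b - s'| := hkey s' hs'.1 hs'b
            _ = L * |s' - b| := by rw [abs_sub_comm]
        · rw [hs'b, hγbb, hγbg s hsb]
          exact hkey s hs.1 hsb
        · rw [hγbg s hsb, hγbg s' hs'b]
          exact hglip s ⟨hs.1, hsb⟩ s' ⟨hs'.1, hs'b⟩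
      have hγbcont : ContinuousOn γb (Icc 0 b) := by
        apply LipschitzOnWith.continuousOn (K := Real.toNNReal L)
        apply LipschitzOnWith.of_dist_le'
        intro x hx y' hy'
        rw [dist_eq_norm, Real.dist_eq]
        exact hlipb y' hy' x hx
      have hQb : Q b := by
        refine ⟨hb0, hb1', γb, hγbcont, ?_⟩
        intro s hs
        rcases eq_or_lt_of_le hs.2 with hsb | hsb
        · rw [hsb, hγbb]
          exact ⟨hyD, hyrel⟩
        · rw [hγbg s hsb]
          exact hrelg s hs.1 hsb
      exact hbA hQb
  · -- Case 2 : the closure of the trajectory meets the boundary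
    obtain ⟨y, hyT, hyD⟩ := not_subset.mp hTD
    have hyclD : y ∈ closure D := hTclD hyT
    obtain ⟨x, hxT, hxy⟩ := mem_closure_iff_seq_limit.mp hyT
    choose s hs hsx using hxT
    have hsIcc : ∀ n, s n ∈ Icc (0:ℝ) b := fun n => ⟨(hs n).1, (hs n).2.le⟩
    obtain ⟨tstar, htstar, φ, hφmono, hφtend⟩ := isCompact_Icc.tendsto_subseq hsIcc
    have hxφ : Filter.Tendsto (fun k => γg (s (φ k))) Filter.atTop (𝓝 y) := by
      have : (fun k => γg (s (φ k))) = fun k => x (φ k) := funext fun k => hsx (φ k)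
      rw [this]
      exact hxy.comp (hφmono.tendsto_atTop)
    rcases lt_or_eq_of_le htstar.2 with htb | htb
    · -- tstar < b : the limit would be an interior trajectory point, contradiction
      exfalso
      set b'' := (tstar + b)/2 with hb''def
      have hb''b : b'' < b := by
        simp only [hb''def]
        linarith
      have htb'' : tstar < b'' := by
        simp only [hb''def]
        linarith
      have hb''0 : 0 ≤ b'' := le_trans htstar.1 htb''.le
      have hcw : ContinuousWithinAt γg (Icc 0 b'') tstar :=
        (hglue b'' hb''0 hb''b).1 tstar ⟨htstar.1, htb''.le⟩
      have hev : ∀ᶠ k in Filter.atTop, s (φ k) ∈ Icc (0:ℝ) b'' := by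
        have h1 : ∀ᶠ k in Filter.atTop, s (φ k) < b'' := hφtend.eventually_lt_const htb''
        filter_upwards [h1] with k hk
        exact ⟨(hs (φ k)).1, hk.le⟩
      have htend2 : Filter.Tendsto (fun k => γg (s (φ k))) Filter.atTop (𝓝 (γg tstar)) :=
        hcw.tendsto.comp (tendsto_nhdsWithin_iff.mpr ⟨hφtend, hev⟩)
      have : y = γg tstar := tendsto_nhds_unique hxφ htend2
      exact hyD (this ▸ (hrelg tstar htstar.1 htb).1)
    · -- tstar = b
      have hyrel : y = b • f y :=
        hlim y (fun k => s (φ k)) (fun k => hs (φ k)) (htb ▸ hφtend) hxφ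
      rcases eq_or_lt_of_le hb1 with hb1' | hb1'
      · refine ⟨y, hyclD, ?_⟩
        rw [hb1', one_smul] at hyrel
        exact hyrel.symm
      · exfalso
        have h4 := hbdry y ⟨hyclD, hyD⟩
        have h5 : ‖y‖ = b * ‖f y‖ := by
          conv_lhs => rw [hyrel]
          rw [norm_smul, Real.norm_eq_abs, abs_of_nonneg hb0]
        have h6 : ‖y‖ ≤ b * ‖y‖ :=
          h5.trans_le (mul_le_mul_of_nonneg_left h4 hb0)
        have h7 : ‖y‖ = 0 := by nlinarith [norm_nonneg y]
        have : y = 0 := norm_eq_zero.mp h7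
        rw [this] at hyD
        exact hyD h0D
end

section
/- Let X be a Banach space, D ⊆ X open with 0 ∈ D, and f : cl(D) → X bounded, continuous, Fréchet differentiable on D with locally Lipschitz derivative. Suppose for every closed bounded P ⊆ D, sup_{t∈[0,1), x∈P} ‖(id_X − t f'(x))⁻¹‖_{L(X)} < ∞, f(∂D) is relatively compact, and for every x ∈ ∂D at least one of the following holds: (1) ‖f(x)‖ ≤ ‖x‖; (2) ‖f(x)‖ ≤ ‖x − f(x)‖; (3) ‖f(x)‖ ≤ √(‖x‖² + ‖x − f(x)‖²); (4) ‖f(x)‖ ≤ max{‖x − f(x)‖, ‖x‖}. Then f has a fixed point in cl(D). -/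
open Set Metric

lemma localSolve {X : Type*} [NormedAddCommGroup X] [NormedSpace ℝ X] [CompleteSpace X]
    (f : X → X) (f' : X → X →L[ℝ] X) (Mf Minv : ℝ) (hMf : 1 ≤ Mf) (hMinv : 1 ≤ Minv)
    (s : ℝ) (hs0 : 0 ≤ s) (hs1 : s ≤ 1) (z : X) (ε₀ : ℝ) (hε₀ : 0 < ε₀)
    (hder : ∀ x ∈ Metric.closedBall z ε₀, HasFDerivAt f (f' x) x)
    {cz : NNReal} (hlip : LipschitzOnWith cz f' (Metric.closedBall z ε₀))
    (hfb : ∀ x ∈ Metric.closedBall z ε₀, ‖f x‖ ≤ Mf)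
    (g : X →L[ℝ] X)
    (hg1 : (ContinuousLinearMap.id ℝ X - s • f' z).comp g = ContinuousLinearMap.id ℝ X)
    (hg2 : g.comp (ContinuousLinearMap.id ℝ X - s • f' z) = ContinuousLinearMap.id ℝ X)
    (hgn : ‖g‖ ≤ Minv) (hgpos : 0 < ‖g‖) :
    ∃ ε > 0, ∃ δ > 0, ε ≤ ε₀ ∧ 2 * Minv * Mf * δ ≤ ε ∧
      (z = s • f z → ∀ t, 0 ≤ t → t ≤ 1 → |t - s| ≤ δ →
        ∃ x ∈ Metric.closedBall z (2 * Minv * Mf * |t - s|), x = t • f x) ∧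
      (∀ t1 t2 : ℝ, |t1 - s| ≤ δ → |t2 - s| ≤ δ →
        ∀ a ∈ Metric.closedBall z ε, ∀ b ∈ Metric.closedBall z ε,
        a = t1 • f a → b = t2 • f b → ‖a - b‖ ≤ 2 * Minv * Mf * |t1 - t2|) := by
  have hMinv0 : (0:ℝ) < Minv := lt_of_lt_of_le one_pos hMinv
  have hMf0 : (0:ℝ) < Mf := lt_of_lt_of_le one_pos hMf
  set c : ℝ := (2 * Minv)⁻¹ with hc
  have hc0 : 0 < c := by positivity
  have hc12 : c ≤ 1/2 := by
    rw [hc]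
    rw [inv_le_comm₀ (by positivity) (by norm_num)]
    nlinarith
  set A : X →L[ℝ] X := ContinuousLinearMap.id ℝ X - s • f' z with hA
  set ε : ℝ := min ε₀ (c / (2 * ((cz:ℝ) + 1))) with hε
  have hεpos : 0 < ε := lt_min hε₀ (by positivity)
  have hεε₀ : ε ≤ ε₀ := min_le_left _ _
  have hczε : (cz:ℝ) * ε ≤ c / 2 := by
    have h1 : ε ≤ c / (2 * ((cz:ℝ) + 1)) := min_le_right _ _
    have h2 : (cz:ℝ) ≥ 0 := cz.coe_nonneg
    have := mul_le_mul_of_nonneg_left h1 h2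
    calc (cz:ℝ) * ε ≤ (cz:ℝ) * (c / (2 * ((cz:ℝ) + 1))) := this
      _ ≤ c / 2 := by
          rw [mul_div_assoc', div_le_div_iff₀ (by positivity) (by norm_num)]
          nlinarith [hc0, cz.coe_nonneg]
  set Kf : ℝ := ‖f' z‖ + 1 with hKf
  have hKf0 : 0 < Kf := by positivity
  set δ : ℝ := min (c / (2 * Kf)) (ε / (2 * Minv * Mf)) with hδ
  have hδpos : 0 < δ := lt_min (by positivity) (by positivity)
  have hδε : 2 * Minv * Mf * δ ≤ ε := by
    have h1 : δ ≤ ε / (2 * Minv * Mf) := min_le_right _ _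
    calc 2 * Minv * Mf * δ ≤ 2 * Minv * Mf * (ε / (2 * Minv * Mf)) := by
          apply mul_le_mul_of_nonneg_left h1 (by positivity)
      _ = ε := by field_simp
  -- derivative norm bound on the ball
  have hf'bd : ∀ x ∈ closedBall z ε, ‖f' x - f' z‖ ≤ (cz:ℝ) * ε := by
    intro x hx
    have hx0 : x ∈ closedBall z ε₀ := closedBall_subset_closedBall hεε₀ hx
    have hz0 : z ∈ closedBall z ε₀ := mem_closedBall_self hε₀.le
    have := hlip.dist_le_mul x hx0 z hz0
    rw [dist_eq_norm] at this
    calc ‖f' x - f' z‖ ≤ (cz:ℝ) * dist x z := this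
      _ ≤ (cz:ℝ) * ε := by
          apply mul_le_mul_of_nonneg_left _ cz.coe_nonneg
          exact mem_closedBall.1 hx
  -- MVT: f x - f y - f' z (x - y) bound
  have hMVT1 : ∀ a ∈ closedBall z ε, ∀ b ∈ closedBall z ε,
      ‖f a - f b - f' z (a - b)‖ ≤ (cz:ℝ) * ε * ‖a - b‖ := by
    intro a ha b hb
    have key := Convex.norm_image_sub_le_of_norm_hasFDerivWithin_le
      (f := fun x => f x - f' z x) (f' := fun x => f' x - f' z)
      (s := closedBall z ε) (C := (cz:ℝ) * ε) ?_ ?_ (convex_closedBall z ε) hb ha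
    · have key' : ‖(f a - f' z a) - (f b - f' z b)‖ ≤ (cz:ℝ) * ε * ‖a - b‖ := key
      have heq : f a - f' z a - (f b - f' z b) = f a - f b - f' z (a - b) := by
        rw [map_sub]; abel
      rwa [heq] at key'
    · intro x hx
      have : HasFDerivAt (fun x => f x - f' z x) (f' x - f' z) x := by
        exact (hder x (closedBall_subset_closedBall hεε₀ hx)).sub ((f' z).hasFDerivAt)
      exact this.hasFDerivWithinAt
    · intro x hx; exact hf'bd x hx
  have hMVT2 : ∀ a ∈ closedBall z ε, ∀ b ∈ closedBall z ε,
      ‖f a - f b‖ ≤ Kf * ‖a - b‖ := by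
    intro a ha b hb
    have key := Convex.norm_image_sub_le_of_norm_hasFDerivWithin_le
      (f := f) (f' := f') (s := closedBall z ε) (C := Kf) ?_ ?_ (convex_closedBall z ε) hb ha
    · exact key
    · intro x hx; exact (hder x (closedBall_subset_closedBall hεε₀ hx)).hasFDerivWithinAt
    · intro x hx
      have h1 := hf'bd x hx
      have : ‖f' x‖ ≤ ‖f' z‖ + (cz:ℝ) * ε := by
        calc ‖f' x‖ = ‖f' z + (f' x - f' z)‖ := by rw [add_sub_cancel]
          _ ≤ ‖f' z‖ + ‖f' x - f' z‖ := norm_add_le _ _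
          _ ≤ ‖f' z‖ + (cz:ℝ) * ε := by linarith
      have hcε1 : (cz:ℝ) * ε ≤ 1 := le_trans hczε (by linarith)
      rw [hKf]; linarith
  set cn : NNReal := ⟨c, hc0.le⟩ with hcn
  -- Approximation claim
  have happrox : ∀ t : ℝ, |t - s| ≤ δ →
      ApproximatesLinearOn (fun x => x - t • f x) A (closedBall z ε) cn := by
    intro t ht
    intro a ha b hb
    have e1 : (fun x => x - t • f x) a - (fun x => x - t • f x) b - A (a - b)
        = -(s • (f a - f b - f' z (a - b))) - (t - s) • (f a - f b) := by
      simp only [hA, ContinuousLinearMap.sub_apply, ContinuousLinearMap.id_apply,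
        ContinuousLinearMap.smul_apply]
      rw [map_sub]
      module
    rw [e1]
    have b1 : ‖-(s • (f a - f b - f' z (a - b))) - (t - s) • (f a - f b)‖
        ≤ s * ‖f a - f b - f' z (a - b)‖ + |t - s| * ‖f a - f b‖ := by
      calc ‖-(s • (f a - f b - f' z (a - b))) - (t - s) • (f a - f b)‖
          ≤ ‖s • (f a - f b - f' z (a - b))‖ + ‖(t - s) • (f a - f b)‖ := by
            rw [sub_eq_add_neg, ← neg_add]
            rw [norm_neg]
            exact norm_add_le _ _
        _ = |s| * ‖f a - f b - f' z (a - b)‖ + |t - s| * ‖f a - f b‖ := by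
            rw [norm_smul, norm_smul, Real.norm_eq_abs, Real.norm_eq_abs]
        _ = s * ‖f a - f b - f' z (a - b)‖ + |t - s| * ‖f a - f b‖ := by
            rw [abs_of_nonneg hs0]
    have b2 := hMVT1 a ha b hb
    have b3 := hMVT2 a ha b hb
    have hδ1 : δ ≤ c / (2 * Kf) := min_le_left _ _
    have : s * ‖f a - f b - f' z (a - b)‖ + |t - s| * ‖f a - f b‖ ≤ c * ‖a - b‖ := by
      have h1 : s * ‖f a - f b - f' z (a - b)‖ ≤ (cz:ℝ) * ε * ‖a - b‖ := by
        calc s * ‖f a - f b - f' z (a - b)‖ ≤ 1 * ((cz:ℝ) * ε * ‖a - b‖) := by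
              apply mul_le_mul hs1 b2 (norm_nonneg _) zero_le_one
          _ = (cz:ℝ) * ε * ‖a - b‖ := one_mul _
      have h2 : |t - s| * ‖f a - f b‖ ≤ δ * (Kf * ‖a - b‖) := by
        apply mul_le_mul ht b3 (norm_nonneg _) hδpos.le
      have h3 : (cz:ℝ) * ε * ‖a - b‖ ≤ c / 2 * ‖a - b‖ :=
        mul_le_mul_of_nonneg_right hczε (norm_nonneg _)
      have h4 : δ * (Kf * ‖a - b‖) ≤ c / 2 * ‖a - b‖ := by
        have : δ * Kf ≤ c / 2 := by
          calc δ * Kf ≤ (c / (2 * Kf)) * Kf := mul_le_mul_of_nonneg_right hδ1 hKf0.le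
            _ = c / 2 := by field_simp
        calc δ * (Kf * ‖a - b‖) = (δ * Kf) * ‖a - b‖ := by ring
          _ ≤ c / 2 * ‖a - b‖ := mul_le_mul_of_nonneg_right this (norm_nonneg _)
      calc s * ‖f a - f b - f' z (a - b)‖ + |t - s| * ‖f a - f b‖
          ≤ (cz:ℝ) * ε * ‖a - b‖ + δ * (Kf * ‖a - b‖) := add_le_add h1 h2
        _ ≤ c / 2 * ‖a - b‖ + c / 2 * ‖a - b‖ := add_le_add h3 h4
        _ = c * ‖a - b‖ := by ring
    calc ‖-(s • (f a - f b - f' z (a - b))) - (t - s) • (f a - f b)‖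
        ≤ c * ‖a - b‖ := le_trans b1 this
      _ = (cn:ℝ) * ‖a - b‖ := rfl
  -- the nonlinear right inverse
  have hArg : ∀ y, A (g y) = y := fun y => DFunLike.congr_fun hg1 y
  have hgA : ∀ y, g (A y) = y := fun y => DFunLike.congr_fun hg2 y
  set fsymm : A.NonlinearRightInverse :=
    ⟨g, ‖g‖₊, fun y => g.le_opNorm y, hArg⟩ with hfsymm
  have hfsnn : (fsymm.nnnorm : ℝ) = ‖g‖ := rfl
  have hginv : Minv⁻¹ ≤ (‖g‖)⁻¹ := by
    exact inv_anti₀ hgpos hgn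
  have hkey : c ≤ (fsymm.nnnorm : ℝ)⁻¹ - (cn:ℝ) := by
    rw [hfsnn]
    have : (cn:ℝ) = c := rfl
    rw [this, hc]
    have h1 : Minv⁻¹ - (2 * Minv)⁻¹ = (2 * Minv)⁻¹ := by
      field_simp; ring
    linarith [hginv]
  refine ⟨ε, hεpos, δ, hδpos, hεε₀, hδε, ?_, ?_⟩
  · -- existence
    intro hz t ht0 ht1 htδ
    rcases eq_or_ne t s with rfl | hts
    · refine ⟨z, ?_, hz⟩
      simp
    · set r : ℝ := 2 * Minv * Mf * |t - s| with hr
      have habs : 0 < |t - s| := abs_pos.2 (sub_ne_zero.2 hts)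
      have hr0 : 0 < r := by positivity
      have hrε : r ≤ ε := by
        calc r ≤ 2 * Minv * Mf * δ := by
              apply mul_le_mul_of_nonneg_left htδ (by positivity)
          _ ≤ ε := hδε
      have happ := happrox t htδ
      have hsurj := ApproximatesLinearOn.surjOn_closedBall_of_nonlinearRightInverse
        happ fsymm hr0.le (closedBall_subset_closedBall hrε)
      have hmem : (0:X) ∈ closedBall ((fun x => x - t • f x) z)
          (((fsymm.nnnorm : ℝ)⁻¹ - (cn:ℝ)) * r) := by
        simp only [mem_closedBall, dist_eq_norm, zero_sub, norm_neg]
        have e2 : z - t • f z = (s - t) • f z := by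
          nth_rewrite 1 [hz]
          rw [sub_smul]
        rw [e2, norm_smul, Real.norm_eq_abs]
        have hfz : ‖f z‖ ≤ Mf := hfb z (mem_closedBall_self hε₀.le)
        have : |s - t| * ‖f z‖ ≤ |t - s| * Mf := by
          rw [abs_sub_comm]
          exact mul_le_mul_of_nonneg_left hfz habs.le
        calc |s - t| * ‖f z‖ ≤ |t - s| * Mf := this
          _ = c * r := by rw [hr, hc]; field_simp
          _ ≤ ((fsymm.nnnorm : ℝ)⁻¹ - (cn:ℝ)) * r := mul_le_mul_of_nonneg_right hkey hr0.le
      obtain ⟨x, hxball, hxeq⟩ := hsurj hmem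
      refine ⟨x, hxball, ?_⟩
      have : x - t • f x = 0 := hxeq
      rwa [sub_eq_zero] at this
  · -- pairwise estimate
    intro t1 t2 ht1δ ht2δ a ha b hb hae hbe
    have happ := happrox t1 ht1δ
    have key : ‖(a - t1 • f a) - (b - t1 • f b) - A (a - b)‖ ≤ c * ‖a - b‖ :=
      happ a ha b hb
    have e0 : a - t1 • f a = 0 := sub_eq_zero_of_eq hae
    have e2 : b - t1 • f b = (t2 - t1) • f b := by
      nth_rewrite 1 [hbe]; rw [sub_smul]
    rw [e0, e2] at key
    have hfbb : ‖f b‖ ≤ Mf := hfb b (closedBall_subset_closedBall hεε₀ hb)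
    have hAb : ‖A (a - b)‖ ≤ |t1 - t2| * Mf + c * ‖a - b‖ := by
      have h1 : A (a - b) = -(0 - (t2 - t1) • f b - A (a - b)) + (0 - (t2 - t1) • f b) := by
        abel
      rw [h1]
      have hstep := norm_add_le (-(0 - (t2 - t1) • f b - A (a - b))) (0 - (t2 - t1) • f b)
      rw [norm_neg] at hstep
      have hn2 : ‖(0:X) - (t2 - t1) • f b‖ = |t2 - t1| * ‖f b‖ := by
        rw [zero_sub, norm_neg, norm_smul, Real.norm_eq_abs]
      calc ‖-(0 - (t2 - t1) • f b - A (a - b)) + (0 - (t2 - t1) • f b)‖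
          ≤ ‖0 - (t2 - t1) • f b - A (a - b)‖ + ‖0 - (t2 - t1) • f b‖ := hstep
        _ ≤ c * ‖a - b‖ + |t2 - t1| * ‖f b‖ := by
            rw [hn2]
            exact add_le_add key le_rfl
        _ ≤ |t1 - t2| * Mf + c * ‖a - b‖ := by
            rw [abs_sub_comm t2 t1]
            have : |t1 - t2| * ‖f b‖ ≤ |t1 - t2| * Mf :=
              mul_le_mul_of_nonneg_left hfbb (abs_nonneg _)
            linarith
    have hgab : ‖a - b‖ ≤ Minv * ‖A (a - b)‖ := by
      calc ‖a - b‖ = ‖g (A (a - b))‖ := by rw [hgA]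
        _ ≤ ‖g‖ * ‖A (a - b)‖ := g.le_opNorm _
        _ ≤ Minv * ‖A (a - b)‖ := mul_le_mul_of_nonneg_right hgn (norm_nonneg _)
    have hMc : Minv * c = 1 / 2 := by rw [hc]; field_simp
    have hchain : ‖a - b‖ ≤ Minv * Mf * |t1 - t2| + 1 / 2 * ‖a - b‖ := by
      calc ‖a - b‖ ≤ Minv * ‖A (a - b)‖ := hgab
        _ ≤ Minv * (|t1 - t2| * Mf + c * ‖a - b‖) :=
            mul_le_mul_of_nonneg_left hAb hMinv0.le
        _ = Minv * Mf * |t1 - t2| + (Minv * c) * ‖a - b‖ := by ring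
        _ = Minv * Mf * |t1 - t2| + 1 / 2 * ‖a - b‖ := by rw [hMc]
    linarith [hchain]

theorem fixed_point_of_smooth_map_boundary_conditions
    {X : Type*} [NormedAddCommGroup X] [NormedSpace ℝ X] [CompleteSpace X]
    (D : Set X) (hDopen : IsOpen D) (h0D : (0 : X) ∈ D)
    (f : X → X)
    (hfbdd : ∃ M : ℝ, ∀ x ∈ closure D, ‖f x‖ ≤ M)
    (hfcont : ContinuousOn f (closure D))
    (f' : X → (X →L[ℝ] X))
    (hf' : ∀ x ∈ D, HasFDerivAt f (f' x) x)
    (hf'lip : ∀ z ∈ D, ∃ ε > 0, ∃ c : NNReal,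
      LipschitzOnWith c f' (Metric.ball z ε ∩ D))
    (hinv : ∀ P ⊆ D, IsClosed P → Bornology.IsBounded P → ∃ M : ℝ,
      ∀ t ∈ Ico (0:ℝ) 1, ∀ x ∈ P, ∃ g : X →L[ℝ] X,
        (ContinuousLinearMap.id ℝ X - t • f' x).comp g = ContinuousLinearMap.id ℝ X ∧
        g.comp (ContinuousLinearMap.id ℝ X - t • f' x) = ContinuousLinearMap.id ℝ X ∧
        ‖g‖ ≤ M)
    (hcompact : IsCompact (closure (f '' (closure D \ D))))
    (hbdry : ∀ x ∈ closure D \ D,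
      ‖f x‖ ≤ ‖x‖ ∨ ‖f x‖ ≤ ‖x - f x‖ ∨
      ‖f x‖ ≤ Real.sqrt (‖x‖ ^ 2 + ‖x - f x‖ ^ 2) ∨
      ‖f x‖ ≤ max ‖x - f x‖ ‖x‖) :
    ∃ x ∈ closure D, f x = x := by
  by_cases hsub : Subsingleton X
  · exact ⟨0, subset_closure h0D, Subsingleton.elim _ _⟩
  have hnt : Nontrivial X := not_subsingleton_iff_nontrivial.mp hsub
  by_contra hfix
  push_neg at hfix
  obtain ⟨M0, hM0⟩ := hfbdd
  set Mf : ℝ := max M0 1 with hMfdef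
  have hMf1 : 1 ≤ Mf := le_max_right _ _
  have hMf0 : 0 < Mf := lt_of_lt_of_le one_pos hMf1
  have hMfb : ∀ x ∈ closure D, ‖f x‖ ≤ Mf := fun x hx => (hM0 x hx).trans (le_max_left _ _)
  set P : Set X := {x | x ∈ closure D ∧ ∃ t : ℝ, 0 ≤ t ∧ t ≤ 1 ∧ x = t • f x} with hPdef
  have hPD : P ⊆ D := by
    rintro x ⟨hxc, t, ht0, ht1, hxt⟩
    by_contra hxD
    have hxb : x ∈ closure D \ D := ⟨hxc, hxD⟩
    rcases eq_or_lt_of_le ht0 with h0 | h0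
    · apply hxD
      rw [← h0, zero_smul] at hxt
      rw [hxt]; exact h0D
    rcases eq_or_lt_of_le ht1 with h1 | h1
    · rw [h1, one_smul] at hxt
      exact hfix x hxc hxt.symm
    have hfx0 : f x ≠ 0 := by
      intro h
      apply hxD
      rw [hxt, h, smul_zero]; exact h0D
    have hfxpos : 0 < ‖f x‖ := norm_pos_iff.2 hfx0
    have hnx : ‖x‖ = t * ‖f x‖ := by
      have h' : ‖x‖ = ‖t • f x‖ := by rw [← hxt]
      rwa [norm_smul, Real.norm_eq_abs, abs_of_pos h0] at h' 
    have hnxf : ‖x - f x‖ = (1 - t) * ‖f x‖ := by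
      have e : x - f x = (t - 1) • f x := by
        nth_rewrite 1 [hxt]
        rw [sub_smul, one_smul]
      rw [e, norm_smul, Real.norm_eq_abs, abs_of_neg (by linarith)]
      ring
    have k1 : t * ‖f x‖ < ‖f x‖ := by nlinarith
    have k2 : (1 - t) * ‖f x‖ < ‖f x‖ := by nlinarith
    rcases hbdry x hxb with h | h | h | h
    · rw [hnx] at h; linarith
    · rw [hnxf] at h; linarith
    · rw [hnx, hnxf] at h
      have : Real.sqrt ((t * ‖f x‖) ^ 2 + ((1 - t) * ‖f x‖) ^ 2) < ‖f x‖ := by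
        rw [show ((t * ‖f x‖) ^ 2 + ((1 - t) * ‖f x‖) ^ 2)
            = (t^2 + (1-t)^2) * ‖f x‖^2 by ring]
        have hlt : (t^2 + (1-t)^2) * ‖f x‖^2 < ‖f x‖^2 := by nlinarith
        calc Real.sqrt ((t^2 + (1-t)^2) * ‖f x‖^2) < Real.sqrt (‖f x‖^2) := by
              apply Real.sqrt_lt_sqrt (by positivity) hlt
          _ = ‖f x‖ := Real.sqrt_sq hfxpos.le
      linarith
    · rw [hnx, hnxf] at h
      have := max_lt k2 k1
      exact absurd (lt_of_le_of_lt h this) (lt_irrefl _)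
  have hPc : IsClosed P := by
    rw [← isSeqClosed_iff_isClosed]
    intro u x hu hux
    have hxc : x ∈ closure D :=
      isClosed_closure.mem_of_tendsto hux (Filter.Eventually.of_forall fun n => (hu n).1)
    have hch : ∀ n, ∃ t : ℝ, 0 ≤ t ∧ t ≤ 1 ∧ u n = t • f (u n) := fun n => (hu n).2
    choose t ht0 ht1 hteq using hch
    have htmem : ∀ n, t n ∈ Icc (0:ℝ) 1 := fun n => ⟨ht0 n, ht1 n⟩
    obtain ⟨t₀, ht₀, φ, hφ, htend⟩ := isCompact_Icc.tendsto_subseq htmem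
    have huφ : Filter.Tendsto (u ∘ φ) Filter.atTop (nhds x) := hux.comp hφ.tendsto_atTop
    have hf : Filter.Tendsto (fun n => f (u (φ n))) Filter.atTop (nhds (f x)) := by
      apply ((hfcont x hxc).tendsto).comp
      rw [tendsto_nhdsWithin_iff]
      exact ⟨huφ, Filter.Eventually.of_forall fun n => (hu (φ n)).1⟩
    have hcomb : Filter.Tendsto (fun n => t (φ n) • f (u (φ n))) Filter.atTop
        (nhds (t₀ • f x)) := htend.smul hf
    have heq : (fun n => t (φ n) • f (u (φ n))) = u ∘ φ := by
      funext n; exact (hteq (φ n)).symm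
    rw [heq] at hcomb
    have := tendsto_nhds_unique huφ hcomb
    exact ⟨hxc, t₀, ht₀.1, ht₀.2, this⟩
  have hPb : Bornology.IsBounded P := by
    apply (Metric.isBounded_closedBall (x := (0:X)) (r := Mf)).subset
    rintro x ⟨hxc, t, ht0, ht1, hxt⟩
    rw [mem_closedBall_zero_iff]
    have : ‖x‖ = ‖t • f x‖ := by rw [← hxt]
    rw [norm_smul, Real.norm_eq_abs, abs_of_nonneg ht0] at this
    rw [this]
    have h1 := hMfb x hxc
    nlinarith [norm_nonneg (f x)]
  obtain ⟨Minv0, hMinv0⟩ := hinv P hPD hPc hPb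
  set Minv : ℝ := max Minv0 1 with hMinvdef
  have hMinv1 : 1 ≤ Minv := le_max_right _ _
  have hMinv0' : 0 < Minv := lt_of_lt_of_le one_pos hMinv1
  set L : ℝ := 2 * Minv * Mf with hLdef
  have hL0 : 0 < L := by positivity
  set L' : NNReal := ⟨L, hL0.le⟩ with hL'def
  have hL'L : (L' : ℝ) = L := rfl
  -- local continuation lemma
  have hloc : ∀ s : ℝ, 0 ≤ s → s < 1 → ∀ z, z ∈ closure D → z = s • f z →
      ∃ ε > 0, ∃ δ > 0, Metric.closedBall z ε ⊆ D ∧ L * δ ≤ ε ∧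
        (∀ t, 0 ≤ t → t ≤ 1 → |t - s| ≤ δ →
          ∃ x ∈ Metric.closedBall z (L * |t - s|), x = t • f x) ∧
        (∀ t1 t2 : ℝ, |t1 - s| ≤ δ → |t2 - s| ≤ δ →
          ∀ a ∈ Metric.closedBall z ε, ∀ b ∈ Metric.closedBall z ε,
          a = t1 • f a → b = t2 • f b → ‖a - b‖ ≤ L * |t1 - t2|) := by
    intro s hs0 hs1 z hzc hzs
    have hzP : z ∈ P := ⟨hzc, s, hs0, hs1.le, hzs⟩
    have hzD : z ∈ D := hPD hzP
    obtain ⟨ε₁, hε₁0, cz, hczlip⟩ := hf'lip z hzD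
    obtain ⟨ε₂, hε₂0, hε₂D⟩ := Metric.isOpen_iff.1 hDopen z hzD
    set ε₀ : ℝ := min ε₁ ε₂ / 2 with hε₀def
    have hε₀0 : 0 < ε₀ := by positivity
    have hcbD : Metric.closedBall z ε₀ ⊆ D := by
      intro x hx
      apply hε₂D
      rw [mem_ball]
      calc dist x z ≤ ε₀ := hx
        _ < min ε₁ ε₂ := by rw [hε₀def]; linarith [lt_min hε₁0 hε₂0]
        _ ≤ ε₂ := min_le_right _ _
    have hcb1 : Metric.closedBall z ε₀ ⊆ Metric.ball z ε₁ ∩ D := by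
      intro x hx
      refine ⟨?_, hcbD hx⟩
      rw [mem_ball]
      calc dist x z ≤ ε₀ := hx
        _ < min ε₁ ε₂ := by rw [hε₀def]; linarith [lt_min hε₁0 hε₂0]
        _ ≤ ε₁ := min_le_left _ _
    have hlipball : LipschitzOnWith cz f' (Metric.closedBall z ε₀) := hczlip.mono hcb1
    have hder : ∀ x ∈ Metric.closedBall z ε₀, HasFDerivAt f (f' x) x :=
      fun x hx => hf' x (hcbD hx)
    have hfb : ∀ x ∈ Metric.closedBall z ε₀, ‖f x‖ ≤ Mf :=
      fun x hx => hMfb x (subset_closure (hcbD hx))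
    obtain ⟨g, hg1, hg2, hgn⟩ := hMinv0 s ⟨hs0, hs1⟩ z hzP
    have hgnM : ‖g‖ ≤ Minv := hgn.trans (le_max_left _ _)
    have hgpos : 0 < ‖g‖ := by
      rw [norm_pos_iff]
      intro h
      rw [h, ContinuousLinearMap.comp_zero] at hg1
      obtain ⟨v, hv⟩ := exists_ne (0 : X)
      have := DFunLike.congr_fun hg1 v
      simp at this
      exact hv this.symm
    obtain ⟨ε, hε0, δ, hδ0, hεε₀, hδε, hex, hpr⟩ :=
      localSolve f f' Mf Minv hMf1 hMinv1 s hs0 hs1.le z ε₀ hε₀0 hder hlipball hfb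
        g hg1 hg2 hgnM hgpos
    exact ⟨ε, hε0, δ, hδ0,
      (closedBall_subset_closedBall hεε₀).trans hcbD, hδε, hex hzs, hpr⟩
  -- uniqueness of continuous solution paths
  have huniq : ∀ s : ℝ, 0 ≤ s → s ≤ 1 → ∀ x y : ℝ → X,
      (∀ u, 0 ≤ u → u ≤ s → x u ∈ closure D ∧ x u = u • f (x u)) →
      (∀ u, 0 ≤ u → u ≤ s → y u ∈ closure D ∧ y u = u • f (y u)) →
      ContinuousOn x (Icc 0 s) → ContinuousOn y (Icc 0 s) →
      ∀ u, 0 ≤ u → u ≤ s → x u = y u := by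
    intro s hs0 hs1 x y hx hy hcx hcy
    have hx0 : x 0 = 0 := by
      have := (hx 0 le_rfl hs0).2; rwa [zero_smul] at this
    have hy0 : y 0 = 0 := by
      have := (hy 0 le_rfl hs0).2; rwa [zero_smul] at this
    set G : Set ℝ := {u | 0 ≤ u ∧ u ≤ s ∧ ∀ v, 0 ≤ v → v ≤ u → x v = y v} with hGdef
    have h0G : (0:ℝ) ∈ G := by
      refine ⟨le_rfl, hs0, fun v hv0 hv1 => ?_⟩
      have : v = 0 := le_antisymm hv1 hv0
      rw [this, hx0, hy0]
    have hGbdd : BddAbove G := ⟨s, fun u hu => hu.2.1⟩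
    have hGne : G.Nonempty := ⟨0, h0G⟩
    set W : ℝ := sSup G with hWdef
    have h0W : 0 ≤ W := le_csSup hGbdd h0G
    have hWs : W ≤ s := csSup_le hGne fun u hu => hu.2.1
    have hbelow : ∀ v, 0 ≤ v → v < W → x v = y v := by
      intro v hv0 hvW
      obtain ⟨u, huG, hvu⟩ := exists_lt_of_lt_csSup hGne hvW
      exact huG.2.2 v hv0 hvu.le
    have hweq : x W = y W := by
      rcases eq_or_lt_of_le h0W with h | h
      · rw [← h, hx0, hy0]
      · set v : ℕ → ℝ := fun n => W - W / ((n:ℝ) + 1) with hvdef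
        have hv0 : ∀ n, 0 ≤ v n := by
          intro n
          have : W / ((n:ℝ) + 1) ≤ W := by
            apply div_le_self h.le
            have : (0:ℝ) ≤ (n:ℝ) := Nat.cast_nonneg n
            linarith
          simp only [hvdef]; linarith
        have hvW : ∀ n, v n < W := by
          intro n
          have : 0 < W / ((n:ℝ) + 1) := by positivity
          simp only [hvdef]; linarith
        have hvmem : ∀ n, v n ∈ Icc (0:ℝ) s := fun n => ⟨hv0 n, (hvW n).le.trans hWs⟩
        have htv : Filter.Tendsto v Filter.atTop (nhds W) := by
          have h1 : Filter.Tendsto (fun n : ℕ => W * (1 / ((n:ℝ) + 1))) Filter.atTop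
              (nhds (W * 0)) := tendsto_one_div_add_atTop_nhds_zero_nat.const_mul W
          rw [mul_zero] at h1
          have h2 : Filter.Tendsto (fun n : ℕ => W - W * (1 / ((n:ℝ) + 1))) Filter.atTop
              (nhds (W - 0)) := tendsto_const_nhds.sub h1
          rw [sub_zero] at h2
          convert h2 using 2 with n
          rw [hvdef]; ring
        have hWmem : W ∈ Icc (0:ℝ) s := ⟨h0W, hWs⟩
        have htx : Filter.Tendsto (fun n => x (v n)) Filter.atTop (nhds (x W)) := by
          apply (hcx W hWmem).tendsto.comp
          rw [tendsto_nhdsWithin_iff]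
          exact ⟨htv, Filter.Eventually.of_forall hvmem⟩
        have hty : Filter.Tendsto (fun n => y (v n)) Filter.atTop (nhds (y W)) := by
          apply (hcy W hWmem).tendsto.comp
          rw [tendsto_nhdsWithin_iff]
          exact ⟨htv, Filter.Eventually.of_forall hvmem⟩
        have heqn : (fun n => x (v n)) = fun n => y (v n) := by
          funext n; exact hbelow (v n) (hv0 n) (hvW n)
        rw [heqn] at htx
        exact tendsto_nhds_unique htx hty
    have hG : ∀ v, 0 ≤ v → v ≤ W → x v = y v := by
      intro v hv0 hvW
      rcases lt_or_eq_of_le hvW with hlt | heq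
      · exact hbelow v hv0 hlt
      · rw [heq]; exact hweq
    rcases eq_or_lt_of_le hWs with hWseq | hWlt
    · intro u hu0 hus
      exact hG u hu0 (by rw [hWseq]; exact hus)
    · exfalso
      have hzadm := hx W h0W hWs
      have hW1 : W < 1 := lt_of_lt_of_le hWlt hs1
      obtain ⟨ε, hε0, δ, hδ0, hballD, hLδε, hexist, hpair⟩ :=
        hloc W h0W hW1 (x W) hzadm.1 hzadm.2
      have hWmem : W ∈ Icc (0:ℝ) s := ⟨h0W, hWs⟩
      obtain ⟨η1, hη10, hη1⟩ := (Metric.continuousWithinAt_iff).1 (hcx W hWmem) ε hε0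
      obtain ⟨η2, hη20, hη2⟩ := (Metric.continuousWithinAt_iff).1 (hcy W hWmem) ε hε0
      set η : ℝ := min (min η1 η2) δ with hηdef
      have hη0 : 0 < η := lt_min (lt_min hη10 hη20) hδ0
      set W' : ℝ := min (W + η / 2) s with hW'def
      have hWW' : W < W' := lt_min (by linarith) hWlt
      have hW's : W' ≤ s := min_le_right _ _
      have hW'G : W' ∈ G := by
        refine ⟨h0W.trans hWW'.le, hW's, fun v hv0 hvW' => ?_⟩
        rcases le_or_gt v W with hvW | hvW
        · exact hG v hv0 hvW
        · have hvs : v ∈ Icc (0:ℝ) s := ⟨hv0, hvW'.trans hW's⟩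
          have hdvW : dist v W < η := by
            rw [Real.dist_eq, abs_of_pos (by linarith)]
            have : v ≤ W + η / 2 := hvW'.trans (min_le_left _ _)
            linarith
          have hxball : x v ∈ Metric.closedBall (x W) ε := by
            rw [mem_closedBall]
            exact le_of_lt (hη1 hvs (lt_of_lt_of_le hdvW ((min_le_left _ _).trans (min_le_left _ _))))
          have hyball : y v ∈ Metric.closedBall (x W) ε := by
            rw [mem_closedBall, ← hweq] at *
            exact le_of_lt (hη2 hvs (lt_of_lt_of_le hdvW ((min_le_left _ _).trans (min_le_right _ _))))
          have hvδ : |v - W| ≤ δ := by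
            rw [abs_of_pos (by linarith)]
            have h1 : v ≤ W + η / 2 := hvW'.trans (min_le_left _ _)
            have h2 : η ≤ δ := min_le_right _ _
            linarith
          have := hpair v v hvδ hvδ (x v) hxball (y v) hyball
            (hx v hv0 (hvW'.trans hW's)).2 (hy v hv0 (hvW'.trans hW's)).2
          rw [sub_self, abs_zero, mul_zero] at this
          have : x v - y v = 0 := norm_le_zero_iff.1 this
          exact sub_eq_zero.1 this
      have := le_csSup hGbdd hW'G
      linarith
  -- the set of reachable times
  set SA : Set ℝ := {s : ℝ | 0 ≤ s ∧ s ≤ 1 ∧ ∃ x : ℝ → X,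
    LipschitzOnWith L' x (Icc 0 s) ∧
    ∀ u, 0 ≤ u → u ≤ s → x u ∈ closure D ∧ x u = u • f (x u)} with hSAdef
  have h0A : (0:ℝ) ∈ SA := by
    refine ⟨le_rfl, zero_le_one, fun _ => 0, ?_, ?_⟩
    · intro a _ b _
      simp
    · intro u hu0 hu1
      have hu : u = 0 := le_antisymm hu1 hu0
      subst hu
      exact ⟨subset_closure h0D, by rw [zero_smul]⟩
  have hSAbdd : BddAbove SA := ⟨1, fun s hs => hs.2.1⟩
  have hSAne : SA.Nonempty := ⟨0, h0A⟩
  set w : ℝ := sSup SA with hwdef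
  have h0w : 0 ≤ w := le_csSup hSAbdd h0A
  have hw1 : w ≤ 1 := csSup_le hSAne (fun s hs => hs.2.1)
  have hdown : ∀ s ∈ SA, ∀ u, 0 ≤ u → u ≤ s → u ∈ SA := by
    rintro s ⟨hs0, hs1, x, hxlip, hxadm⟩ u hu0 hus
    exact ⟨hu0, hus.trans hs1, x, hxlip.mono (Icc_subset_Icc le_rfl hus),
      fun v hv0 hvu => hxadm v hv0 (hvu.trans hus)⟩
  have hwA : w ∈ SA := by
    rcases eq_or_lt_of_le h0w with h | hwpos
    · rw [← h]; exact h0A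
    have hmemA : ∀ u, 0 ≤ u → u < w → u ∈ SA := by
      intro u hu0 huw
      obtain ⟨s', hs'A, hus'⟩ := exists_lt_of_lt_csSup hSAne huw
      exact hdown s' hs'A u hu0 hus'.le
    have hch : ∀ u : ℝ, ∃ xx : ℝ → X, 0 ≤ u → u < w →
        (LipschitzOnWith L' xx (Icc 0 u) ∧
         ∀ v, 0 ≤ v → v ≤ u → xx v ∈ closure D ∧ xx v = v • f (xx v)) := by
      intro u
      by_cases h : 0 ≤ u ∧ u < w
      · obtain ⟨_, _, xx, h1, h2⟩ := hmemA u h.1 h.2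
        exact ⟨xx, fun _ _ => ⟨h1, h2⟩⟩
      · exact ⟨fun _ => 0, fun hu0 huw => absurd ⟨hu0, huw⟩ h⟩
    choose ξf hξf using hch
    set ξ : ℝ → X := fun u => ξf u u with hξdef
    have hcons : ∀ u v : ℝ, 0 ≤ u → u ≤ v → v < w → ξf v u = ξ u := by
      intro u v hu0 huv hvw
      obtain ⟨hlv, hav⟩ := hξf v (hu0.trans huv) hvw
      obtain ⟨hlu, hau⟩ := hξf u hu0 (lt_of_le_of_lt huv hvw)
      have hu1 : u ≤ 1 := le_of_lt (lt_of_le_of_lt huv (lt_of_lt_of_le hvw hw1))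
      exact huniq u hu0 hu1 (ξf v) (ξf u)
        (fun p hp0 hpu => hav p hp0 (hpu.trans huv))
        (fun p hp0 hpu => hau p hp0 hpu)
        ((hlv.mono (Icc_subset_Icc le_rfl huv)).continuousOn)
        (hlu.continuousOn) u hu0 le_rfl
    have hξadm : ∀ u, 0 ≤ u → u < w → ξ u ∈ closure D ∧ ξ u = u • f (ξ u) :=
      fun u hu0 huw => (hξf u hu0 huw).2 u hu0 le_rfl
    have hξlip : ∀ a b : ℝ, 0 ≤ a → a ≤ b → b < w → dist (ξ a) (ξ b) ≤ L * (b - a) := by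
      intro a b ha0 hab hbw
      have h1 : ξ a = ξf b a := (hcons a b ha0 hab hbw).symm
      have h2 : ξ b = ξf b b := (hcons b b (ha0.trans hab) le_rfl hbw).symm
      rw [h1, h2]
      have hl := (hξf b (ha0.trans hab) hbw).1
      have := hl.dist_le_mul a ⟨ha0, hab⟩ b ⟨ha0.trans hab, le_rfl⟩
      rwa [hL'L, Real.dist_eq, abs_sub_comm, abs_of_nonneg (sub_nonneg.2 hab)] at this
    set v : ℕ → ℝ := fun n => w - w / ((n:ℝ) + 1) with hvdef
    have hv0 : ∀ n, 0 ≤ v n := by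
      intro n
      have : w / ((n:ℝ) + 1) ≤ w := by
        apply div_le_self hwpos.le
        have : (0:ℝ) ≤ (n:ℝ) := Nat.cast_nonneg n
        linarith
      simp only [hvdef]; linarith
    have hvw : ∀ n, v n < w := by
      intro n
      have : 0 < w / ((n:ℝ) + 1) := by positivity
      simp only [hvdef]; linarith
    have htv : Filter.Tendsto v Filter.atTop (nhds w) := by
      have h1 : Filter.Tendsto (fun n : ℕ => w * (1 / ((n:ℝ) + 1))) Filter.atTop
          (nhds (w * 0)) := tendsto_one_div_add_atTop_nhds_zero_nat.const_mul w
      rw [mul_zero] at h1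
      have h2 : Filter.Tendsto (fun n : ℕ => w - w * (1 / ((n:ℝ) + 1))) Filter.atTop
          (nhds (w - 0)) := tendsto_const_nhds.sub h1
      rw [sub_zero] at h2
      convert h2 using 2 with n
      rw [hvdef]; ring
    have hcauchy : CauchySeq (fun n => ξ (v n)) := by
      apply cauchySeq_of_le_tendsto_0 (fun N : ℕ => L * (w / ((N:ℝ) + 1)))
      · intro n m N hNn hNm
        have key : ∀ p q : ℕ, N ≤ p → N ≤ q → v p ≤ v q →
            dist (ξ (v p)) (ξ (v q)) ≤ L * (w / ((N:ℝ) + 1)) := by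
          intro p q hNp hNq hpq
          have h1 := hξlip (v p) (v q) (hv0 p) hpq (hvw q)
          have h2 : v q - v p ≤ w / ((N:ℝ) + 1) := by
            have hp : w / ((p:ℝ) + 1) ≤ w / ((N:ℝ) + 1) := by
              apply div_le_div_of_nonneg_left hwpos.le (by positivity)
              have : (N:ℝ) ≤ (p:ℝ) := Nat.cast_le.2 hNp
              linarith
            have hq : 0 ≤ w / ((q:ℝ) + 1) := by positivity
            simp only [hvdef]; linarith
          calc dist (ξ (v p)) (ξ (v q)) ≤ L * (v q - v p) := h1
            _ ≤ L * (w / ((N:ℝ) + 1)) := mul_le_mul_of_nonneg_left h2 hL0.le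
        rcases le_total (v n) (v m) with h | h
        · exact key n m hNn hNm h
        · rw [dist_comm]; exact key m n hNm hNn h
      · have h1 : Filter.Tendsto (fun N : ℕ => L * w * (1 / ((N:ℝ) + 1))) Filter.atTop
            (nhds (L * w * 0)) := tendsto_one_div_add_atTop_nhds_zero_nat.const_mul (L * w)
        rw [mul_zero] at h1
        convert h1 using 2 with N
        ring
    obtain ⟨l, hl⟩ := cauchySeq_tendsto_of_complete hcauchy
    have hlD : l ∈ closure D := isClosed_closure.mem_of_tendsto hl
      (Filter.Eventually.of_forall fun n => (hξadm (v n) (hv0 n) (hvw n)).1)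
    have hlfix : l = w • f l := by
      have hfl : Filter.Tendsto (fun n => f (ξ (v n))) Filter.atTop (nhds (f l)) := by
        apply (hfcont l hlD).tendsto.comp
        rw [tendsto_nhdsWithin_iff]
        exact ⟨hl, Filter.Eventually.of_forall fun n => (hξadm (v n) (hv0 n) (hvw n)).1⟩
      have hcomb : Filter.Tendsto (fun n => v n • f (ξ (v n))) Filter.atTop
          (nhds (w • f l)) := htv.smul hfl
      have heqn : (fun n => v n • f (ξ (v n))) = fun n => ξ (v n) :=
        funext fun n => ((hξadm (v n) (hv0 n) (hvw n)).2).symm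
      rw [heqn] at hcomb
      exact tendsto_nhds_unique hl hcomb
    have hlim_dist : ∀ a, 0 ≤ a → a < w → dist (ξ a) l ≤ L * (w - a) := by
      intro a ha0 haw
      have htd : Filter.Tendsto (fun n => dist (ξ a) (ξ (v n))) Filter.atTop
          (nhds (dist (ξ a) l)) := tendsto_const_nhds.dist hl
      apply le_of_tendsto htd
      have hev : ∀ᶠ n in Filter.atTop, a < v n := htv.eventually (eventually_gt_nhds haw)
      filter_upwards [hev] with n hn
      calc dist (ξ a) (ξ (v n)) ≤ L * (v n - a) := hξlip a (v n) ha0 hn.le (hvw n)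
        _ ≤ L * (w - a) := mul_le_mul_of_nonneg_left (by linarith [(hvw n).le]) hL0.le
    set Ξ : ℝ → X := fun u => if u < w then ξ u else l with hΞdef
    have hΞadm : ∀ u, 0 ≤ u → u ≤ w → Ξ u ∈ closure D ∧ Ξ u = u • f (Ξ u) := by
      intro u hu0 huw
      rcases lt_or_eq_of_le huw with hlt | heq
      · have : Ξ u = ξ u := if_pos hlt
        rw [this]; exact hξadm u hu0 hlt
      · have : Ξ u = l := if_neg (by rw [heq]; exact lt_irrefl w)
        rw [this, heq]
        exact ⟨hlD, hlfix⟩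
    have haux : ∀ a b : ℝ, 0 ≤ a → a ≤ b → b ≤ w → dist (Ξ a) (Ξ b) ≤ L * (b - a) := by
      intro a b ha0 hab hbw
      rcases lt_or_eq_of_le hbw with hblt | hbeq
      · have e1 : Ξ a = ξ a := if_pos (lt_of_le_of_lt hab hblt)
        have e2 : Ξ b = ξ b := if_pos hblt
        rw [e1, e2]
        exact hξlip a b ha0 hab hblt
      · have e2 : Ξ b = l := if_neg (by rw [hbeq]; exact lt_irrefl w)
        rcases lt_or_eq_of_le (hab.trans hbw) with halt | haeq
        · have e1 : Ξ a = ξ a := if_pos halt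
          rw [e1, e2, hbeq]
          exact hlim_dist a ha0 halt
        · have e1 : Ξ a = l := if_neg (by rw [haeq]; exact lt_irrefl w)
          rw [e1, e2, dist_self]
          have : a = b := by rw [haeq, hbeq]
          rw [this]; simp
    refine ⟨h0w, hw1, Ξ, ?_, hΞadm⟩
    rw [lipschitzOnWith_iff_dist_le_mul]
    intro p hp q hq
    rw [hL'L]
    rcases le_total p q with h | h
    · calc dist (Ξ p) (Ξ q) ≤ L * (q - p) := haux p q hp.1 h hq.2
        _ = L * dist p q := by rw [Real.dist_eq, abs_sub_comm, abs_of_nonneg (by linarith)]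
    · calc dist (Ξ p) (Ξ q) = dist (Ξ q) (Ξ p) := dist_comm _ _
        _ ≤ L * (p - q) := haux q p hq.1 h hp.2
        _ = L * dist p q := by rw [Real.dist_eq, abs_of_nonneg (by linarith)]
  -- conclude
  obtain ⟨_, _, Xw, hXwlip, hXwadm⟩ := hwA
  have hwlt1 : w < 1 := by
    rcases lt_or_eq_of_le hw1 with h | h
    · exact h
    · exfalso
      have h1 := hXwadm 1 (by norm_num) (by rw [h])
      have : f (Xw 1) = Xw 1 := by
        have := h1.2; rw [one_smul] at this; exact this.symm
      exact hfix (Xw 1) h1.1 this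
  have hz := hXwadm w h0w le_rfl
  obtain ⟨ε, hε0, δ, hδ0, hballD, hLδε, hexist, hpair⟩ :=
    hloc w h0w hwlt1 (Xw w) hz.1 hz.2
  set t' : ℝ := min (w + δ) 1 with ht'def
  have hwt' : w < t' := lt_min (by linarith) hwlt1
  have ht'1 : t' ≤ 1 := min_le_right _ _
  have ht'δ : t' - w ≤ δ := by
    have : t' ≤ w + δ := min_le_left _ _
    linarith
  have ht'A : t' ∈ SA := by
    have hex2 : ∀ u : ℝ, ∃ xx : X, 0 ≤ u → u ≤ 1 → |u - w| ≤ δ →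
        (xx ∈ Metric.closedBall (Xw w) (L * |u - w|) ∧ xx = u • f xx) := by
      intro u
      by_cases h : 0 ≤ u ∧ u ≤ 1 ∧ |u - w| ≤ δ
      · obtain ⟨xx, h1, h2⟩ := hexist u h.1 h.2.1 h.2.2
        exact ⟨xx, fun _ _ _ => ⟨h1, h2⟩⟩
      · exact ⟨0, fun h1 h2 h3 => absurd ⟨h1, h2, h3⟩ h⟩
    choose sol hsol using hex2
    set Y : ℝ → X := fun u => if u ≤ w then Xw u else sol u with hYdef
    have hsolp : ∀ u, w < u → u ≤ t' →
        (sol u ∈ Metric.closedBall (Xw w) (L * |u - w|) ∧ sol u = u • f (sol u)) := by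
      intro u hwu hut'
      apply hsol u (h0w.trans hwu.le) (hut'.trans ht'1)
      rw [abs_of_pos (by linarith)]
      linarith
    have hsolball : ∀ u, w < u → u ≤ t' → sol u ∈ Metric.closedBall (Xw w) ε := by
      intro u hwu hut'
      have h1 := (hsolp u hwu hut').1
      apply Metric.closedBall_subset_closedBall _ h1
      rw [abs_of_pos (by linarith)]
      calc L * (u - w) ≤ L * δ := mul_le_mul_of_nonneg_left (by linarith) hL0.le
        _ ≤ ε := hLδε
    have hYadm : ∀ u, 0 ≤ u → u ≤ t' → Y u ∈ closure D ∧ Y u = u • f (Y u) := by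
      intro u hu0 hut'
      rcases le_or_gt u w with huw | hwu
      · have : Y u = Xw u := if_pos huw
        rw [this]; exact hXwadm u hu0 huw
      · have hYu : Y u = sol u := if_neg (not_le.2 hwu)
        rw [hYu]
        refine ⟨subset_closure (hballD (hsolball u hwu hut')), (hsolp u hwu hut').2⟩
    have haux : ∀ a b : ℝ, 0 ≤ a → a ≤ b → b ≤ t' → dist (Y a) (Y b) ≤ L * (b - a) := by
      intro a b ha0 hab hbt'
      rcases le_or_gt b w with hbw | hwb
      · have e1 : Y a = Xw a := if_pos (hab.trans hbw)
        have e2 : Y b = Xw b := if_pos hbw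
        rw [e1, e2]
        have := hXwlip.dist_le_mul a ⟨ha0, hab.trans hbw⟩ b ⟨ha0.trans hab, hbw⟩
        rwa [hL'L, Real.dist_eq, abs_sub_comm, abs_of_nonneg (sub_nonneg.2 hab)] at this
      · have e2 : Y b = sol b := if_neg (not_le.2 hwb)
        have hbball := (hsolp b hwb hbt').1
        have hbd : dist (sol b) (Xw w) ≤ L * (b - w) := by
          have := mem_closedBall.1 hbball
          rwa [abs_of_pos (by linarith)] at this
        rcases le_or_gt a w with haw | hwa
        · have e1 : Y a = Xw a := if_pos haw
          rw [e1, e2]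
          calc dist (Xw a) (sol b) ≤ dist (Xw a) (Xw w) + dist (Xw w) (sol b) :=
                dist_triangle _ _ _
            _ ≤ L * (w - a) + L * (b - w) := by
                have h1 := hXwlip.dist_le_mul a ⟨ha0, haw⟩ w ⟨h0w, le_rfl⟩
                rw [hL'L, Real.dist_eq, abs_sub_comm, abs_of_nonneg (sub_nonneg.2 haw)] at h1
                rw [dist_comm (Xw w) (sol b)]
                linarith
            _ = L * (b - a) := by ring
        · have e1 : Y a = sol a := if_neg (not_le.2 hwa)
          rw [e1, e2]
          have haball := hsolball a hwa (hab.trans hbt')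
          have hbball' := hsolball b hwb hbt'
          have haδ : |a - w| ≤ δ := by
            rw [abs_of_pos (by linarith)]
            have : a ≤ t' := hab.trans hbt'
            linarith
          have hbδ : |b - w| ≤ δ := by
            rw [abs_of_pos (by linarith)]
            linarith
          have := hpair a b haδ hbδ (sol a) haball (sol b) hbball'
            (hsolp a hwa (hab.trans hbt')).2 (hsolp b hwb hbt').2
          rw [dist_eq_norm]
          calc ‖sol a - sol b‖ ≤ L * |a - b| := this
            _ = L * (b - a) := by rw [abs_sub_comm, abs_of_nonneg (sub_nonneg.2 hab)]
    refine ⟨h0w.trans hwt'.le, ht'1, Y, ?_, hYadm⟩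
    rw [lipschitzOnWith_iff_dist_le_mul]
    intro p hp q hq
    rw [hL'L]
    rcases le_total p q with h | h
    · calc dist (Y p) (Y q) ≤ L * (q - p) := haux p q hp.1 h hq.2
        _ = L * dist p q := by rw [Real.dist_eq, abs_sub_comm, abs_of_nonneg (by linarith)]
    · calc dist (Y p) (Y q) = dist (Y q) (Y p) := dist_comm _ _
        _ ≤ L * (p - q) := haux q p hq.1 h hp.2
        _ = L * dist p q := by rw [Real.dist_eq, abs_of_nonneg (by linarith)]
  have : t' ≤ w := le_csSup hSAbdd ht'A
  linarith
end

section
/- Let X, Y be Banach spaces, f : X → Y Fréchet differentiable with invertible derivative everywhere, x ↦ (f'(x))⁻¹ locally Lipschitz, and fix y ∈ Y. Suppose the initial value problem ẋ = (f'(x))⁻¹(y − f(0)), x(0) = 0 has a solution x(t) on [0,1]. Then f(x(t)) = f(0) + t(y − f(0)) for all t ∈ [0,1]; in particular f(x(1)) = y. -/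
open Set

theorem ode_solution_tracks_segment
    {X Y : Type*} [NormedAddCommGroup X] [NormedSpace ℝ X] [CompleteSpace X]
    [NormedAddCommGroup Y] [NormedSpace ℝ Y] [CompleteSpace Y]
    (f : X → Y) (f' : X → (X →L[ℝ] Y)) (finv : X → (Y →L[ℝ] X))
    (hf' : ∀ x : X, HasFDerivAt f (f' x) x)
    (hinv : ∀ x : X,
      (f' x).comp (finv x) = ContinuousLinearMap.id ℝ Y ∧
      (finv x).comp (f' x) = ContinuousLinearMap.id ℝ X)
    (hlip : LocallyLipschitz finv)
    (y : Y) (x : ℝ → X)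
    (hode : ∀ t ∈ Icc (0:ℝ) 1, HasDerivAt x ((finv (x t)) (y - f 0)) t)
    (hinit : x 0 = 0) :
    (∀ t ∈ Icc (0:ℝ) 1, f (x t) = f 0 + t • (y - f 0)) ∧ f (x 1) = y := by
  set g : ℝ → Y := fun t => f (x t) - t • (y - f 0) with hg
  have hgd : ∀ t ∈ Icc (0:ℝ) 1, HasDerivAt g 0 t := by
    intro t ht
    have h1 : HasDerivAt (fun t => f (x t)) (y - f 0) t := by
      have := (hf' (x t)).comp_hasDerivAt t (hode t ht)
      have key : (f' (x t)) ((finv (x t)) (y - f 0)) = y - f 0 := by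
        have := congrArg (fun L => L (y - f 0)) (hinv (x t)).1
        simpa using this
      rwa [key] at this
    have h2 : HasDerivAt (fun t : ℝ => t • (y - f 0)) (y - f 0) t := by
      simpa using (hasDerivAt_id t).smul_const (y - f 0)
    have := h1.sub h2
    rw [sub_self] at this
    exact this
  have hcont : ContinuousOn g (Icc 0 1) := fun t ht =>
    (hgd t ht).continuousAt.continuousWithinAt
  have hconst : ∀ t ∈ Icc (0:ℝ) 1, g t = g 0 :=
    constant_of_has_deriv_right_zero hcont fun t ht =>
      ((hgd t (mem_Icc_of_Ico ht)).hasDerivWithinAt)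
  have h0 : g 0 = f 0 := by simp [hg, hinit]
  have main : ∀ t ∈ Icc (0:ℝ) 1, f (x t) = f 0 + t • (y - f 0) := by
    intro t ht
    have := hconst t ht
    rw [h0, hg] at this
    simp only [] at this
    have : f (x t) - t • (y - f 0) = f 0 := this
    linear_combination (norm := abel) this
  refine ⟨main, ?_⟩
  have h1 := main 1 (by norm_num)
  rw [h1, one_smul]; abel
end
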